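/- arXiv:2301.07828 — 5 statements merged into one kernel-verified Lean document; each statement's English description precedes it below -/
import Mathlib

section
/- Let G be a skew-amenable topological group and let H be a pre-syndetic subgroup of G, equipped with the subspace topology. Then H is skew-amenable. -/
open scoped Topology

/-- A mean on the space of real-valued functions satisfying predicate `P`
(encoded as a functional on all functions whose mean-properties are required
only on functions satisfying `P`). -/
def IsMean {X : Type*} (P : (X → ℝ) → Prop) (μ : (X → ℝ) → ℝ) : Prop :=
  μ (fun _ => (1 : ℝ)) = 1 ∧
  (∀ f, P f → (∀ x, 0 ≤ f x) → 0 ≤ μ f) ∧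
  (∀ f g, P f → P g → μ (fun x => f x + g x) = μ f + μ g) ∧
  (∀ (c : ℝ) (f), P f → μ (fun x => c * f x) = c * μ f)

/-- `f : G → ℝ` is bounded and right uniformly continuous. -/
def IsRUCB (G : Type*) [Group G] [TopologicalSpace G] (f : G → ℝ) : Prop :=
  (∃ C, ∀ x, |f x| ≤ C) ∧
  ∀ ε : ℝ, 0 < ε → ∃ V ∈ 𝓝 (1 : G), ∀ v ∈ V, ∀ x, |f (v * x) - f x| < ε

/-- A topological group is skew-amenable if there is a right-invariant mean on `RUCB(G)`. -/
def SkewAmenable (G : Type*) [Group G] [TopologicalSpace G] : Prop :=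
  ∃ μ : (G → ℝ) → ℝ, IsMean (IsRUCB G) μ ∧
    ∀ (g : G) (f : G → ℝ), IsRUCB G f → μ (fun x => f (x * g)) = μ f

/-- A subgroup `H ≤ G` is pre-syndetic if for every identity neighbourhood `U`
there is a finite set `E` with `G = EUH`. -/
def PreSyndetic {G : Type*} [Group G] [TopologicalSpace G] (H : Subgroup G) : Prop :=
  ∀ U ∈ 𝓝 (1 : G), ∃ E : Finset G, ∀ g : G, ∃ e ∈ E, ∃ u ∈ U, ∃ h ∈ H, g = e * u * h
section Helpers

open Filter

/-- helper: comparison of `sInf`s. -/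
lemma sInf_le_sInf_add {S T : Set ℝ} (_hS : S.Nonempty) (bS : BddBelow S)
    (hT : T.Nonempty) (_bT : BddBelow T) {δ : ℝ}
    (h : ∀ t ∈ T, ∃ s ∈ S, s ≤ t + δ) : sInf S ≤ sInf T + δ := by
  rw [← sub_le_iff_le_add]
  refine le_csInf hT fun t ht => ?_
  obtain ⟨s, hs, hle⟩ := h t ht
  have := csInf_le bS hs
  linarith

variable {G : Type*} [Group G] [TopologicalSpace G]

lemma isRUCB_const (c : ℝ) : IsRUCB G (fun _ => c) := by
  refine ⟨⟨|c|, fun _ => le_refl _⟩, fun ε hε => ⟨Set.univ, Filter.univ_mem, ?_⟩⟩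
  intro v _ x
  simpa using hε

lemma IsRUCB.add {f g : G → ℝ} (hf : IsRUCB G f) (hg : IsRUCB G g) :
    IsRUCB G (fun x => f x + g x) := by
  obtain ⟨⟨Cf, hCf⟩, hf2⟩ := hf
  obtain ⟨⟨Cg, hCg⟩, hg2⟩ := hg
  refine ⟨⟨Cf + Cg, fun x => (abs_add_le _ _).trans (add_le_add (hCf x) (hCg x))⟩, ?_⟩
  intro ε hε
  obtain ⟨V, hV, hVf⟩ := hf2 (ε/2) (by linarith)
  obtain ⟨W, hW, hWg⟩ := hg2 (ε/2) (by linarith)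
  refine ⟨V ∩ W, Filter.inter_mem hV hW, fun v hv x => ?_⟩
  have h1 := hVf v hv.1 x
  have h2 := hWg v hv.2 x
  calc |f (v*x) + g (v*x) - (f x + g x)| = |(f (v*x) - f x) + (g (v*x) - g x)| := by ring_nf
    _ ≤ |f (v*x) - f x| + |g (v*x) - g x| := abs_add_le _ _
    _ < ε := by linarith

lemma IsRUCB.smulc {f : G → ℝ} (c : ℝ) (hf : IsRUCB G f) :
    IsRUCB G (fun x => c * f x) := by
  obtain ⟨⟨Cf, hCf⟩, hf2⟩ := hf
  refine ⟨⟨|c| * Cf, fun x => by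
    rw [abs_mul]
    exact mul_le_mul_of_nonneg_left (hCf x) (abs_nonneg c)⟩, ?_⟩
  intro ε hε
  obtain ⟨V, hV, hVf⟩ := hf2 (ε/(|c|+1)) (by positivity)
  refine ⟨V, hV, fun v hv x => ?_⟩
  have h1 := hVf v hv x
  have hc1 : (0:ℝ) < |c| + 1 := by positivity
  calc |c * f (v*x) - c * f x| = |c| * |f (v*x) - f x| := by rw [← abs_mul]; ring_nf
    _ ≤ |c| * (ε/(|c|+1)) := mul_le_mul_of_nonneg_left h1.le (abs_nonneg c)
    _ < ε := by
        rw [mul_div_assoc']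
        rw [div_lt_iff₀ hc1]
        nlinarith [abs_nonneg c]

section Mean

variable (μ : (G → ℝ) → ℝ) (hm : IsMean (IsRUCB G) μ)
include hm

lemma mean_const (c : ℝ) : μ (fun _ => c) = c := by
  have h1 := hm.2.2.2 c (fun _ => (1:ℝ)) (isRUCB_const 1)
  simpa [hm.1] using h1

lemma mean_mono {f g : G → ℝ} (hf : IsRUCB G f) (hg : IsRUCB G g)
    (h : ∀ x, f x ≤ g x) : μ f ≤ μ g := by
  have hd : IsRUCB G (fun x => g x + (-1) * f x) := hg.add (hf.smulc (-1))
  have hpos := hm.2.1 _ hd (fun x => by have := h x; linarith)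
  have hadd := hm.2.2.1 f (fun x => g x + (-1) * f x) hf hd
  have he : (fun x => f x + (g x + (-1) * f x)) = g := by funext x; ring
  rw [he] at hadd
  linarith

lemma mean_diff_le {f g : G → ℝ} (hf : IsRUCB G f) (hg : IsRUCB G g) {c : ℝ}
    (h : ∀ x, |f x - g x| ≤ c) : |μ f - μ g| ≤ c := by
  have hgc : IsRUCB G (fun x => g x + c) := hg.add (isRUCB_const c)
  have hfc : IsRUCB G (fun x => f x + c) := hf.add (isRUCB_const c)
  have h1 : μ f ≤ μ (fun x => g x + c) :=
    mean_mono μ hm hf hgc (fun x => by have := abs_le.1 (h x); linarith)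
  have h2 : μ g ≤ μ (fun x => f x + c) :=
    mean_mono μ hm hg hfc (fun x => by have := abs_le.1 (h x); linarith)
  have e1 : μ (fun x => g x + c) = μ g + c := by
    have := hm.2.2.1 g (fun _ => c) hg (isRUCB_const c)
    rw [this, mean_const μ hm]
  have e2 : μ (fun x => f x + c) = μ f + c := by
    have := hm.2.2.1 f (fun _ => c) hf (isRUCB_const c)
    rw [this, mean_const μ hm]
  rw [e1] at h1; rw [e2] at h2
  rw [abs_sub_le_iff]
  constructor <;> linarith

lemma mean_le_of_le_const {f : G → ℝ} (hf : IsRUCB G f) {c : ℝ}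
    (h : ∀ x, f x ≤ c) : μ f ≤ c := by
  have := mean_mono μ hm hf (isRUCB_const c) h
  rwa [mean_const μ hm] at this

lemma mean_ge_of_const_le {f : G → ℝ} (hf : IsRUCB G f) {c : ℝ}
    (h : ∀ x, c ≤ f x) : c ≤ μ f := by
  have := mean_mono μ hm (isRUCB_const c) hf h
  rwa [mean_const μ hm] at this

end Mean

end Helpers
section PreNormSec

open Filter Set
open scoped NNReal

/-- A continuous (at 1) right-invariant pseudonorm datum on `G`. -/
structure PreNorm (G : Type*) [Group G] [TopologicalSpace G] where
  N : G → ℝ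
  nonneg : ∀ x, 0 ≤ N x
  one : N 1 = 0
  inv : ∀ x, N x⁻¹ = N x
  mul : ∀ x y, N (x * y) ≤ N x + N y
  small : ∀ ε : ℝ, 0 < ε → {x | N x < ε} ∈ 𝓝 (1 : G)

variable {G : Type*} [Group G] [TopologicalSpace G] [IsTopologicalGroup G]

private lemma nnpow_small {ε : ℝ≥0} (hε : 0 < ε) : ∃ n : ℕ, ((2:ℝ≥0)⁻¹)^n < ε := by
  obtain ⟨n, hn⟩ := exists_pow_lt_of_lt_one (by exact_mod_cast hε : (0:ℝ) < (ε:ℝ))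
    (by norm_num : ((2:ℝ)⁻¹) < 1)
  exact ⟨n, by exact_mod_cast hn⟩

private lemma eq_zero_of_le_nnpow {q : ℝ≥0} (h : ∀ n : ℕ, q ≤ ((2:ℝ≥0)⁻¹)^n) : q = 0 := by
  by_contra hq
  obtain ⟨n, hn⟩ := nnpow_small (pos_iff_ne_zero.2 hq)
  exact absurd (h n) (not_le.2 hn)

/-- Birkhoff–Kakutani: a pseudonorm whose small ball sits inside a given
neighbourhood of the identity. -/
lemma exists_preNorm {W : Set G} (hW : W ∈ 𝓝 (1 : G)) :
    ∃ (P : PreNorm G) (c : ℝ), 0 < c ∧ ∀ x, P.N x ≤ c → x ∈ W := by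
  classical
  -- the type of symmetric identity neighbourhoods
  let Pt := {V : Set G // V ∈ 𝓝 (1 : G) ∧ ∀ v ∈ V, v⁻¹ ∈ V}
  have hstep : ∀ A : Pt, ∃ B : Pt,
      ∀ a ∈ B.1, ∀ b ∈ B.1, ∀ c ∈ B.1, a * b * c ∈ A.1 := by
    rintro ⟨A, hA, -⟩
    obtain ⟨V, hV, hV2⟩ := exists_nhds_one_split hA
    obtain ⟨V', hV', hV'2⟩ := exists_nhds_one_split hV
    refine ⟨⟨(V ∩ V') ∩ ((V ∩ V')⁻¹), inter_mem (inter_mem hV hV')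
        (inv_mem_nhds_one G (inter_mem hV hV')), ?_⟩, ?_⟩
    · rintro v ⟨hv1, hv2⟩
      exact ⟨by simpa using hv2, by simpa using hv1⟩
    · rintro a ⟨⟨ha, ha'⟩, -⟩ b ⟨⟨hb, hb'⟩, -⟩ c ⟨⟨hc, hc'⟩, -⟩
      exact hV2 _ (hV'2 a ha' b hb') _ hc
  let stepf : Pt → Pt := fun A => (hstep A).choose
  have stepf_spec : ∀ A : Pt, ∀ a ∈ (stepf A).1, ∀ b ∈ (stepf A).1, ∀ c ∈ (stepf A).1,
      a * b * c ∈ A.1 := fun A => (hstep A).choose_spec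
  have one_mem : ∀ A : Pt, (1:G) ∈ A.1 := fun A => mem_of_mem_nhds A.2.1
  have stepf_sub : ∀ A : Pt, (stepf A).1 ⊆ A.1 := by
    intro A a ha
    have := stepf_spec A a ha 1 (one_mem _) 1 (one_mem _)
    simpa using this
  let W' : Pt := ⟨W ∩ W⁻¹, inter_mem hW (inv_mem_nhds_one G hW), by
    rintro v ⟨hv1, hv2⟩; exact ⟨by simpa using hv2, by simpa using hv1⟩⟩
  let Vs : ℕ → Pt := fun n => n.rec (stepf W') (fun _ ih => stepf ih)
  have hVs : ∀ n, Vs (n+1) = stepf (Vs n) := fun n => rfl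
  have triple : ∀ n, ∀ a ∈ (Vs (n+1)).1, ∀ b ∈ (Vs (n+1)).1, ∀ c ∈ (Vs (n+1)).1,
      a * b * c ∈ (Vs n).1 := fun n => stepf_spec (Vs n)
  have mono : ∀ n, (Vs (n+1)).1 ⊆ (Vs n).1 := fun n => stepf_sub (Vs n)
  have mono' : ∀ m n, n ≤ m → (Vs m).1 ⊆ (Vs n).1 := by
    intro m n h
    induction m with
    | zero => cases Nat.le_zero.1 h; exact fun _ h => h
    | succ k ih =>
      rcases Nat.lt_or_ge n (k+1) with h' | h'
      · exact (mono k).trans (ih (Nat.lt_succ_iff.1 h'))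
      · cases le_antisymm h h'; exact fun _ h => h
  -- the pre-distance
  let ρ : G → ℝ≥0 := fun x => sInf (insert 1 {q | ∃ n, x ∈ (Vs n).1 ∧ q = ((2:ℝ≥0)⁻¹)^n})
  have ρ_le_one : ∀ x, ρ x ≤ 1 := fun x => csInf_le (OrderBot.bddBelow _) (mem_insert _ _)
  have ρ_le_of_mem : ∀ {x n}, x ∈ (Vs n).1 → ρ x ≤ ((2:ℝ≥0)⁻¹)^n := fun {x n} hx =>
    csInf_le (OrderBot.bddBelow _) (Or.inr ⟨n, hx, rfl⟩)
  have mem_of_rho_lt : ∀ {x : G} {n : ℕ}, ρ x < ((2:ℝ≥0)⁻¹)^n → x ∈ (Vs (n+1)).1 := by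
    intro x n h
    obtain ⟨q, hq, hqlt⟩ := exists_lt_of_csInf_lt ⟨1, mem_insert _ _⟩ h
    rcases hq with rfl | ⟨m, hm, rfl⟩
    · exact absurd hqlt (not_lt.2 (pow_le_one₀ zero_le (by norm_num)))
    · have hnm : n < m := by
        by_contra hc
        have := pow_le_pow_of_le_one (show (0:ℝ≥0) ≤ (2:ℝ≥0)⁻¹ from zero_le) (by norm_num) (not_lt.1 hc)
        exact absurd this (not_le.2 hqlt)
      exact mono' m (n+1) hnm hm
  have ρ_symm : ∀ x, ρ x⁻¹ = ρ x := by
    intro x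
    have : (insert 1 {q | ∃ n, x⁻¹ ∈ (Vs n).1 ∧ q = ((2:ℝ≥0)⁻¹)^n}) =
        (insert 1 {q | ∃ n, x ∈ (Vs n).1 ∧ q = ((2:ℝ≥0)⁻¹)^n}) := by
      apply congrArg
      ext q
      constructor
      · rintro ⟨n, hx, rfl⟩
        exact ⟨n, by simpa using (Vs n).2.2 _ hx, rfl⟩
      · rintro ⟨n, hx, rfl⟩
        exact ⟨n, (Vs n).2.2 _ hx, rfl⟩
    simpa [ρ] using congrArg sInf this
  have ρ_one : ρ 1 = 0 :=
    eq_zero_of_le_nnpow (fun n => ρ_le_of_mem (one_mem (Vs n)))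
  have ρ_triple : ∀ a b c : G, ρ (a*b*c) ≤ 2 * max (ρ a) (max (ρ b) (ρ c)) := by
    intro a b c
    set m := max (ρ a) (max (ρ b) (ρ c)) with hm
    have hma : ρ a ≤ m := le_max_left _ _
    have hmb : ρ b ≤ m := (le_max_left _ _).trans (le_max_right _ _)
    have hmc : ρ c ≤ m := (le_max_right _ _).trans (le_max_right _ _)
    rcases eq_or_lt_of_le (show (0:ℝ≥0) ≤ m from zero_le) with hm0 | hmpos
    · have habc : ∀ n, ρ (a*b*c) ≤ ((2:ℝ≥0)⁻¹)^n := by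
        intro n
        have hpos : (0:ℝ≥0) < ((2:ℝ≥0)⁻¹)^n := by positivity
        have ha' := mem_of_rho_lt (lt_of_le_of_lt (hma.trans_eq hm0.symm) hpos)
        have hb' := mem_of_rho_lt (lt_of_le_of_lt (hmb.trans_eq hm0.symm) hpos)
        have hc' := mem_of_rho_lt (lt_of_le_of_lt (hmc.trans_eq hm0.symm) hpos)
        exact ρ_le_of_mem (triple n a ha' b hb' c hc')
      rw [eq_zero_of_le_nnpow habc]
      exact zero_le
    · rcases le_or_gt (2:ℝ≥0)⁻¹ m with hbig | hsmall
      · calc ρ (a*b*c) ≤ 1 := ρ_le_one _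
          _ = 2 * (2:ℝ≥0)⁻¹ := by norm_num
          _ ≤ 2 * m := by exact mul_le_mul_right hbig 2
      · have hex : ∃ n, ((2:ℝ≥0)⁻¹)^(n+1) ≤ m := by
          obtain ⟨n, hn⟩ := nnpow_small hmpos
          cases n with
          | zero =>
            have hm1 : m ≤ ((2:ℝ≥0)⁻¹)^0 := by
              simpa using hsmall.le.trans (by norm_num : (2:ℝ≥0)⁻¹ ≤ 1)
            exact absurd hn (not_lt.2 hm1)
          | succ k => exact ⟨k, hn.le⟩
        set n₀ := Nat.find hex with hn₀
        have h1 : ((2:ℝ≥0)⁻¹)^(n₀+1) ≤ m := Nat.find_spec hex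
        have h2 : m < ((2:ℝ≥0)⁻¹)^n₀ := by
          cases hn₀' : n₀ with
          | zero => simpa using hsmall.trans_le (by norm_num : (2:ℝ≥0)⁻¹ ≤ 1)
          | succ k =>
            have := Nat.find_min hex (m := k) (by omega)
            exact not_le.1 this
        have ha' := mem_of_rho_lt (lt_of_le_of_lt hma h2)
        have hb' := mem_of_rho_lt (lt_of_le_of_lt hmb h2)
        have hc' := mem_of_rho_lt (lt_of_le_of_lt hmc h2)
        have := ρ_le_of_mem (triple n₀ a ha' b hb' c hc')
        calc ρ (a*b*c) ≤ ((2:ℝ≥0)⁻¹)^n₀ := this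
          _ = 2 * ((2:ℝ≥0)⁻¹)^(n₀+1) := by
              rw [pow_succ]
              rw [show (2:ℝ≥0) * (2⁻¹ ^ n₀ * 2⁻¹) = (2 * 2⁻¹) * 2⁻¹ ^ n₀ from by ring]
              norm_num
          _ ≤ 2 * m := mul_le_mul_right h1 2
  -- the chain pseudometric
  let d : G → G → ℝ≥0 := fun x y => ρ (x * y⁻¹)
  have dself : ∀ x, d x x = 0 := fun x => by simp [d, ρ_one]
  have dcomm : ∀ x y, d x y = d y x := by
    intro x y
    have : (x * y⁻¹)⁻¹ = y * x⁻¹ := by group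
    rw [show d x y = ρ (x*y⁻¹) from rfl, ← ρ_symm, this]
  have hd : ∀ x₁ x₂ x₃ x₄ : G, d x₁ x₄ ≤ 2 * max (d x₁ x₂) (max (d x₂ x₃) (d x₃ x₄)) := by
    intro x₁ x₂ x₃ x₄
    have he : (x₁ * x₂⁻¹) * (x₂ * x₃⁻¹) * (x₃ * x₄⁻¹) = x₁ * x₄⁻¹ := by group
    calc d x₁ x₄ = ρ ((x₁ * x₂⁻¹) * (x₂ * x₃⁻¹) * (x₃ * x₄⁻¹)) := by rw [he]
      _ ≤ 2 * max (d x₁ x₂) (max (d x₂ x₃) (d x₃ x₄)) := ρ_triple _ _ _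
  let I := PseudoMetricSpace.ofPreNNDist d dself dcomm
  let D : G → G → ℝ := fun x y => @dist G I.toDist x y
  have D_le : ∀ x y, D x y ≤ (d x y : ℝ) := fun x y =>
    PseudoMetricSpace.dist_ofPreNNDist_le d dself dcomm x y
  have le_D : ∀ x y, (d x y : ℝ) ≤ 2 * D x y := fun x y =>
    PseudoMetricSpace.le_two_mul_dist_ofPreNNDist d dself dcomm hd x y
  have D_self : ∀ x, D x x = 0 := I.dist_self
  have D_comm : ∀ x y, D x y = D y x := I.dist_comm
  have D_tri : ∀ x y z, D x z ≤ D x y + D y z := I.dist_triangle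
  have D_nonneg : ∀ x y, 0 ≤ D x y := by
    intro x y
    have h := D_tri x y x
    rw [D_self x, D_comm y x] at h
    linarith
  -- the norm
  have keybdd : ∀ x : G, ∀ t ∈ Set.range (fun g => D (x*g) g), t ≤ 1 := by
    rintro x t ⟨g, rfl⟩
    refine (D_le _ _).trans ?_
    have : d (x*g) g = ρ x := by
      show ρ ((x*g) * g⁻¹) = ρ x
      rw [mul_inv_cancel_right]
    rw [this]
    exact_mod_cast ρ_le_one x
  have bddA : ∀ x : G, BddAbove (Set.range (fun g => D (x*g) g)) := fun x =>
    ⟨1, fun t ht => keybdd x t ht⟩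
  have neA : ∀ x : G, (Set.range (fun g => D (x*g) g)).Nonempty := fun x =>
    ⟨D (x*1) 1, ⟨1, rfl⟩⟩
  let Nf : G → ℝ := fun x => sSup (Set.range (fun g => D (x*g) g))
  have N_ge : ∀ x g, D (x*g) g ≤ Nf x := fun x g => le_csSup (bddA x) ⟨g, rfl⟩
  have N_nonneg : ∀ x, 0 ≤ Nf x := fun x => le_trans (D_nonneg (x*1) 1) (N_ge x 1)
  have N_one : Nf 1 = 0 := by
    have : (fun g : G => D (1*g) g) = fun _ => (0:ℝ) := by
      funext g; rw [one_mul, D_self]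
    show sSup _ = 0
    rw [this, Set.range_const, csSup_singleton]
  have N_le_rho : ∀ v, Nf v ≤ (ρ v : ℝ) := by
    intro v
    refine csSup_le (neA v) ?_
    rintro t ⟨g, rfl⟩
    refine (D_le _ _).trans ?_
    have : d (v*g) g = ρ v := by
      show ρ ((v*g) * g⁻¹) = ρ v
      rw [mul_inv_cancel_right]
    rw [this]
  have N_inv : ∀ x, Nf x⁻¹ = Nf x := by
    have key : ∀ x : G, Nf x⁻¹ ≤ Nf x := by
      intro x
      refine csSup_le (neA _) ?_
      rintro t ⟨g, rfl⟩
      show D (x⁻¹*g) g ≤ Nf x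
      have h1 : D (x⁻¹*g) g = D (x*(x⁻¹*g)) (x⁻¹*g) := by
        rw [show x*(x⁻¹*g) = g by group]
        exact D_comm _ _
      rw [h1]
      exact N_ge x (x⁻¹*g)
    intro x
    refine le_antisymm (key x) ?_
    have := key x⁻¹
    rwa [inv_inv] at this
  have N_mul : ∀ x y, Nf (x*y) ≤ Nf x + Nf y := by
    intro x y
    refine csSup_le (neA _) ?_
    rintro t ⟨g, rfl⟩
    calc D (x*y*g) g ≤ D (x*y*g) (y*g) + D (y*g) g := D_tri _ _ _
      _ ≤ Nf x + Nf y := by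
          have h1 : D (x*y*g) (y*g) = D (x*(y*g)) (y*g) := by rw [mul_assoc]
          rw [h1]
          exact add_le_add (N_ge x (y*g)) (N_ge y g)
  have N_small : ∀ ε : ℝ, 0 < ε → {x | Nf x < ε} ∈ 𝓝 (1:G) := by
    intro ε hε
    obtain ⟨n, hn⟩ := nnpow_small (ε := ⟨ε, hε.le⟩) (by exact_mod_cast hε)
    refine mem_of_superset (Vs n).2.1 ?_
    intro v hv
    have h1 : Nf v ≤ (ρ v : ℝ) := N_le_rho v
    have h2 : ρ v ≤ ((2:ℝ≥0)⁻¹)^n := ρ_le_of_mem hv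
    have h3 : (((2:ℝ≥0)⁻¹)^n : ℝ) < ε := by exact_mod_cast hn
    have h2' : (ρ v : ℝ) ≤ (((2:ℝ≥0)⁻¹)^n : ℝ) := by exact_mod_cast h2
    show Nf v < ε
    linarith
  refine ⟨⟨Nf, N_nonneg, N_one, N_inv, N_mul, N_small⟩, 1/8, by norm_num, ?_⟩
  intro x hx
  -- N x ≤ 1/8 ⇒ ρ x ≤ 1/4 < 1/2 ⇒ x ∈ Vs 2 ⊆ Vs 0 ⊆ W
  have h1 : (d x 1 : ℝ) ≤ 2 * D x 1 := le_D x 1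
  have h2 : D x 1 ≤ Nf x := by
    have := N_ge x 1
    rwa [mul_one] at this
  have h3 : d x 1 = ρ x := by
    show ρ (x * 1⁻¹) = ρ x
    rw [inv_one, mul_one]
  have h4 : (ρ x : ℝ) ≤ 1/4 := by
    rw [h3] at h1
    simp only at hx
    linarith
  have h5 : ρ x < ((2:ℝ≥0)⁻¹)^1 := by
    have : (ρ x : ℝ) < (((2:ℝ≥0)⁻¹)^1 : ℝ) := by
      push_cast
      linarith
    exact_mod_cast this
  have h6 : x ∈ (Vs 2).1 := mem_of_rho_lt h5
  have h7 : x ∈ (Vs 0).1 := mono' 2 0 (by omega) h6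
  have h8 : x ∈ W'.1 := stepf_sub W' h7
  exact h8.1

end PreNormSec
set_option linter.unusedSectionVars false

section Construction

open Filter Set

variable {G : Type*} [Group G] [TopologicalSpace G] [IsTopologicalGroup G] {H : Subgroup G}

/-- `f : H → ℝ` is `L`-Lipschitz with respect to the pseudonorm `P`. -/
def IsLip (H : Subgroup G) (P : PreNorm G) (L : ℝ) (f : ↥H → ℝ) : Prop :=
  ∀ h h' : ↥H, |f h - f h'| ≤ L * P.N ((h : G) * (h' : G)⁻¹)

/-- Parameters for the approximate extension operator. -/
structure Param (G : Type*) [Group G] [TopologicalSpace G] (H : Subgroup G) where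
  P : PreNorm G
  L : ℝ
  hL : 0 ≤ L
  r : ℝ
  hr : 0 < r
  E : Finset G
  cover : ∀ g : G, ∃ e ∈ E, ∃ u, P.N u < r ∧ ∃ h ∈ H, g = e * u * h
  M : PreNorm G
  s : ℝ
  hs : 0 < s
  comp : ∀ w : G, M.N w ≤ 2 * s → P.N w ≤ r ∧ ∀ e ∈ E, P.N (e⁻¹ * w * e) ≤ r

variable (p : Param G H)

/-- the index set of the Katětov-type extension near `e`. -/
def feSet (e : G) (f : ↥H → ℝ) (x : G) : Set ℝ :=
  {t | ∃ h : ↥H, t = f h + p.L * p.P.N (e⁻¹ * x * (h : G)⁻¹)}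

noncomputable def fe (e : G) (f : ↥H → ℝ) (x : G) : ℝ :=
  min (sSup (Set.range f)) (sInf (feSet p e f x))

def psSet (e : G) (x : G) : Set ℝ :=
  {t | ∃ u : G, ∃ h : ↥H, p.P.N u < p.r ∧ t = p.M.N (x * ((h : G)⁻¹ * u⁻¹ * e⁻¹))}

noncomputable def psit (e : G) (x : G) : ℝ :=
  max 0 (p.s - sInf (psSet p e x))

noncomputable def TT (x : G) : ℝ := ∑ e ∈ p.E, psit p e x

noncomputable def Theta (f : ↥H → ℝ) (x : G) : ℝ :=
  (∑ e ∈ p.E, psit p e x * fe p e f x) / TT p x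

/- ### basic facts about the pieces -/

lemma feSet_nonempty (e : G) (f : ↥H → ℝ) (x : G) : (feSet p e f x).Nonempty :=
  ⟨f 1 + p.L * p.P.N (e⁻¹ * x * ((1 : ↥H) : G)⁻¹), ⟨1, rfl⟩⟩

lemma feSet_bddBelow {C : ℝ} {f : ↥H → ℝ} (hf : ∀ h, |f h| ≤ C) (e : G) (x : G) :
    BddBelow (feSet p e f x) := by
  refine ⟨-C, ?_⟩
  rintro t ⟨h, rfl⟩
  have h1 := (abs_le.1 (hf h)).1
  have h2 : 0 ≤ p.L * p.P.N (e⁻¹ * x * (h : G)⁻¹) :=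
    mul_nonneg p.hL (p.P.nonneg _)
  linarith

lemma range_bddAbove {C : ℝ} {f : ↥H → ℝ} (hf : ∀ h, |f h| ≤ C) :
    BddAbove (Set.range f) := by
  refine ⟨C, ?_⟩
  rintro t ⟨h, rfl⟩
  exact (abs_le.1 (hf h)).2

lemma sSup_range_le {C : ℝ} {f : ↥H → ℝ} (hf : ∀ h, |f h| ≤ C) :
    sSup (Set.range f) ≤ C :=
  csSup_le ⟨f 1, ⟨1, rfl⟩⟩ (by rintro t ⟨h, rfl⟩; exact (abs_le.1 (hf h)).2)

lemma le_sSup_range {C : ℝ} {f : ↥H → ℝ} (hf : ∀ h, |f h| ≤ C) (h : ↥H) :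
    f h ≤ sSup (Set.range f) :=
  le_csSup (range_bddAbove hf) ⟨h, rfl⟩

lemma fe_le {C : ℝ} {f : ↥H → ℝ} (hf : ∀ h, |f h| ≤ C) (e x : G) :
    fe p e f x ≤ C :=
  (min_le_left _ _).trans (sSup_range_le hf)

lemma neg_le_fe {C : ℝ} {f : ↥H → ℝ} (hf : ∀ h, |f h| ≤ C) (e x : G) :
    -C ≤ fe p e f x := by
  refine le_min ?_ ?_
  · have h1 := (abs_le.1 (hf 1)).1
    have h2 := le_sSup_range hf 1
    linarith
  · refine le_csInf (feSet_nonempty p e f x) ?_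
    rintro t ⟨h, rfl⟩
    have h1 := (abs_le.1 (hf h)).1
    have h2 : 0 ≤ p.L * p.P.N (e⁻¹ * x * (h : G)⁻¹) := mul_nonneg p.hL (p.P.nonneg _)
    linarith

lemma abs_fe_le {C : ℝ} {f : ↥H → ℝ} (hf : ∀ h, |f h| ≤ C) (e x : G) :
    |fe p e f x| ≤ C :=
  abs_le.2 ⟨neg_le_fe p hf e x, fe_le p hf e x⟩

lemma psSet_nonempty (e x : G) : (psSet p e x).Nonempty :=
  ⟨p.M.N (x * (((1 : ↥H) : G)⁻¹ * (1:G)⁻¹ * e⁻¹)), ⟨1, 1, by rw [p.P.one]; exact p.hr, rfl⟩⟩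

lemma psSet_bddBelow (e x : G) : BddBelow (psSet p e x) := by
  refine ⟨0, ?_⟩
  rintro t ⟨u, h, hu, rfl⟩
  exact p.M.nonneg _

lemma psSet_sInf_nonneg (e x : G) : 0 ≤ sInf (psSet p e x) :=
  Real.sInf_nonneg (by rintro t ⟨u, h, hu, rfl⟩; exact p.M.nonneg _)

lemma psit_nonneg (e x : G) : 0 ≤ psit p e x := le_max_left _ _

lemma psit_le (e x : G) : psit p e x ≤ p.s := by
  refine max_le p.hs.le ?_
  have := psSet_sInf_nonneg p e x
  linarith

lemma TT_nonneg (x : G) : 0 ≤ TT p x :=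
  Finset.sum_nonneg fun e _ => psit_nonneg p e x

lemma TT_ge (x : G) : p.s ≤ TT p x := by
  obtain ⟨e, he, u, hu, h, hh, rfl⟩ := p.cover x
  have hmem : (0:ℝ) ∈ psSet p e (e * u * h) := by
    refine ⟨u, ⟨h, hh⟩, hu, ?_⟩
    rw [← p.M.one]
    congr 1
    group
  have h1 : sInf (psSet p e (e * u * h)) ≤ 0 := csInf_le (psSet_bddBelow p e _) hmem
  have h2 := psSet_sInf_nonneg p e (e * u * h)
  have h3 : psit p e (e * u * h) = p.s := by
    rw [psit, le_antisymm h1 h2, sub_zero, max_eq_right p.hs.le]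
  calc p.s = psit p e (e * u * h) := h3.symm
    _ ≤ TT p (e * u * h) :=
        Finset.single_le_sum (fun e' _ => psit_nonneg p e' _) he

lemma TT_pos (x : G) : 0 < TT p x := lt_of_lt_of_le p.hs (TT_ge p x)

lemma TT_le (x : G) : TT p x ≤ (p.E.card : ℝ) * p.s := by
  rw [TT]
  calc ∑ e ∈ p.E, psit p e x ≤ ∑ _e ∈ p.E, p.s :=
        Finset.sum_le_sum fun e _ => psit_le p e x
    _ = (p.E.card : ℝ) * p.s := by rw [Finset.sum_const, nsmul_eq_mul]

/- ### right H-equivariance -/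

lemma psSet_translate (e x : G) (h₀ : ↥H) :
    psSet p e (x * (h₀ : G)) = psSet p e x := by
  ext t
  constructor
  · rintro ⟨u, h, hu, rfl⟩
    refine ⟨u, h * h₀⁻¹, hu, ?_⟩
    congr 1
    push_cast
    group
  · rintro ⟨u, h, hu, rfl⟩
    refine ⟨u, h * h₀, hu, ?_⟩
    congr 1
    push_cast
    group

lemma psit_translate (e x : G) (h₀ : ↥H) :
    psit p e (x * (h₀ : G)) = psit p e x := by
  rw [psit, psit, psSet_translate]

lemma TT_translate (x : G) (h₀ : ↥H) : TT p (x * (h₀ : G)) = TT p x := by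
  rw [TT, TT]
  exact Finset.sum_congr rfl fun e _ => psit_translate p e x h₀

lemma range_translate (f : ↥H → ℝ) (h₀ : ↥H) :
    Set.range (fun h => f (h * h₀)) = Set.range f := by
  ext t
  constructor
  · rintro ⟨h, rfl⟩; exact ⟨h * h₀, rfl⟩
  · rintro ⟨h, rfl⟩
    refine ⟨h * h₀⁻¹, ?_⟩
    show f (h * h₀⁻¹ * h₀) = f h
    rw [inv_mul_cancel_right]

lemma feSet_translate (e x : G) (f : ↥H → ℝ) (h₀ : ↥H) :
    feSet p e (fun h => f (h * h₀)) x = feSet p e f (x * (h₀ : G)) := by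
  ext t
  constructor
  · rintro ⟨h, rfl⟩
    refine ⟨h * h₀, ?_⟩
    congr 1
    push_cast
    group
  · rintro ⟨h, rfl⟩
    refine ⟨h * h₀⁻¹, ?_⟩
    show _ = f (h * h₀⁻¹ * h₀) + _
    rw [inv_mul_cancel_right]
    congr 1
    push_cast
    group

lemma fe_translate (e x : G) (f : ↥H → ℝ) (h₀ : ↥H) :
    fe p e (fun h => f (h * h₀)) x = fe p e f (x * (h₀ : G)) := by
  rw [fe, fe, feSet_translate, range_translate]

lemma theta_translate (f : ↥H → ℝ) (h₀ : ↥H) (x : G) :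
    Theta p (fun h => f (h * h₀)) x = Theta p f (x * (h₀ : G)) := by
  rw [Theta, Theta, TT_translate]
  congr 1
  refine Finset.sum_congr rfl fun e _ => ?_
  rw [psit_translate, fe_translate]

/- ### modulus of continuity -/

lemma sInf_diff_le {S T : Set ℝ} (hS : S.Nonempty) (bS : BddBelow S)
    (hT : T.Nonempty) (bT : BddBelow T) {δ : ℝ} (hδ : 0 ≤ δ)
    (h1 : ∀ t ∈ T, ∃ s ∈ S, s ≤ t + δ) (h2 : ∀ s ∈ S, ∃ t ∈ T, t ≤ s + δ) :
    |sInf S - sInf T| ≤ δ := by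
  rw [abs_sub_le_iff]
  constructor
  · have := sInf_le_sInf_add hS bS hT bT h1
    linarith
  · have := sInf_le_sInf_add hT bT hS bS h2
    linarith

lemma fe_ruc {C : ℝ} {f : ↥H → ℝ} (hf : ∀ h, |f h| ≤ C) (e : G) (v x : G) :
    |fe p e f (v * x) - fe p e f x| ≤ p.L * p.P.N (e⁻¹ * v * e) := by
  have hδ : 0 ≤ p.L * p.P.N (e⁻¹ * v * e) := mul_nonneg p.hL (p.P.nonneg _)
  have key : ∀ (a b : G), (∀ h : ↥H,
        p.P.N (e⁻¹ * a * (h:G)⁻¹) ≤ p.P.N (e⁻¹ * b * (h:G)⁻¹) + p.P.N (e⁻¹ * v * e)) →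
      ∀ t ∈ feSet p e f b, ∃ s ∈ feSet p e f a, s ≤ t + p.L * p.P.N (e⁻¹ * v * e) := by
    rintro a b hab t ⟨h, rfl⟩
    refine ⟨f h + p.L * p.P.N (e⁻¹ * a * (h:G)⁻¹), ⟨h, rfl⟩, ?_⟩
    have := mul_le_mul_of_nonneg_left (hab h) p.hL
    rw [mul_add] at this
    linarith
  have dir1 : ∀ h : ↥H,
      p.P.N (e⁻¹ * (v * x) * (h:G)⁻¹) ≤ p.P.N (e⁻¹ * x * (h:G)⁻¹) + p.P.N (e⁻¹ * v * e) := by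
    intro h
    have hid : e⁻¹ * (v * x) * (h:G)⁻¹ = (e⁻¹ * v * e) * (e⁻¹ * x * (h:G)⁻¹) := by group
    rw [hid]
    have := p.P.mul (e⁻¹ * v * e) (e⁻¹ * x * (h:G)⁻¹)
    linarith
  have dir2 : ∀ h : ↥H,
      p.P.N (e⁻¹ * x * (h:G)⁻¹) ≤ p.P.N (e⁻¹ * (v * x) * (h:G)⁻¹) + p.P.N (e⁻¹ * v * e) := by
    intro h
    have hid : e⁻¹ * x * (h:G)⁻¹ = (e⁻¹ * v⁻¹ * e) * (e⁻¹ * (v * x) * (h:G)⁻¹) := by group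
    rw [hid]
    have h1 := p.P.mul (e⁻¹ * v⁻¹ * e) (e⁻¹ * (v * x) * (h:G)⁻¹)
    have h2 : p.P.N (e⁻¹ * v⁻¹ * e) = p.P.N (e⁻¹ * v * e) := by
      rw [show e⁻¹ * v⁻¹ * e = (e⁻¹ * v * e)⁻¹ from by group, p.P.inv]
    linarith
  have habs : |sInf (feSet p e f (v * x)) - sInf (feSet p e f x)| ≤
      p.L * p.P.N (e⁻¹ * v * e) :=
    sInf_diff_le (feSet_nonempty p e f (v*x)) (feSet_bddBelow p hf e (v*x))
      (feSet_nonempty p e f x) (feSet_bddBelow p hf e x) hδ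
      (key (v*x) x dir1) (key x (v*x) dir2)
  calc |fe p e f (v*x) - fe p e f x| ≤
      max |sSup (Set.range f) - sSup (Set.range f)| |sInf (feSet p e f (v*x)) - sInf (feSet p e f x)| :=
        abs_min_sub_min_le_max _ _ _ _
    _ ≤ p.L * p.P.N (e⁻¹ * v * e) := by
        rw [sub_self, abs_zero]
        exact max_le hδ habs

lemma psit_ruc (e : G) (v x : G) :
    |psit p e (v * x) - psit p e x| ≤ p.M.N v := by
  have hδ : 0 ≤ p.M.N v := p.M.nonneg _
  have key : ∀ (a b : G), (∀ z : G, p.M.N (a * z) ≤ p.M.N (b * z) + p.M.N v) →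
      ∀ t ∈ psSet p e b, ∃ s ∈ psSet p e a, s ≤ t + p.M.N v := by
    rintro a b hab t ⟨u, h, hu, rfl⟩
    exact ⟨p.M.N (a * ((h:G)⁻¹ * u⁻¹ * e⁻¹)), ⟨u, h, hu, rfl⟩, hab _⟩
  have dir1 : ∀ z : G, p.M.N ((v * x) * z) ≤ p.M.N (x * z) + p.M.N v := by
    intro z
    have hid : (v * x) * z = v * (x * z) := by group
    rw [hid]
    have := p.M.mul v (x * z)
    linarith
  have dir2 : ∀ z : G, p.M.N (x * z) ≤ p.M.N ((v * x) * z) + p.M.N v := by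
    intro z
    have hid : x * z = v⁻¹ * ((v * x) * z) := by group
    rw [hid]
    have h1 := p.M.mul v⁻¹ ((v * x) * z)
    have h2 := p.M.inv v
    linarith
  have habs : |sInf (psSet p e (v * x)) - sInf (psSet p e x)| ≤ p.M.N v :=
    sInf_diff_le (psSet_nonempty p e (v*x)) (psSet_bddBelow p e (v*x))
      (psSet_nonempty p e x) (psSet_bddBelow p e x) hδ
      (key (v*x) x dir1) (key x (v*x) dir2)
  have h1 : |psit p e (v*x) - psit p e x| ≤
      |(p.s - sInf (psSet p e (v*x))) - (p.s - sInf (psSet p e x))| := by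
    rw [psit, psit, max_comm 0 _, max_comm 0 (p.s - sInf (psSet p e x))]
    exact abs_max_sub_max_le_abs _ _ _
  have h2 : (p.s - sInf (psSet p e (v*x))) - (p.s - sInf (psSet p e x)) =
      -(sInf (psSet p e (v*x)) - sInf (psSet p e x)) := by ring
  rw [h2, abs_neg] at h1
  exact h1.trans habs

/- ### the good-region estimate -/

lemma active_witness (e x : G) (he : e ∈ p.E) (hne : psit p e x ≠ 0) :
    ∃ h₁ : ↥H, p.P.N (e⁻¹ * x * (h₁ : G)⁻¹) ≤ 2 * p.r := by
  have h1 : sInf (psSet p e x) < p.s := by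
    by_contra hc
    exact hne (max_eq_left (by linarith [not_lt.1 hc]) )
  obtain ⟨t, ht, htlt⟩ := exists_lt_of_csInf_lt (psSet_nonempty p e x) h1
  obtain ⟨u, h₁, hu, rfl⟩ := ht
  set w := x * ((h₁:G)⁻¹ * u⁻¹ * e⁻¹) with hw
  have hMw : p.M.N w ≤ 2 * p.s := by
    have := p.hs
    linarith
  have hconj := (p.comp w hMw).2 e he
  refine ⟨h₁, ?_⟩
  have hid : e⁻¹ * x * (h₁:G)⁻¹ = (e⁻¹ * w * e) * u := by rw [hw]; group
  rw [hid]
  have := p.P.mul (e⁻¹ * w * e) u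
  linarith [hu.le, hconj]

lemma fe_est {C : ℝ} {f : ↥H → ℝ} (hf : ∀ h, |f h| ≤ C)
    (hLip : IsLip H p.P p.L f) {e x : G} {h₁ : ↥H}
    (hh₁ : p.P.N (e⁻¹ * x * (h₁ : G)⁻¹) ≤ 2 * p.r) :
    |fe p e f x - f h₁| ≤ 2 * (p.L * p.r) := by
  have hLr : 0 ≤ p.L * p.r := mul_nonneg p.hL p.hr.le
  rw [abs_sub_le_iff]
  have h3 : fe p e f x ≤ sInf (feSet p e f x) := by
    rw [fe]; exact min_le_right _ _
  constructor
  · -- fe ≤ f h₁ + 2Lr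
    have h1 : sInf (feSet p e f x) ≤ f h₁ + p.L * p.P.N (e⁻¹ * x * (h₁:G)⁻¹) :=
      csInf_le (feSet_bddBelow p hf e x) ⟨h₁, rfl⟩
    have h2 : p.L * p.P.N (e⁻¹ * x * (h₁:G)⁻¹) ≤ p.L * (2 * p.r) :=
      mul_le_mul_of_nonneg_left hh₁ p.hL
    nlinarith
  · -- f h₁ - 2Lr ≤ fe
    have hge : f h₁ - 2 * (p.L * p.r) ≤ fe p e f x := by
      refine le_min ?_ ?_
      · have := le_sSup_range hf h₁
        linarith
      -- f h₁ - 2Lr ≤ sInf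
      refine le_csInf (feSet_nonempty p e f x) ?_
      rintro t ⟨h, rfl⟩
      have hLipv := hLip h₁ h
      have htri : p.P.N ((h₁:G) * (h:G)⁻¹) ≤
          p.P.N (e⁻¹ * x * (h₁:G)⁻¹) + p.P.N (e⁻¹ * x * (h:G)⁻¹) := by
        have hid : (h₁:G) * (h:G)⁻¹ = (e⁻¹ * x * (h₁:G)⁻¹)⁻¹ * (e⁻¹ * x * (h:G)⁻¹) := by
          group
        rw [hid]
        have h1 := p.P.mul (e⁻¹ * x * (h₁:G)⁻¹)⁻¹ (e⁻¹ * x * (h:G)⁻¹)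
        have h2 := p.P.inv (e⁻¹ * x * (h₁:G)⁻¹)
        linarith
      have h3 : |f h₁ - f h| ≤ p.L * p.P.N ((h₁:G) * (h:G)⁻¹) := hLipv
      have h4 := (abs_le.1 h3).2
      have h5 : p.P.N (e⁻¹ * x * (h:G)⁻¹) ≥ p.P.N ((h₁:G) * (h:G)⁻¹) - 2 * p.r := by
        linarith
      have h6 : p.L * p.P.N (e⁻¹ * x * (h:G)⁻¹) ≥
          p.L * p.P.N ((h₁:G) * (h:G)⁻¹) - p.L * (2 * p.r) := by
        nlinarith [p.hL, p.P.nonneg (e⁻¹ * x * (h:G)⁻¹)]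
      nlinarith
    linarith

end Construction
section ThetaLemmas

open Filter Set

variable {G : Type*} [Group G] [TopologicalSpace G] [IsTopologicalGroup G] {H : Subgroup G}
variable (p : Param G H)

lemma div_sub_div_bound {A₁ A₂ T₁ T₂ s C a t : ℝ} (hs : 0 < s) (hT₁ : s ≤ T₁) (hT₂ : s ≤ T₂)
    (hA : |A₁ - A₂| ≤ a) (hT : |T₁ - T₂| ≤ t) (hA₂ : |A₂| ≤ T₂ * C) (hC : 0 ≤ C) :
    |A₁/T₁ - A₂/T₂| ≤ a/s + C*t/s := by
  have hT₁p : 0 < T₁ := hs.trans_le hT₁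
  have hT₂p : 0 < T₂ := hs.trans_le hT₂
  have ha0 : 0 ≤ a := (abs_nonneg _).trans hA
  have ht0 : 0 ≤ t := (abs_nonneg _).trans hT
  have e1 : A₁/T₁ - A₂/T₂ = (A₁ - A₂)/T₁ + A₂*(T₂ - T₁)/(T₁*T₂) := by
    field_simp
    ring
  rw [e1]
  refine (abs_add_le _ _).trans (add_le_add ?_ ?_)
  · rw [abs_div, abs_of_pos hT₁p]
    calc |A₁ - A₂| / T₁ ≤ a / T₁ := by gcongr
      _ ≤ a / s := by gcongr
  · rw [abs_div, abs_mul, abs_of_pos (mul_pos hT₁p hT₂p)]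
    calc |A₂| * |T₂ - T₁| / (T₁*T₂) ≤ (T₂*C) * t / (T₁*T₂) := by
          have h1 : |T₂ - T₁| ≤ t := by rwa [abs_sub_comm]
          gcongr
      _ = C * t / T₁ := by field_simp
      _ ≤ C * t / s := by
          have : 0 ≤ C * t := mul_nonneg hC ht0
          gcongr

lemma sum_div_bound (x : G) (g : G → ℝ) {δ : ℝ} (hδ : 0 ≤ δ)
    (hg : ∀ e ∈ p.E, psit p e x ≠ 0 → |g e| ≤ δ) :
    |(∑ e ∈ p.E, psit p e x * g e) / TT p x| ≤ δ := by
  have hT := TT_pos p x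
  have hA : |∑ e ∈ p.E, psit p e x * g e| ≤ TT p x * δ := by
    refine (Finset.abs_sum_le_sum_abs _ _).trans ?_
    rw [TT, Finset.sum_mul]
    refine Finset.sum_le_sum fun e he => ?_
    rw [abs_mul, abs_of_nonneg (psit_nonneg p e x)]
    by_cases hzero : psit p e x = 0
    · rw [hzero, zero_mul, zero_mul]
    · exact mul_le_mul_of_nonneg_left (hg e he hzero) (psit_nonneg p e x)
  rw [abs_div, abs_of_pos hT, div_le_iff₀ hT]
  rw [mul_comm]
  exact hA

lemma theta_abs_le {C : ℝ} {f : ↥H → ℝ} (hf : ∀ h, |f h| ≤ C) (x : G) :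
    |Theta p f x| ≤ C := by
  have hC : 0 ≤ C := le_trans (abs_nonneg _) (hf 1)
  exact sum_div_bound p x _ hC (fun e _ _ => abs_fe_le p hf e x)

lemma fe_nonneg {C : ℝ} {f : ↥H → ℝ} (hf : ∀ h, |f h| ≤ C) (hpos : ∀ h, 0 ≤ f h)
    (e x : G) : 0 ≤ fe p e f x := by
  refine le_min ?_ ?_
  · exact (hpos 1).trans (le_sSup_range hf 1)
  · refine Real.sInf_nonneg ?_
    rintro t ⟨h, rfl⟩
    have := hpos h
    have h2 : 0 ≤ p.L * p.P.N (e⁻¹ * x * (h:G)⁻¹) := mul_nonneg p.hL (p.P.nonneg _)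
    linarith

lemma theta_nonneg {C : ℝ} {f : ↥H → ℝ} (hf : ∀ h, |f h| ≤ C) (hpos : ∀ h, 0 ≤ f h)
    (x : G) : 0 ≤ Theta p f x := by
  refine div_nonneg (Finset.sum_nonneg fun e _ => ?_) (TT_nonneg p x)
  exact mul_nonneg (psit_nonneg p e x) (fe_nonneg p hf hpos e x)

lemma fe_one (e x : G) : fe p e (fun _ => (1:ℝ)) x = 1 := by
  have h1 : sSup (Set.range (fun _ : ↥H => (1:ℝ))) = 1 := by
    rw [Set.range_const, csSup_singleton]
  have h2 : (1:ℝ) ≤ sInf (feSet p e (fun _ => (1:ℝ)) x) := by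
    refine le_csInf (feSet_nonempty p e _ x) ?_
    rintro t ⟨h, rfl⟩
    have h2 : 0 ≤ p.L * p.P.N (e⁻¹ * x * (h:G)⁻¹) := mul_nonneg p.hL (p.P.nonneg _)
    linarith
  rw [fe, h1, min_eq_left h2]

lemma theta_one (x : G) : Theta p (fun _ => (1:ℝ)) x = 1 := by
  rw [Theta]
  have : ∀ e ∈ p.E, psit p e x * fe p e (fun _ => (1:ℝ)) x = psit p e x := by
    intro e _
    rw [fe_one, mul_one]
  rw [Finset.sum_congr rfl this]
  exact div_self (ne_of_gt (TT_pos p x))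

lemma sSup_range_diff_le {f g : ↥H → ℝ} {Cf Cg δ : ℝ}
    (hf : ∀ h, |f h| ≤ Cf) (hg : ∀ h, |g h| ≤ Cg)
    (hfg : ∀ h, |f h - g h| ≤ δ) :
    |sSup (Set.range f) - sSup (Set.range g)| ≤ δ := by
  rw [abs_sub_le_iff]
  constructor
  · rw [sub_le_iff_le_add]
    refine csSup_le ⟨f 1, ⟨1, rfl⟩⟩ ?_
    rintro t ⟨h, rfl⟩
    have h1 := (abs_le.1 (hfg h)).2
    have h2 := le_sSup_range hg h
    linarith
  · rw [sub_le_iff_le_add]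
    refine csSup_le ⟨g 1, ⟨1, rfl⟩⟩ ?_
    rintro t ⟨h, rfl⟩
    have h1 := (abs_le.1 (hfg h)).1
    have h2 := le_sSup_range hf h
    linarith

lemma fe_diff_le {f g : ↥H → ℝ} {Cf Cg δ : ℝ}
    (hf : ∀ h, |f h| ≤ Cf) (hg : ∀ h, |g h| ≤ Cg)
    (hfg : ∀ h, |f h - g h| ≤ δ) (e x : G) :
    |fe p e f x - fe p e g x| ≤ δ := by
  have hδ : 0 ≤ δ := le_trans (abs_nonneg _) (hfg 1)
  have key : ∀ (F K : ↥H → ℝ), (∀ h, |F h| ≤ max Cf Cg) → (∀ h, F h - K h ≤ δ) →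
      ∀ t ∈ feSet p e K x, ∃ s ∈ feSet p e F x, s ≤ t + δ := by
    rintro F K hFb hFK t ⟨h, rfl⟩
    exact ⟨F h + p.L * p.P.N (e⁻¹ * x * (h:G)⁻¹), ⟨h, rfl⟩, by have := hFK h; linarith⟩
  have habs : |sInf (feSet p e f x) - sInf (feSet p e g x)| ≤ δ := by
    refine sInf_diff_le (feSet_nonempty p e f x) (feSet_bddBelow p hf e x)
      (feSet_nonempty p e g x) (feSet_bddBelow p hg e x) hδ ?_ ?_
    · exact key f g (fun h => (hf h).trans (le_max_left _ _))
        (fun h => (abs_le.1 (hfg h)).2) 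
    · exact key g f (fun h => (hg h).trans (le_max_right _ _))
        (fun h => by have := (abs_le.1 (hfg h)).1; linarith)
  calc |fe p e f x - fe p e g x| ≤
      max |sSup (Set.range f) - sSup (Set.range g)|
        |sInf (feSet p e f x) - sInf (feSet p e g x)| := abs_min_sub_min_le_max _ _ _ _
    _ ≤ δ := max_le (sSup_range_diff_le hf hg hfg) habs

lemma theta_diff_le {f g : ↥H → ℝ} {Cf Cg δ : ℝ}
    (hf : ∀ h, |f h| ≤ Cf) (hg : ∀ h, |g h| ≤ Cg)
    (hfg : ∀ h, |f h - g h| ≤ δ) (x : G) :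
    |Theta p f x - Theta p g x| ≤ δ := by
  have hδ : 0 ≤ δ := le_trans (abs_nonneg _) (hfg 1)
  have he : Theta p f x - Theta p g x =
      (∑ e ∈ p.E, psit p e x * (fe p e f x - fe p e g x)) / TT p x := by
    rw [Theta, Theta, div_sub_div_same]
    congr 1
    rw [← Finset.sum_sub_distrib]
    exact Finset.sum_congr rfl fun e _ => (mul_sub _ _ _).symm
  rw [he]
  exact sum_div_bound p x _ hδ (fun e _ _ => fe_diff_le p hf hg hfg e x)

lemma theta_add_est {f g : ↥H → ℝ} {Cf Cg : ℝ}
    (hf : ∀ h, |f h| ≤ Cf) (hg : ∀ h, |g h| ≤ Cg)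
    (hfL : IsLip H p.P p.L f) (hgL : IsLip H p.P p.L g)
    (hfgL : IsLip H p.P p.L (fun h => f h + g h)) (x : G) :
    |Theta p (fun h => f h + g h) x - (Theta p f x + Theta p g x)| ≤ 6 * (p.L * p.r) := by
  have hLr : 0 ≤ p.L * p.r := mul_nonneg p.hL p.hr.le
  have hfg : ∀ h : ↥H, |f h + g h| ≤ Cf + Cg := fun h =>
    (abs_add_le _ _).trans (add_le_add (hf h) (hg h))
  have he : Theta p (fun h => f h + g h) x - (Theta p f x + Theta p g x) =
      (∑ e ∈ p.E, psit p e x *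
        (fe p e (fun h => f h + g h) x - (fe p e f x + fe p e g x))) / TT p x := by
    rw [Theta, Theta, Theta, ← add_div, div_sub_div_same]
    congr 1
    rw [← Finset.sum_add_distrib, ← Finset.sum_sub_distrib]
    refine Finset.sum_congr rfl fun e _ => ?_
    ring
  rw [he]
  refine sum_div_bound p x _ (by linarith) ?_
  intro e he hne
  obtain ⟨h₁, hh₁⟩ := active_witness p e x he hne
  have e1 := fe_est p hfg hfgL hh₁
  have e2 := fe_est p hf hfL hh₁
  have e3 := fe_est p hg hgL hh₁
  have e1' := abs_sub_le_iff.1 e1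
  have e2' := abs_sub_le_iff.1 e2
  have e3' := abs_sub_le_iff.1 e3
  have a1 : fe p e (fun h => f h + g h) x - (f h₁ + g h₁) ≤ 2*(p.L*p.r) := e1'.1
  have a2 : (f h₁ + g h₁) - fe p e (fun h => f h + g h) x ≤ 2*(p.L*p.r) := e1'.2
  have b1 : fe p e f x - f h₁ ≤ 2*(p.L*p.r) := e2'.1
  have b2 : f h₁ - fe p e f x ≤ 2*(p.L*p.r) := e2'.2
  have c1 : fe p e g x - g h₁ ≤ 2*(p.L*p.r) := e3'.1
  have c2 : g h₁ - fe p e g x ≤ 2*(p.L*p.r) := e3'.2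
  rw [abs_le]
  constructor <;> linarith

lemma theta_smul_est {f : ↥H → ℝ} {Cf : ℝ} (c : ℝ)
    (hf : ∀ h, |f h| ≤ Cf)
    (hfL : IsLip H p.P p.L f) (hcfL : IsLip H p.P p.L (fun h => c * f h)) (x : G) :
    |Theta p (fun h => c * f h) x - c * Theta p f x| ≤ (2 + 2*|c|) * (p.L * p.r) := by
  have hLr : 0 ≤ p.L * p.r := mul_nonneg p.hL p.hr.le
  have hcf : ∀ h : ↥H, |c * f h| ≤ |c| * Cf := fun h => by
    rw [abs_mul]; exact mul_le_mul_of_nonneg_left (hf h) (abs_nonneg c)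
  have he : Theta p (fun h => c * f h) x - c * Theta p f x =
      (∑ e ∈ p.E, psit p e x *
        (fe p e (fun h => c * f h) x - c * fe p e f x)) / TT p x := by
    rw [Theta, Theta, ← mul_div_assoc, div_sub_div_same]
    congr 1
    rw [Finset.mul_sum, ← Finset.sum_sub_distrib]
    refine Finset.sum_congr rfl fun e _ => ?_
    ring
  rw [he]
  refine sum_div_bound p x _ (mul_nonneg (by positivity) hLr) ?_
  intro e he hne
  obtain ⟨h₁, hh₁⟩ := active_witness p e x he hne
  have e1 := fe_est p hcf hcfL hh₁
  have e2 := fe_est p hf hfL hh₁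
  calc |fe p e (fun h => c * f h) x - c * fe p e f x| =
      |(fe p e (fun h => c * f h) x - c * f h₁) + c * (f h₁ - fe p e f x)| := by
        congr 1
        ring
    _ ≤ |fe p e (fun h => c * f h) x - c * f h₁| + |c * (f h₁ - fe p e f x)| := abs_add_le _ _
    _ ≤ 2 * (p.L * p.r) + |c| * (2 * (p.L * p.r)) := by
        refine add_le_add e1 ?_
        rw [abs_mul]
        rw [abs_sub_comm]
        exact mul_le_mul_of_nonneg_left e2 (abs_nonneg c)
    _ = (2 + 2*|c|) * (p.L * p.r) := by ring

lemma theta_ruc {C : ℝ} {f : ↥H → ℝ} (hf : ∀ h, |f h| ≤ C) :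
    IsRUCB G (Theta p f) := by
  have hC : 0 ≤ C := le_trans (abs_nonneg _) (hf 1)
  refine ⟨⟨C, fun x => theta_abs_le p hf x⟩, ?_⟩
  intro ε hε
  set k : ℝ := (p.E.card : ℝ) with hk
  have hk0 : 0 ≤ k := Nat.cast_nonneg _
  set B : ℝ := k*C + k*p.s*p.L + C*k + 1 with hB
  have hBpos : 0 < B := by
    have h1 : 0 ≤ k*C := mul_nonneg hk0 hC
    have h2 : 0 ≤ k*p.s*p.L := mul_nonneg (mul_nonneg hk0 p.hs.le) p.hL
    have h3 : 0 ≤ C*k := mul_nonneg hC hk0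
    linarith
  set δ : ℝ := ε * p.s / (2 * B) with hδdef
  have hδpos : 0 < δ := by
    rw [hδdef]
    exact div_pos (mul_pos hε p.hs) (by linarith)
  -- the neighbourhood
  have hV1 : {v : G | p.M.N v < δ} ∈ 𝓝 (1:G) := p.M.small δ hδpos
  have hV2 : ∀ e ∈ p.E, {v : G | p.P.N (e⁻¹ * v * e) < δ} ∈ 𝓝 (1:G) := by
    intro e _
    have hcont : ContinuousAt (fun v : G => e⁻¹ * v * e) 1 :=
      (((continuous_const.mul continuous_id).mul continuous_const)).continuousAt
    have hmem : {w : G | p.P.N w < δ} ∈ 𝓝 (e⁻¹ * 1 * e) := by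
      rw [show e⁻¹ * (1:G) * e = 1 from by group]
      exact p.P.small δ hδpos
    exact hcont.preimage_mem_nhds hmem
  have hVmem : ({v : G | p.M.N v < δ} ∩ ⋂ e ∈ p.E, {v : G | p.P.N (e⁻¹ * v * e) < δ})
      ∈ 𝓝 (1:G) := Filter.inter_mem hV1 ((Filter.biInter_finset_mem _).2 hV2)
  refine ⟨_, hVmem, ?_⟩
  rintro v ⟨hvM, hvP⟩ x
  have hvP' : ∀ e ∈ p.E, p.P.N (e⁻¹ * v * e) < δ := by
    intro e he
    have := Set.mem_iInter₂.1 hvP e he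
    exact this
  -- the three bounds
  have hT1 := TT_ge p (v*x)
  have hT2 := TT_ge p x
  have hAband : |(∑ e ∈ p.E, psit p e (v*x) * fe p e f (v*x)) -
      (∑ e ∈ p.E, psit p e x * fe p e f x)| ≤ k * (δ*C + p.s*(p.L*δ)) := by
    rw [← Finset.sum_sub_distrib]
    refine (Finset.abs_sum_le_sum_abs _ _).trans ?_
    have hperterm : ∀ e ∈ p.E,
        |psit p e (v*x) * fe p e f (v*x) - psit p e x * fe p e f x| ≤ δ*C + p.s*(p.L*δ) := by
      intro e he
      have hid : psit p e (v*x) * fe p e f (v*x) - psit p e x * fe p e f x =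
          (psit p e (v*x) - psit p e x) * fe p e f (v*x) +
          psit p e x * (fe p e f (v*x) - fe p e f x) := by ring
      rw [hid]
      refine (abs_add_le _ _).trans ?_
      have b1 : |(psit p e (v*x) - psit p e x) * fe p e f (v*x)| ≤ δ * C := by
        rw [abs_mul]
        refine mul_le_mul ((psit_ruc p e v x).trans hvM.le) (abs_fe_le p hf e (v*x))
          (abs_nonneg _) hδpos.le
      have b2 : |psit p e x * (fe p e f (v*x) - fe p e f x)| ≤ p.s * (p.L * δ) := by
        rw [abs_mul, abs_of_nonneg (psit_nonneg p e x)]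
        refine mul_le_mul (psit_le p e x) ?_ (abs_nonneg _) p.hs.le
        refine (fe_ruc p hf e v x).trans ?_
        exact mul_le_mul_of_nonneg_left (hvP' e he).le p.hL
      linarith
    calc ∑ e ∈ p.E, |psit p e (v*x) * fe p e f (v*x) - psit p e x * fe p e f x| ≤
        ∑ _e ∈ p.E, (δ*C + p.s*(p.L*δ)) := Finset.sum_le_sum hperterm
      _ = k * (δ*C + p.s*(p.L*δ)) := by rw [Finset.sum_const, nsmul_eq_mul]
  have hTband : |TT p (v*x) - TT p x| ≤ k * δ := by
    rw [TT, TT, ← Finset.sum_sub_distrib]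
    refine (Finset.abs_sum_le_sum_abs _ _).trans ?_
    calc ∑ e ∈ p.E, |psit p e (v*x) - psit p e x| ≤ ∑ _e ∈ p.E, δ :=
        Finset.sum_le_sum fun e _ => (psit_ruc p e v x).trans hvM.le
      _ = k * δ := by rw [Finset.sum_const, nsmul_eq_mul]
  have hA2band : |∑ e ∈ p.E, psit p e x * fe p e f x| ≤ TT p x * C := by
    refine (Finset.abs_sum_le_sum_abs _ _).trans ?_
    rw [TT, Finset.sum_mul]
    refine Finset.sum_le_sum fun e _ => ?_
    rw [abs_mul, abs_of_nonneg (psit_nonneg p e x)]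
    exact mul_le_mul_of_nonneg_left (abs_fe_le p hf e x) (psit_nonneg p e x)
  -- combine
  have hcomb := div_sub_div_bound (s := p.s) p.hs hT1 hT2 hAband hTband hA2band hC
  rw [Theta, Theta]
  refine lt_of_le_of_lt hcomb ?_
  -- arithmetic: k(δC + sLδ)/s + C(kδ)/s < ε
  have hkey : k * (δ*C + p.s*(p.L*δ)) + C * (k*δ) = δ * (k*C + k*p.s*p.L + C*k) := by ring
  have hle : δ * (k*C + k*p.s*p.L + C*k) ≤ δ * B := by
    refine mul_le_mul_of_nonneg_left ?_ hδpos.le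
    rw [hB]; linarith
  have hδB : δ * B = ε * p.s / 2 := by
    rw [hδdef, div_mul_eq_mul_div, mul_comm (2:ℝ) B, ← div_div,
      mul_div_assoc, div_self (ne_of_gt hBpos), mul_one]
  have hfinal : k * (δ*C + p.s*(p.L*δ)) / p.s + C * (k*δ) / p.s ≤ ε / 2 := by
    rw [← add_div, div_le_iff₀ p.hs]
    calc k * (δ*C + p.s*(p.L*δ)) + C * (k*δ) = δ * (k*C + k*p.s*p.L + C*k) := hkey
      _ ≤ δ * B := hle
      _ = ε * p.s / 2 := hδB
      _ = ε / 2 * p.s := by ring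
  linarith

end ThetaLemmas
section Approx

open Filter Set

variable {G : Type*} [Group G] [TopologicalSpace G] [IsTopologicalGroup G] {H : Subgroup G}

/-- combination of two pseudonorms -/
def PreNorm.addN (P Q : PreNorm G) : PreNorm G where
  N := fun x => P.N x + Q.N x
  nonneg := fun x => add_nonneg (P.nonneg x) (Q.nonneg x)
  one := by show P.N 1 + Q.N 1 = 0; rw [P.one, Q.one, add_zero]
  inv := fun x => by show P.N x⁻¹ + Q.N x⁻¹ = P.N x + Q.N x; rw [P.inv, Q.inv]
  mul := fun x y => by
    show P.N (x*y) + Q.N (x*y) ≤ (P.N x + Q.N x) + (P.N y + Q.N y)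
    have h1 := P.mul x y
    have h2 := Q.mul x y
    linarith
  small := fun ε hε => by
    refine Filter.mem_of_superset
      (Filter.inter_mem (P.small (ε/2) (by linarith)) (Q.small (ε/2) (by linarith))) ?_
    rintro x ⟨h1, h2⟩
    simp only [Set.mem_setOf_eq] at *
    linarith

/-- the zero pseudonorm -/
def PreNorm.zeroN (G : Type*) [Group G] [TopologicalSpace G] : PreNorm G where
  N := fun _ => 0
  nonneg := fun _ => le_refl 0
  one := rfl
  inv := fun _ => rfl
  mul := fun _ _ => by norm_num
  small := fun ε hε => by
    have : {x : G | (0:ℝ) < ε} = Set.univ := by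
      ext x; simpa using hε
    rw [this]
    exact Filter.univ_mem

lemma IsLip.mono {P P' : PreNorm G} {L L' : ℝ} {f : ↥H → ℝ}
    (h : IsLip H P L f) (hL : 0 ≤ L) (hLL : L ≤ L') (hN : ∀ x, P.N x ≤ P'.N x) :
    IsLip H P' L' f := by
  intro a b
  calc |f a - f b| ≤ L * P.N ((a:G) * (b:G)⁻¹) := h a b
    _ ≤ L * P'.N ((a:G) * (b:G)⁻¹) := mul_le_mul_of_nonneg_left (hN _) hL
    _ ≤ L' * P'.N ((a:G) * (b:G)⁻¹) := mul_le_mul_of_nonneg_right hLL (P'.nonneg _)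

/-- functions with Lipschitz data -/
def LipData (H : Subgroup G) (f : ↥H → ℝ) : Prop :=
  ∃ (P : PreNorm G) (L C : ℝ), 0 ≤ L ∧ (∀ h, |f h| ≤ C) ∧ IsLip H P L f

lemma LipData.add {f g : ↥H → ℝ} (hf : LipData H f) (hg : LipData H g) :
    LipData H (fun h => f h + g h) := by
  obtain ⟨P, L, C, hL, hC, hLip⟩ := hf
  obtain ⟨P', L', C', hL', hC', hLip'⟩ := hg
  refine ⟨P.addN P', L + L', C + C', by linarith, ?_, ?_⟩
  · intro h
    exact (abs_add_le _ _).trans (add_le_add (hC h) (hC' h))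
  · intro a b
    have h1 := hLip.mono (P' := P.addN P') hL (le_refl L) (fun x => by
      have := P'.nonneg x
      show P.N x ≤ P.N x + P'.N x
      linarith) a b
    have h2 := hLip'.mono (P' := P.addN P') hL' (le_refl L') (fun x => by
      have := P.nonneg x
      show P'.N x ≤ P.N x + P'.N x
      linarith) a b
    calc |f a + g a - (f b + g b)| = |(f a - f b) + (g a - g b)| := by ring_nf
      _ ≤ |f a - f b| + |g a - g b| := abs_add_le _ _
      _ ≤ L * (P.addN P').N ((a:G) * (b:G)⁻¹) + L' * (P.addN P').N ((a:G) * (b:G)⁻¹) :=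
          add_le_add h1 h2
      _ = (L + L') * (P.addN P').N ((a:G) * (b:G)⁻¹) := by ring

lemma LipData.smul {f : ↥H → ℝ} (c : ℝ) (hf : LipData H f) :
    LipData H (fun h => c * f h) := by
  obtain ⟨P, L, C, hL, hC, hLip⟩ := hf
  refine ⟨P, |c| * L, |c| * C, by positivity, ?_, ?_⟩
  · intro h
    rw [abs_mul]
    exact mul_le_mul_of_nonneg_left (hC h) (abs_nonneg c)
  · intro a b
    calc |c * f a - c * f b| = |c| * |f a - f b| := by rw [← abs_mul]; ring_nf
      _ ≤ |c| * (L * P.N ((a:G) * (b:G)⁻¹)) :=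
          mul_le_mul_of_nonneg_left (hLip a b) (abs_nonneg c)
      _ = |c| * L * P.N ((a:G) * (b:G)⁻¹) := by ring

/-- Existence of parameters adapted to a finite family of Lipschitz-type functions. -/
lemma param_exists (hH : PreSyndetic H) (S : List (↥H → ℝ)) (hS : ∀ f ∈ S, LipData H f)
    {ε : ℝ} (hε : 0 < ε) :
    ∃ p : Param G H, (∀ f ∈ S, IsLip H p.P p.L f) ∧ p.L * p.r ≤ ε := by
  classical
  -- a common pseudonorm and Lipschitz constant
  have hcommon : ∃ (P : PreNorm G) (L : ℝ), 0 ≤ L ∧ ∀ f ∈ S, IsLip H P L f := by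
    induction S with
    | nil => exact ⟨PreNorm.zeroN G, 0, le_refl 0, by simp⟩
    | cons f S ih =>
      obtain ⟨P₀, L₀, hL₀, hS₀⟩ := ih (fun g hg => hS g (List.mem_cons_of_mem f hg))
      obtain ⟨Pf, Lf, Cf, hLf, hbf, hLipf⟩ := hS f List.mem_cons_self
      refine ⟨P₀.addN Pf, L₀ + Lf, by linarith, ?_⟩
      intro g hg
      rcases List.mem_cons.1 hg with rfl | hg'
      · exact hLipf.mono hLf (by linarith) (fun x => by
          have := P₀.nonneg x
          show Pf.N x ≤ P₀.N x + Pf.N x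
          linarith)
      · exact (hS₀ g hg').mono hL₀ (by linarith) (fun x => by
          have := Pf.nonneg x
          show P₀.N x ≤ P₀.N x + Pf.N x
          linarith)
  obtain ⟨P, L, hL, hSLip⟩ := hcommon
  set L' : ℝ := L + 1 with hL'
  have hL'pos : 0 < L' := by linarith
  set r : ℝ := ε / L' with hr'
  have hrpos : 0 < r := div_pos hε hL'pos
  have hLr : L' * r = ε := by
    rw [hr', mul_div_cancel₀ _ (ne_of_gt hL'pos)]
  -- the covering
  have hU : {u : G | P.N u < r} ∈ 𝓝 (1:G) := P.small r hrpos
  obtain ⟨E, hE⟩ := hH _ hU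
  -- the fine pseudonorm
  have hWmem : ({w : G | P.N w < r} ∩
      ⋂ e ∈ E, (fun w : G => e⁻¹ * w * e) ⁻¹' {w : G | P.N w < r}) ∈ 𝓝 (1:G) := by
    refine Filter.inter_mem hU ((Filter.biInter_finset_mem _).2 ?_)
    intro e _
    have hcont : ContinuousAt (fun v : G => e⁻¹ * v * e) 1 :=
      (((continuous_const.mul continuous_id).mul continuous_const)).continuousAt
    have hmem : {w : G | P.N w < r} ∈ 𝓝 (e⁻¹ * 1 * e) := by
      rw [show e⁻¹ * (1:G) * e = 1 from by group]
      exact hU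
    exact hcont.preimage_mem_nhds hmem
  obtain ⟨M, c, hc, hball⟩ := exists_preNorm hWmem
  refine ⟨⟨P, L', hL'pos.le, r, hrpos, E, ?_, M, c/2, by linarith, ?_⟩, ?_, ?_⟩
  · -- cover
    intro g
    obtain ⟨e, he, u, hu, h, hh, hg⟩ := hE g
    exact ⟨e, he, u, hu, h, hh, hg⟩
  · -- comp
    intro w hw
    have hwW := hball w (by linarith)
    refine ⟨(hwW.1 : P.N w < r).le, ?_⟩
    intro e he
    have := Set.mem_iInter₂.1 hwW.2 e he
    exact (this : P.N (e⁻¹ * w * e) < r).le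
  · -- Lipschitz
    intro f hf
    exact (hSLip f hf).mono hL (by linarith) (fun x => le_refl _)
  · -- L * r ≤ ε
    simp only
    rw [hLr]

/-- Lipschitz approximation of RUCB functions on the subgroup. -/
lemma lip_approx {f : ↥H → ℝ} (hf : IsRUCB (↥H) f) {ε : ℝ} (hε : 0 < ε) :
    ∃ f' : ↥H → ℝ, LipData H f' ∧ ∀ h, |f h - f' h| ≤ ε := by
  classical
  obtain ⟨⟨C, hC⟩, hruc⟩ := hf
  have hC0 : 0 ≤ C := le_trans (abs_nonneg _) (hC 1)
  obtain ⟨V, hV, hVf⟩ := hruc ε hε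
  -- extract a neighbourhood in G
  have hnhds : 𝓝 (1 : ↥H) = Filter.comap (Subtype.val) (𝓝 ((1:↥H) : G)) :=
    nhds_induced _ _
  have hcoe : ((1:↥H) : G) = 1 := rfl
  rw [hnhds, hcoe] at hV
  obtain ⟨V', hV', hV'sub⟩ := Filter.mem_comap.1 hV
  obtain ⟨P, c, hc, hball⟩ := exists_preNorm hV'
  set K : ℝ := (2*C + 1)/c with hK
  have hK0 : 0 ≤ K := div_nonneg (by linarith) hc.le
  have hKc : K * c = 2*C + 1 := div_mul_cancel₀ _ (ne_of_gt hc)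
  -- the inf-convolution
  set lipSet : ↥H → Set ℝ :=
    fun h => {t | ∃ h' : ↥H, t = f h' + K * P.N ((h:G) * ((h':G))⁻¹)} with hlipSet
  have hne : ∀ h, (lipSet h).Nonempty := fun h => ⟨_, ⟨h, rfl⟩⟩
  have hbdd : ∀ h, BddBelow (lipSet h) := by
    intro h
    refine ⟨-C, ?_⟩
    rintro t ⟨h', rfl⟩
    have h1 := (abs_le.1 (hC h')).1
    have h2 : 0 ≤ K * P.N ((h:G) * ((h':G))⁻¹) := mul_nonneg hK0 (P.nonneg _)
    linarith
  set f' : ↥H → ℝ := fun h => sInf (lipSet h) with hf'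
  have hub : ∀ h, f' h ≤ f h := by
    intro h
    have hmem : f h ∈ lipSet h := by
      refine ⟨h, ?_⟩
      rw [show ((h:G)) * ((h:G))⁻¹ = 1 from mul_inv_cancel _, P.one, mul_zero, add_zero]
    exact csInf_le (hbdd h) hmem
  have hlb : ∀ h, f h - ε ≤ f' h := by
    intro h
    refine le_csInf (hne h) ?_
    rintro t ⟨h', rfl⟩
    by_cases hcase : P.N ((h:G) * ((h':G))⁻¹) ≤ c
    · -- close: use uniform continuity
      have hmemW : ((h:G) * ((h':G))⁻¹) ∈ V' := hball _ hcase
      have hHmem : ((h:G) * ((h':G))⁻¹) ∈ H := by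
        have := mul_mem h.2 (inv_mem h'.2)
        exact this
      set w : ↥H := ⟨(h:G) * ((h':G))⁻¹, hHmem⟩ with hw
      have hwV : w ∈ V := hV'sub (by exact hmemW)
      have := hVf w hwV h'
      have hwh : w * h' = h := by
        ext
        push_cast
        simp [hw]
      rw [hwh] at this
      have h1 := (abs_le.1 this.le).2
      have h2 : 0 ≤ K * P.N ((h:G) * ((h':G))⁻¹) := mul_nonneg hK0 (P.nonneg _)
      linarith
    · -- far: the penalty dominates
      push_neg at hcase
      have h1 : K * c ≤ K * P.N ((h:G) * ((h':G))⁻¹) :=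
        mul_le_mul_of_nonneg_left hcase.le hK0
      have h2 := (abs_le.1 (hC h')).1
      have h3 := (abs_le.1 (hC h)).2
      rw [hKc] at h1
      linarith
  have hbnd : ∀ h, |f' h| ≤ C := by
    intro h
    rw [abs_le]
    constructor
    · refine le_csInf (hne h) ?_
      rintro t ⟨h', rfl⟩
      have h1 := (abs_le.1 (hC h')).1
      have h2 : 0 ≤ K * P.N ((h:G) * ((h':G))⁻¹) := mul_nonneg hK0 (P.nonneg _)
      linarith
    · exact (hub h).trans (abs_le.1 (hC h)).2
  have hlip : IsLip H P K f' := by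
    intro a b
    have key : ∀ x y : ↥H, ∀ t ∈ lipSet y, ∃ s ∈ lipSet x,
        s ≤ t + K * P.N ((x:G) * ((y:G))⁻¹) := by
      rintro x y t ⟨h', rfl⟩
      refine ⟨f h' + K * P.N ((x:G) * ((h':G))⁻¹), ⟨h', rfl⟩, ?_⟩
      have htri : P.N ((x:G) * ((h':G))⁻¹) ≤
          P.N ((x:G) * ((y:G))⁻¹) + P.N ((y:G) * ((h':G))⁻¹) := by
        have hid : (x:G) * ((h':G))⁻¹ = ((x:G) * ((y:G))⁻¹) * ((y:G) * ((h':G))⁻¹) := by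
          group
        rw [hid]
        exact P.mul _ _
      have := mul_le_mul_of_nonneg_left htri hK0
      rw [mul_add] at this
      linarith
    have habs := sInf_diff_le (hne a) (hbdd a) (hne b) (hbdd b)
      (mul_nonneg hK0 (P.nonneg ((a:G) * ((b:G))⁻¹))) (key a b) ?_
    · exact habs
    · intro t ht
      obtain ⟨s, hs, hle⟩ := key b a t ht
      refine ⟨s, hs, hle.trans ?_⟩
      have : P.N ((b:G) * ((a:G))⁻¹) = P.N ((a:G) * ((b:G))⁻¹) := by
        rw [show (b:G) * ((a:G))⁻¹ = ((a:G) * ((b:G))⁻¹)⁻¹ from by group, P.inv]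
      rw [this]
  refine ⟨f', ⟨P, K, C, hK0, hbnd, hlip⟩, ?_⟩
  intro h
  rw [abs_le]
  constructor
  · have := hub h; linarith
  · have := hlb h; linarith

end Approx
section MainProof

open Filter Set

theorem presyndetic_subgroup_skewAmenable {G : Type*} [Group G] [TopologicalSpace G]
    [IsTopologicalGroup G] (hG : SkewAmenable G) (H : Subgroup G) (hH : PreSyndetic H) :
    SkewAmenable ↥H := by
  classical
  obtain ⟨μ, hm, hinv⟩ := hG
  -- constraint index type
  let Cons := {c : List (↥H → ℝ) × ℝ // (∀ f ∈ c.1, LipData H f) ∧ 0 < c.2}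
  let A : Cons → Set (Param G H) := fun c =>
    {p | (∀ f ∈ c.1.1, IsLip H p.P p.L f) ∧ p.L * p.r ≤ c.1.2}
  have hAne : ∀ c : Cons, (A c).Nonempty := by
    intro c
    obtain ⟨p, h1, h2⟩ := param_exists hH c.1.1 c.2.1 c.2.2
    exact ⟨p, h1, h2⟩
  have hConsNe : Nonempty Cons := ⟨⟨([], 1), by simp, one_pos⟩⟩
  have hdir : Directed (· ≥ ·) (fun c : Cons => Filter.principal (A c)) := by
    rintro c₁ c₂
    refine ⟨⟨(c₁.1.1 ++ c₂.1.1, min c₁.1.2 c₂.1.2), ?_, lt_min c₁.2.2 c₂.2.2⟩, ?_, ?_⟩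
    · intro f hf
      rcases List.mem_append.1 hf with h | h
      exacts [c₁.2.1 f h, c₂.2.1 f h]
    · refine Filter.principal_mono.2 ?_
      rintro p ⟨h1, h2⟩
      exact ⟨fun f hf => h1 f (List.mem_append.2 (Or.inl hf)), h2.trans (min_le_left _ _)⟩
    · refine Filter.principal_mono.2 ?_
      rintro p ⟨h1, h2⟩
      exact ⟨fun f hf => h1 f (List.mem_append.2 (Or.inr hf)), h2.trans (min_le_right _ _)⟩
  have hNeBot : Filter.NeBot (⨅ c : Cons, Filter.principal (A c)) :=
    Filter.iInf_neBot_of_directed' hdir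
      (fun c => Filter.principal_neBot_iff.2 (hAne c))
  let 𝒰 : Ultrafilter (Param G H) := @Ultrafilter.of _ _ hNeBot
  have hmemU : ∀ c : Cons, A c ∈ 𝒰 := by
    intro c
    have h1 : (𝒰 : Filter (Param G H)) ≤ Filter.principal (A c) :=
      le_trans (Ultrafilter.of_le _) (iInf_le _ c)
    exact Filter.le_principal_iff.1 h1
  -- the approximate means
  let xp : Param G H → (↥H → ℝ) → ℝ := fun p f => μ (Theta p f)
  have hxp_bound : ∀ (p : Param G H) (f : ↥H → ℝ) (C : ℝ), (∀ h, |f h| ≤ C) →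
      |xp p f| ≤ C := by
    intro p f C hfC
    have h1 := mean_le_of_le_const μ hm (theta_ruc p hfC)
      (fun x => (abs_le.1 (theta_abs_le p hfC x)).2)
    have h2 := mean_ge_of_const_le μ hm (theta_ruc p hfC)
      (fun x => (abs_le.1 (theta_abs_le p hfC x)).1)
    rw [abs_le]
    exact ⟨h2, h1⟩
  -- the limit mean
  let ν : (↥H → ℝ) → ℝ := fun f => limUnder ↑𝒰 (fun p => xp p f)
  have hνt : ∀ (f : ↥H → ℝ), (∃ C, ∀ h, |f h| ≤ C) →
      Filter.Tendsto (fun p => xp p f) ↑𝒰 (𝓝 (ν f)) := by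
    rintro f ⟨C, hfC⟩
    refine tendsto_nhds_limUnder ?_
    have hsub : (𝒰.map (fun p => xp p f) : Filter ℝ) ≤ Filter.principal (Set.Icc (-C) C) := by
      refine Filter.le_principal_iff.2 ?_
      refine Filter.mem_map.2 (Filter.univ_mem' ?_)
      intro p
      exact abs_le.1 (hxp_bound p f C hfC)
    obtain ⟨a, _, ha⟩ := (isCompact_Icc (a := -C) (b := C)).ultrafilter_le_nhds _ hsub
    exact ⟨a, ha⟩
  -- ν is 1-Lipschitz for the sup norm
  have hνdiff : ∀ (f g : ↥H → ℝ) (Cf Cg δ : ℝ), (∀ h, |f h| ≤ Cf) → (∀ h, |g h| ≤ Cg) →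
      (∀ h, |f h - g h| ≤ δ) → |ν f - ν g| ≤ δ := by
    intro f g Cf Cg δ hf hg hfg
    have hbound : ∀ p : Param G H, |xp p f - xp p g| ≤ δ := by
      intro p
      exact mean_diff_le μ hm (theta_ruc p hf) (theta_ruc p hg)
        (fun x => theta_diff_le p hf hg hfg x)
    have ht := ((hνt f ⟨Cf, hf⟩).sub (hνt g ⟨Cg, hg⟩)).abs
    exact le_of_tendsto ht (Filter.Eventually.of_forall hbound)
  -- vanishing from arbitrary smallness
  have habs0 : ∀ X : ℝ, (∀ ε : ℝ, 0 < ε → |X| ≤ ε) → X = 0 := by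
    intro X hX
    by_contra h
    have h0 : 0 < |X| := abs_pos.2 h
    have := hX (|X|/2) (by linarith)
    linarith
  -- ν of the constant 1
  have hν1 : ν (fun _ => (1:ℝ)) = 1 := by
    have h1 : (fun p : Param G H => xp p (fun _ => (1:ℝ))) = fun _ => (1:ℝ) := by
      funext p
      show μ (Theta p fun _ => (1:ℝ)) = 1
      rw [show Theta p (fun _ : ↥H => (1:ℝ)) = fun _ : G => (1:ℝ) from funext (theta_one p)]
      exact hm.1
    have ht := hνt (fun _ => (1:ℝ)) ⟨1, fun h => by norm_num⟩
    rw [h1] at ht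
    exact tendsto_nhds_unique ht tendsto_const_nhds
  -- positivity
  have hνpos : ∀ f : ↥H → ℝ, IsRUCB (↥H) f → (∀ h, 0 ≤ f h) → 0 ≤ ν f := by
    intro f hf hpos
    obtain ⟨C, hfC⟩ := hf.1
    refine ge_of_tendsto (hνt f ⟨C, hfC⟩) (Filter.Eventually.of_forall fun p => ?_)
    exact mean_ge_of_const_le μ hm (theta_ruc p hfC)
      (fun x => theta_nonneg p hfC hpos x)
  -- additivity for Lipschitz-data functions
  have hadd_lip : ∀ f g : ↥H → ℝ, LipData H f → LipData H g →
      ν (fun h => f h + g h) = ν f + ν g := by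
    intro f g hfD hgD
    obtain ⟨P1, L1, C1, hL1, hb1, hLip1⟩ := hfD
    obtain ⟨P2, L2, C2, hL2, hb2, hLip2⟩ := hgD
    have hbsum : ∀ h : ↥H, |f h + g h| ≤ C1 + C2 := fun h =>
      (abs_add_le _ _).trans (add_le_add (hb1 h) (hb2 h))
    rw [← sub_eq_zero]
    refine habs0 _ ?_
    intro ε hε
    set ε₀ : ℝ := ε/6 with hε₀
    have hε₀pos : 0 < ε₀ := by rw [hε₀]; linarith
    have hcgood : (∀ f' ∈ [f, g, fun h => f h + g h], LipData H f') ∧ (0:ℝ) < ε₀ := by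
      constructor
      · intro f' hf'
        rcases List.mem_cons.1 hf' with rfl | hf'
        · exact ⟨P1, L1, C1, hL1, hb1, hLip1⟩
        rcases List.mem_cons.1 hf' with rfl | hf'
        · exact ⟨P2, L2, C2, hL2, hb2, hLip2⟩
        rcases List.mem_cons.1 hf' with rfl | hf'
        · exact LipData.add ⟨P1, L1, C1, hL1, hb1, hLip1⟩ ⟨P2, L2, C2, hL2, hb2, hLip2⟩
        · exact absurd hf' List.not_mem_nil
      · exact hε₀pos
    have hA := hmemU ⟨([f, g, fun h => f h + g h], ε₀), hcgood⟩
    have hbound : ∀ p ∈ A ⟨([f, g, fun h => f h + g h], ε₀), hcgood⟩,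
        |xp p (fun h => f h + g h) - (xp p f + xp p g)| ≤ ε := by
      rintro p ⟨hLipAll, hLr⟩
      have hLf : IsLip H p.P p.L f := hLipAll f (by simp)
      have hLg : IsLip H p.P p.L g := hLipAll g (by simp)
      have hLsum : IsLip H p.P p.L (fun h => f h + g h) := hLipAll _ (by simp)
      have hest : ∀ x, |Theta p (fun h => f h + g h) x - (Theta p f x + Theta p g x)| ≤ ε := by
        intro x
        refine (theta_add_est p hb1 hb2 hLf hLg hLsum x).trans ?_
        calc 6 * (p.L * p.r) ≤ 6 * ε₀ := by linarith
          _ = ε := by rw [hε₀]; ring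
      have hsum_eq : μ (fun x => Theta p f x + Theta p g x) = xp p f + xp p g :=
        hm.2.2.1 _ _ (theta_ruc p hb1) (theta_ruc p hb2)
      have := mean_diff_le μ hm (theta_ruc p hbsum)
        ((theta_ruc p hb1).add (theta_ruc p hb2)) hest
      rw [hsum_eq] at this
      exact this
    have ht := ((hνt (fun h => f h + g h) ⟨C1+C2, hbsum⟩).sub
      ((hνt f ⟨C1, hb1⟩).add (hνt g ⟨C2, hb2⟩))).abs
    exact le_of_tendsto ht (Filter.eventually_iff_exists_mem.2
      ⟨_, hA, fun p hp => hbound p hp⟩)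
  -- scalar multiples for Lipschitz-data functions
  have hsmul_lip : ∀ (c : ℝ) (f : ↥H → ℝ), LipData H f →
      ν (fun h => c * f h) = c * ν f := by
    intro c f hfD
    obtain ⟨P1, L1, C1, hL1, hb1, hLip1⟩ := hfD
    have hbc : ∀ h : ↥H, |c * f h| ≤ |c| * C1 := fun h => by
      rw [abs_mul]
      exact mul_le_mul_of_nonneg_left (hb1 h) (abs_nonneg c)
    rw [← sub_eq_zero]
    refine habs0 _ ?_
    intro ε hε
    set ε₀ : ℝ := ε/(2 + 2*|c|) with hε₀
    have hc2 : 0 < 2 + 2*|c| := by positivity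
    have hε₀pos : 0 < ε₀ := div_pos hε hc2
    have hcgood : (∀ f' ∈ [f, fun h => c * f h], LipData H f') ∧ (0:ℝ) < ε₀ := by
      constructor
      · intro f' hf'
        rcases List.mem_cons.1 hf' with rfl | hf'
        · exact ⟨P1, L1, C1, hL1, hb1, hLip1⟩
        rcases List.mem_cons.1 hf' with rfl | hf'
        · exact LipData.smul c ⟨P1, L1, C1, hL1, hb1, hLip1⟩
        · exact absurd hf' List.not_mem_nil
      · exact hε₀pos
    have hA := hmemU ⟨([f, fun h => c * f h], ε₀), hcgood⟩
    have hbound : ∀ p ∈ A ⟨([f, fun h => c * f h], ε₀), hcgood⟩,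
        |xp p (fun h => c * f h) - c * xp p f| ≤ ε := by
      rintro p ⟨hLipAll, hLr⟩
      have hLf : IsLip H p.P p.L f := hLipAll f (by simp)
      have hLcf : IsLip H p.P p.L (fun h => c * f h) := hLipAll _ (by simp)
      have hest : ∀ x, |Theta p (fun h => c * f h) x - c * Theta p f x| ≤ ε := by
        intro x
        refine (theta_smul_est p c hb1 hLf hLcf x).trans ?_
        calc (2 + 2*|c|) * (p.L * p.r) ≤ (2 + 2*|c|) * ε₀ := by
              exact mul_le_mul_of_nonneg_left hLr (by positivity)
          _ = ε := by
              rw [hε₀, mul_div_cancel₀ _ (ne_of_gt hc2)]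
      have hsmul_eq : μ (fun x => c * Theta p f x) = c * xp p f :=
        hm.2.2.2 c _ (theta_ruc p hb1)
      have := mean_diff_le μ hm (theta_ruc p hbc) ((theta_ruc p hb1).smulc c) hest
      rw [hsmul_eq] at this
      exact this
    have ht := ((hνt (fun h => c * f h) ⟨abs c * C1, hbc⟩).sub
      ((hνt f ⟨C1, hb1⟩).const_mul c)).abs
    exact le_of_tendsto ht (Filter.eventually_iff_exists_mem.2
      ⟨_, hA, fun p hp => hbound p hp⟩)
  -- additivity in general
  have hνadd : ∀ f g : ↥H → ℝ, IsRUCB (↥H) f → IsRUCB (↥H) g →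
      ν (fun h => f h + g h) = ν f + ν g := by
    intro f g hf hg
    obtain ⟨Cf, hCf⟩ := hf.1
    obtain ⟨Cg, hCg⟩ := hg.1
    rw [← sub_eq_zero]
    refine habs0 _ ?_
    intro ε hε
    have hη : (0:ℝ) < ε/4 := by linarith
    obtain ⟨f', hf'D, hf'a⟩ := lip_approx hf hη
    obtain ⟨g', hg'D, hg'a⟩ := lip_approx hg hη
    obtain ⟨P1, L1, C1, hL1, hb1, hLip1⟩ := hf'D
    obtain ⟨P2, L2, C2, hL2, hb2, hLip2⟩ := hg'D
    have h1 : |ν (fun h => f h + g h) - ν (fun h => f' h + g' h)| ≤ 2*(ε/4) := by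
      refine hνdiff _ _ (Cf + Cg) (C1 + C2) _ (fun h =>
        (abs_add_le _ _).trans (add_le_add (hCf h) (hCg h)))
        (fun h => (abs_add_le _ _).trans (add_le_add (hb1 h) (hb2 h))) ?_
      intro h
      calc |f h + g h - (f' h + g' h)| = |(f h - f' h) + (g h - g' h)| := by ring_nf
        _ ≤ |f h - f' h| + |g h - g' h| := abs_add_le _ _
        _ ≤ 2*(ε/4) := by have := hf'a h; have := hg'a h; linarith
    have h2 : ν (fun h => f' h + g' h) = ν f' + ν g' :=
      hadd_lip f' g' ⟨P1, L1, C1, hL1, hb1, hLip1⟩ ⟨P2, L2, C2, hL2, hb2, hLip2⟩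
    have h3 : |ν f - ν f'| ≤ ε/4 := hνdiff f f' Cf C1 _ hCf hb1 hf'a
    have h4 : |ν g - ν g'| ≤ ε/4 := hνdiff g g' Cg C2 _ hCg hb2 hg'a
    have e1 := abs_sub_le_iff.1 h1
    have e3 := abs_sub_le_iff.1 h3
    have e4 := abs_sub_le_iff.1 h4
    rw [abs_le]
    constructor <;>
      [linarith [e1.1, e1.2, e3.1, e3.2, e4.1, e4.2];
       linarith [e1.1, e1.2, e3.1, e3.2, e4.1, e4.2]]
  -- scalar multiplication in general
  have hνsmul : ∀ (c : ℝ) (f : ↥H → ℝ), IsRUCB (↥H) f →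
      ν (fun h => c * f h) = c * ν f := by
    intro c f hf
    obtain ⟨Cf, hCf⟩ := hf.1
    rw [← sub_eq_zero]
    refine habs0 _ ?_
    intro ε hε
    have hc1 : (0:ℝ) < 2*|c| + 1 := by positivity
    have hη : (0:ℝ) < ε/(2*|c| + 1) := div_pos hε hc1
    obtain ⟨f', hf'D, hf'a⟩ := lip_approx hf hη
    obtain ⟨P1, L1, C1, hL1, hb1, hLip1⟩ := hf'D
    have h1 : |ν (fun h => c * f h) - ν (fun h => c * f' h)| ≤ |c| * (ε/(2*|c|+1)) := by
      refine hνdiff _ _ (abs c * Cf) (abs c * C1) _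
        (fun h => by rw [abs_mul]; exact mul_le_mul_of_nonneg_left (hCf h) (abs_nonneg c))
        (fun h => by rw [abs_mul]; exact mul_le_mul_of_nonneg_left (hb1 h) (abs_nonneg c)) ?_
      intro h
      calc |c * f h - c * f' h| = |c| * |f h - f' h| := by rw [← abs_mul]; ring_nf
        _ ≤ |c| * (ε/(2*|c|+1)) := mul_le_mul_of_nonneg_left (hf'a h) (abs_nonneg c)
    have h2 : ν (fun h => c * f' h) = c * ν f' :=
      hsmul_lip c f' ⟨P1, L1, C1, hL1, hb1, hLip1⟩
    have h3 : |ν f - ν f'| ≤ ε/(2*|c|+1) := hνdiff f f' Cf C1 _ hCf hb1 hf'a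
    have e1 := abs_sub_le_iff.1 h1
    have e3 := abs_sub_le_iff.1 h3
    have hkey : |c| * (ε/(2*|c|+1)) + |c| * (ε/(2*|c|+1)) ≤ ε := by
      rw [div_eq_mul_inv]
      have h5 : (2*|c|) * (ε * (2*|c|+1)⁻¹) ≤ ε := by
        rw [show (2*|c|) * (ε * (2*|c|+1)⁻¹) = ε * ((2*|c|) * (2*|c|+1)⁻¹) from by ring]
        have h6 : (2*|c|) * (2*|c|+1)⁻¹ ≤ 1 := by
          rw [mul_inv_le_iff₀ hc1]
          linarith
        nlinarith
      linarith
    have h7 : |c * ν f - c * ν f'| ≤ |c| * (ε/(2*|c|+1)) := by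
      rw [show c * ν f - c * ν f' = c * (ν f - ν f') from by ring, abs_mul]
      exact mul_le_mul_of_nonneg_left h3 (abs_nonneg c)
    have e2 := abs_sub_le_iff.1 h7
    rw [abs_le]
    constructor <;>
      [linarith [e1.1, e1.2, e2.1, e2.2];
       linarith [e1.1, e1.2, e2.1, e2.2]]
  -- right invariance
  have hνinv : ∀ (g : ↥H) (f : ↥H → ℝ), IsRUCB (↥H) f →
      ν (fun x => f (x * g)) = ν f := by
    intro g f hf
    obtain ⟨C, hfC⟩ := hf.1
    have hxp_eq : ∀ p : Param G H, xp p (fun x => f (x * g)) = xp p f := by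
      intro p
      show μ (Theta p fun x => f (x * g)) = μ (Theta p f)
      rw [show Theta p (fun x => f (x * g)) = fun x => Theta p f (x * (g:G)) from
        funext (theta_translate p f g)]
      exact hinv (g:G) (Theta p f) (theta_ruc p hfC)
    have t1 := hνt (fun x => f (x * g)) ⟨C, fun h => hfC (h*g)⟩
    have t2 := hνt f ⟨C, hfC⟩
    rw [show (fun p : Param G H => xp p (fun x => f (x * g))) = (fun p => xp p f) from
      funext hxp_eq] at t1
    exact tendsto_nhds_unique t1 t2
  exact ⟨ν, ⟨hν1, hνpos, hνadd, hνsmul⟩, hνinv⟩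

end MainProof
end

section
/- Let G be an amenable topological group whose left and right uniformities coincide (equivalently: for every neighbourhood U of the identity there is a neighbourhood V of the identity with gVg⁻¹ ⊆ U for all g ∈ G), and let H be a subgroup of G such that the quotient space G/H of left cosets, equipped with the quotient topology, is compact. Then H, with the subspace topology, is amenable. -/
open scoped Topology Pointwise Uniformity
set_option linter.unusedSectionVars false

/-- A topological group is amenable if there is a left-invariant mean on `RUCB(G)`. -/
def Amenable (G : Type*) [Group G] [TopologicalSpace G] : Prop :=
  ∃ μ : (G → ℝ) → ℝ, IsMean (IsRUCB G) μ ∧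
    ∀ (g : G) (f : G → ℝ), IsRUCB G f → μ (fun x => f (g * x)) = μ f

namespace CSA

variable {G : Type*} [Group G] [TopologicalSpace G] [IsTopologicalGroup G]

/-- The SIN property. -/
def SIN (G : Type*) [Group G] [TopologicalSpace G] : Prop :=
  ∀ U ∈ 𝓝 (1 : G), ∃ V ∈ 𝓝 (1 : G), ∀ (g : G), ∀ v ∈ V, g * v * g⁻¹ ∈ U

/-- A conjugation-invariant symmetric neighbourhood of `1` inside `U`. -/
def Good (V U : Set G) : Prop :=
  V ∈ 𝓝 (1 : G) ∧ V ⊆ U ∧ (∀ g : G, ∀ v ∈ V, g * v * g⁻¹ ∈ V) ∧ V⁻¹ = V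

theorem exists_good (hSIN : SIN G) {U : Set G} (hU : U ∈ 𝓝 (1 : G)) :
    ∃ V : Set G, Good V U := by
  obtain ⟨V₀, hV₀, hc⟩ := hSIN U hU
  set C : Set G := {x | ∀ g : G, g * x * g⁻¹ ∈ U} with hCdef
  have hC : C ∈ 𝓝 (1 : G) := Filter.mem_of_superset hV₀ (fun v hv g => hc g v hv)
  have hCU : C ⊆ U := by
    intro x hx
    have := hx 1
    simpa using this
  have hCconj : ∀ g : G, ∀ v ∈ C, g * v * g⁻¹ ∈ C := by
    intro g v hv g'
    have h := hv (g' * g)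
    have heq : g' * (g * v * g⁻¹) * g'⁻¹ = (g' * g) * v * (g' * g)⁻¹ := by group
    rw [heq]
    exact h
  refine ⟨C ∩ C⁻¹, Filter.inter_mem hC (inv_mem_nhds_one G hC), fun x hx => hCU hx.1, ?_, ?_⟩
  · rintro g v ⟨hv1, hv2⟩
    refine ⟨hCconj g v hv1, ?_⟩
    have h2 : v⁻¹ ∈ C := Set.mem_inv.mp hv2
    have : g * v⁻¹ * g⁻¹ ∈ C := hCconj g _ h2
    have heq : (g * v * g⁻¹)⁻¹ = g * v⁻¹ * g⁻¹ := by group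
    rw [Set.mem_inv, heq]
    exact this
  · rw [Set.inter_inv, inv_inv, Set.inter_comm]

theorem exists_chain (hSIN : SIN G) {V : Set G} (h1 : V ∈ 𝓝 (1 : G))
    (h2 : ∀ g : G, ∀ v ∈ V, g * v * g⁻¹ ∈ V) (h3 : V⁻¹ = V) :
    ∃ W : ℕ → Set G, W 0 = V ∧ (∀ n, W n ∈ 𝓝 (1 : G)) ∧
      (∀ n, ∀ g : G, ∀ v ∈ W n, g * v * g⁻¹ ∈ W n) ∧ (∀ n, (W n)⁻¹ = W n) ∧
      (∀ n, W (n + 1) * W (n + 1) ⊆ W n) ∧ (∀ n, W (n + 1) ⊆ W n) := by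
  classical
  set P : Set G → Prop := fun S =>
    S ∈ 𝓝 (1 : G) ∧ (∀ g : G, ∀ v ∈ S, g * v * g⁻¹ ∈ S) ∧ S⁻¹ = S with hP
  have step : ∀ S : Set G, P S → ∃ S' : Set G, P S' ∧ S' * S' ⊆ S := by
    intro S hS
    obtain ⟨V₁, hV₁, hsplit⟩ := exists_nhds_one_split hS.1
    obtain ⟨V', hV'⟩ := exists_good hSIN hV₁
    refine ⟨V', ⟨hV'.1, hV'.2.2.1, hV'.2.2.2⟩, ?_⟩
    rintro z ⟨a, ha, b, hb, rfl⟩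
    exact hsplit a (hV'.2.1 ha) b (hV'.2.1 hb)
  set st : Set G → Set G := fun S => if h : P S then (step S h).choose else S with hst
  refine ⟨fun n => st^[n] V, rfl, ?_, ?_, ?_, ?_, ?_⟩ <;>
  · have key : ∀ n, P (st^[n] V) ∧ (st^[n+1] V) * (st^[n+1] V) ⊆ st^[n] V ∧
        st^[n+1] V ⊆ st^[n] V := by
      intro n
      induction n with
      | zero =>
        have hPV : P V := ⟨h1, h2, h3⟩
        have : st^[1] V = st V := by simp
        rw [this, hst]
        simp only [dif_pos hPV]
        refine ⟨hPV, (step V hPV).choose_spec.2, ?_⟩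
        intro x hx
        have h1x : (1 : G) ∈ (step V hPV).choose :=
          mem_of_mem_nhds (step V hPV).choose_spec.1.1
        have := (step V hPV).choose_spec.2 (Set.mul_mem_mul hx h1x)
        simpa using this
      | succ n ih =>
        have hPn : P (st^[n+1] V) := by
          rw [Function.iterate_succ_apply', hst]
          by_cases h : P (st^[n] V)
          · show P (st (st^[n] V)); rw [show st (st^[n] V) = (step _ h).choose from dif_pos h]
            exact ((step _ h).choose_spec.1)
          · exact absurd ih.1 h
        have heq : st^[n+2] V = st (st^[n+1] V) := Function.iterate_succ_apply' st (n+1) V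
        rw [heq, hst]
        show P (st^[n+1] V) ∧ st (st^[n+1] V) * st (st^[n+1] V) ⊆ st^[n+1] V ∧ st (st^[n+1] V) ⊆ st^[n+1] V; rw [show st (st^[n+1] V) = (step _ hPn).choose from dif_pos hPn]
        refine ⟨hPn, (step _ hPn).choose_spec.2, ?_⟩
        intro x hx
        have h1x : (1 : G) ∈ (step _ hPn).choose :=
          mem_of_mem_nhds (step _ hPn).choose_spec.1.1
        have := (step _ hPn).choose_spec.2 (Set.mul_mem_mul hx h1x)
        simpa using this
    first
    | exact fun n => (key n).1.1
    | exact fun n => (key n).1.2.1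
    | exact fun n => (key n).1.2.2
    | exact fun n => (key n).2.1
    | exact fun n => (key n).2.2

private theorem min_tri {a b c : ℝ} (hb : 0 ≤ b) (hc : 0 ≤ c) (h : a ≤ b + c) :
    min a 1 ≤ min b 1 + min c 1 := by
  rcases le_or_gt 1 b with hb1 | hb1
  · have : min b 1 = 1 := min_eq_right hb1
    rw [this]
    have : min c 1 ≥ 0 := le_min hc zero_le_one
    nlinarith [min_le_right a 1]
  · rcases le_or_gt 1 c with hc1 | hc1
    · have : min c 1 = 1 := min_eq_right hc1
      rw [this]
      have : min b 1 ≥ 0 := le_min hb zero_le_one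
      nlinarith [min_le_right a 1]
    · rw [min_eq_left hb1.le, min_eq_left hc1.le]
      exact le_trans (min_le_left a 1) h

theorem exists_dist (hSIN : SIN G) {V : Set G} (h1 : V ∈ 𝓝 (1 : G))
    (h2 : ∀ g : G, ∀ v ∈ V, g * v * g⁻¹ ∈ V) (h3 : V⁻¹ = V) :
    ∃ (D : G → G → ℝ) (del : ℝ), 0 < del ∧
      (∀ x, D x x = 0) ∧ (∀ x y, D x y = D y x) ∧
      (∀ x y z, D x z ≤ D x y + D y z) ∧ (∀ x y, 0 ≤ D x y) ∧ (∀ x y, D x y ≤ 1) ∧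
      (∀ g x y, D (g * x) (g * y) = D x y) ∧ (∀ g x y, D (x * g) (y * g) = D x y) ∧
      (∀ δ : ℝ, 0 < δ → ∃ W ∈ 𝓝 (1 : G), ∀ w ∈ W, D w 1 ≤ δ) ∧
      (∀ x y, D x y < del → x * y⁻¹ ∈ V) := by
  classical
  obtain ⟨W, hW0, hWnhds, hWconj, hWsymm, hWsq, hWsub⟩ := exists_chain hSIN h1 h2 h3
  have hWmono : ∀ m n, m ≤ n → W n ⊆ W m := by
    intro m n h
    induction h with
    | refl => exact subset_rfl
    | step h ih => exact fun x hx => ih (hWsub _ hx)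
  have hW1 : ∀ n, (1 : G) ∈ W n := fun n => mem_of_mem_nhds (hWnhds n)
  set R : ℕ → Set (G × G) := fun n => {p | p.1 * p.2⁻¹ ∈ W n} with hR
  have hRmono : ∀ m n, m ≤ n → R n ⊆ R m := fun m n h p hp => hWmono m n h hp
  set B : FilterBasis (G × G) :=
    { sets := Set.range R
      nonempty := ⟨R 0, ⟨0, rfl⟩⟩
      inter_sets := by
        rintro _ _ ⟨m, rfl⟩ ⟨n, rfl⟩
        exact ⟨R (max m n), ⟨max m n, rfl⟩,
          Set.subset_inter (hRmono _ _ (le_max_left _ _)) (hRmono _ _ (le_max_right _ _))⟩ }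
    with hB
  have hrefl : ∀ r ∈ B, ∀ (x : G), (x, x) ∈ r := by
    rintro r ⟨n, rfl⟩ x
    show x * x⁻¹ ∈ W n
    simpa using hW1 n
  have hsymm : ∀ r ∈ B, ∃ t ∈ B, t ⊆ Prod.swap ⁻¹' r := by
    rintro r ⟨n, rfl⟩
    refine ⟨R n, ⟨n, rfl⟩, ?_⟩
    rintro ⟨x, y⟩ hp
    show y * x⁻¹ ∈ W n
    have : (x * y⁻¹)⁻¹ ∈ (W n)⁻¹ := Set.inv_mem_inv.mpr hp
    rw [hWsymm n] at this
    simpa using this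
  have hcomp : ∀ r ∈ B, ∃ t ∈ B, SetRel.comp t t ⊆ r := by
    rintro r ⟨n, rfl⟩
    refine ⟨R (n + 1), ⟨n + 1, rfl⟩, ?_⟩
    rintro ⟨x, y⟩ ⟨z, hxz, hzy⟩
    show x * y⁻¹ ∈ W n
    have : (x * z⁻¹) * (z * y⁻¹) ∈ W (n + 1) * W (n + 1) := Set.mul_mem_mul hxz hzy
    have h2' := hWsq n this
    have heq : (x * z⁻¹) * (z * y⁻¹) = x * y⁻¹ := by group
    rwa [heq] at h2'
  let core : UniformSpace.Core G := UniformSpace.Core.mkOfBasis B hrefl hsymm hcomp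
  let u : UniformSpace G := UniformSpace.ofCore core
  have hmem : ∀ S : Set (G × G), S ∈ @uniformity G u ↔ ∃ n, R n ⊆ S := by
    intro S
    have : S ∈ B.filter ↔ ∃ t ∈ B, t ⊆ S := FilterBasis.mem_filter_iff B
    rw [show @uniformity G u = B.filter from rfl, this]
    constructor
    · rintro ⟨t, ⟨n, rfl⟩, hts⟩
      exact ⟨n, hts⟩
    · rintro ⟨n, hns⟩
      exact ⟨R n, ⟨n, rfl⟩, hns⟩
  have hb : (@uniformity G u).HasBasis (fun _ : ℕ => True) R := by
    constructor
    intro S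
    rw [hmem S]
    simp
  have hcg : @Filter.IsCountablyGenerated _ (@uniformity G u) := hb.isCountablyGenerated
  obtain ⟨I, hI⟩ := @UniformSpace.metrizable_uniformity G u hcg
  set d : G → G → ℝ := @dist G I.toDist with hd
  have hd_nonneg : ∀ x y, 0 ≤ d x y := fun x y => @dist_nonneg G I x y
  have hd_comm : ∀ x y, d x y = d y x := fun x y => @dist_comm G I x y
  have hd_tri : ∀ x y z, d x z ≤ d x y + d y z := fun x y z => @dist_triangle G I x y z
  have hd_self : ∀ x, d x x = 0 := fun x => @dist_self G I x
  have ha : ∀ ε : ℝ, 0 < ε → ∃ n, ∀ x y : G, x * y⁻¹ ∈ W n → d x y < ε := by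
    intro ε hε
    have h1' : {p : G × G | d p.1 p.2 < ε} ∈ @uniformity G I.toUniformSpace :=
      @Metric.dist_mem_uniformity G I ε hε
    rw [hI] at h1'
    obtain ⟨n, hns⟩ := (hmem _).mp h1'
    refine ⟨n, fun x y hxy => ?_⟩
    have h2 : ((x, y) : G × G) ∈ {p : G × G | d p.1 p.2 < ε} := hns hxy
    simpa using h2
  obtain ⟨δ₀, hδ₀, hball⟩ : ∃ δ₀ > 0, ∀ x y : G, d x y < δ₀ → x * y⁻¹ ∈ W 0 := by
    have hR0 : R 0 ∈ @uniformity G u := (hmem _).mpr ⟨0, subset_rfl⟩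
    rw [← hI] at hR0
    obtain ⟨δ₀, hδ₀, hb2⟩ := (@Metric.mem_uniformity_dist G I (R 0)).mp hR0
    exact ⟨δ₀, hδ₀, fun x y hxy => hb2 hxy⟩
  set DD : G → G → ℝ := fun x y =>
    sSup (Set.range fun p : G × G => min (d (p.1 * x * p.2) (p.1 * y * p.2)) 1) with hDD
  have hbdd : ∀ x y, BddAbove (Set.range fun p : G × G =>
      min (d (p.1 * x * p.2) (p.1 * y * p.2)) 1) := by
    intro x y
    refine ⟨1, ?_⟩
    rintro r ⟨p, rfl⟩
    exact min_le_right _ _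
  have hne : ∀ x y, (Set.range fun p : G × G =>
      min (d (p.1 * x * p.2) (p.1 * y * p.2)) 1).Nonempty := fun x y => Set.range_nonempty _
  have hDD_nonneg : ∀ x y, 0 ≤ DD x y := by
    intro x y
    have h0 : (0 : ℝ) ≤ min (d (1 * x * 1) (1 * y * 1)) 1 := le_min (hd_nonneg _ _) zero_le_one
    exact le_trans h0 (le_csSup (hbdd x y) ⟨(1, 1), rfl⟩)
  have hDD_le_one : ∀ x y, DD x y ≤ 1 := by
    intro x y
    refine csSup_le (hne x y) ?_
    rintro r ⟨p, rfl⟩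
    exact min_le_right _ _
  have hDD_self : ∀ x, DD x x = 0 := by
    intro x
    refine le_antisymm ?_ (hDD_nonneg x x)
    refine csSup_le (hne x x) ?_
    rintro r ⟨p, rfl⟩
    dsimp only
    rw [hd_self]
    simp
  have hDD_comm : ∀ x y, DD x y = DD y x := by
    intro x y
    have : (fun p : G × G => min (d (p.1 * x * p.2) (p.1 * y * p.2)) 1) =
        (fun p : G × G => min (d (p.1 * y * p.2) (p.1 * x * p.2)) 1) := by
      funext p
      rw [hd_comm]
    show sSup _ = sSup _
    rw [this]
  have hDD_tri : ∀ x y z, DD x z ≤ DD x y + DD y z := by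
    intro x y z
    refine csSup_le (hne x z) ?_
    rintro r ⟨p, rfl⟩
    have := min_tri (hd_nonneg (p.1 * x * p.2) (p.1 * y * p.2))
      (hd_nonneg (p.1 * y * p.2) (p.1 * z * p.2)) (hd_tri _ (p.1 * y * p.2) _)
    refine le_trans this (add_le_add ?_ ?_)
    · exact le_csSup (hbdd x y) ⟨p, rfl⟩
    · exact le_csSup (hbdd y z) ⟨p, rfl⟩
  have hDD_left : ∀ g x y, DD (g * x) (g * y) = DD x y := by
    intro g x y
    refine le_antisymm ?_ ?_
    · refine csSup_le (hne _ _) ?_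
      rintro r ⟨p, rfl⟩
      refine le_csSup (hbdd x y) ⟨(p.1 * g, p.2), ?_⟩
      have e1 : p.1 * g * x * p.2 = p.1 * (g * x) * p.2 := by group
      have e2 : p.1 * g * y * p.2 = p.1 * (g * y) * p.2 := by group
      dsimp only
      rw [e1, e2]
    · refine csSup_le (hne _ _) ?_
      rintro r ⟨p, rfl⟩
      refine le_csSup (hbdd _ _) ⟨(p.1 * g⁻¹, p.2), ?_⟩
      have e1 : p.1 * g⁻¹ * (g * x) * p.2 = p.1 * x * p.2 := by group
      have e2 : p.1 * g⁻¹ * (g * y) * p.2 = p.1 * y * p.2 := by group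
      dsimp only
      rw [e1, e2]
  have hDD_right : ∀ g x y, DD (x * g) (y * g) = DD x y := by
    intro g x y
    refine le_antisymm ?_ ?_
    · refine csSup_le (hne _ _) ?_
      rintro r ⟨p, rfl⟩
      refine le_csSup (hbdd x y) ⟨(p.1, g * p.2), ?_⟩
      have e1 : p.1 * x * (g * p.2) = p.1 * (x * g) * p.2 := by group
      have e2 : p.1 * y * (g * p.2) = p.1 * (y * g) * p.2 := by group
      dsimp only
      rw [e1, e2]
    · refine csSup_le (hne _ _) ?_
      rintro r ⟨p, rfl⟩
      refine le_csSup (hbdd _ _) ⟨(p.1, g⁻¹ * p.2), ?_⟩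
      have e1 : p.1 * (x * g) * (g⁻¹ * p.2) = p.1 * x * p.2 := by group
      have e2 : p.1 * (y * g) * (g⁻¹ * p.2) = p.1 * y * p.2 := by group
      dsimp only
      rw [e1, e2]
  have hDD_small : ∀ δ : ℝ, 0 < δ → ∃ Wn ∈ 𝓝 (1 : G), ∀ w ∈ Wn, DD w 1 ≤ δ := by
    intro δ hδ
    obtain ⟨n, hn⟩ := ha δ hδ
    refine ⟨W n, hWnhds n, ?_⟩
    intro w hw
    refine csSup_le (hne _ _) ?_
    rintro r ⟨p, rfl⟩
    dsimp only
    have hmem' : (p.1 * w * p.2) * (p.1 * 1 * p.2)⁻¹ ∈ W n := by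
      have e : (p.1 * w * p.2) * (p.1 * 1 * p.2)⁻¹ = p.1 * w * p.1⁻¹ := by group
      rw [e]
      exact hWconj n p.1 w hw
    exact le_trans (min_le_left _ _) (hn _ _ hmem').le
  refine ⟨DD, min δ₀ 1, lt_min hδ₀ zero_lt_one, hDD_self, hDD_comm, hDD_tri, hDD_nonneg,
    hDD_le_one, hDD_left, hDD_right, hDD_small, ?_⟩
  intro x y hxy
  have helem : min (d x y) 1 ≤ DD x y := by
    refine le_csSup (hbdd x y) ⟨(1, 1), ?_⟩
    dsimp only
    rw [one_mul, mul_one, one_mul, mul_one]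
  have hlt : min (d x y) 1 < min δ₀ 1 := lt_of_le_of_lt helem hxy
  have hdlt : d x y < δ₀ := by
    rcases le_or_gt 1 (d x y) with h | h
    · exfalso
      rw [min_eq_right h] at hlt
      exact absurd hlt (not_lt.mpr (min_le_right δ₀ 1))
    · rw [min_eq_left h.le] at hlt
      exact lt_of_lt_of_le hlt (min_le_left δ₀ 1)
  have := hball x y hdlt
  rwa [hW0] at this

theorem exists_cover (H : Subgroup G) (hcomp : CompactSpace (G ⧸ H)) {D : G → G → ℝ}
    (hleft : ∀ g x y : G, D (g * x) (g * y) = D x y)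
    (hright : ∀ g x y : G, D (x * g) (y * g) = D x y)
    {r : ℝ} (hW : ∃ W ∈ 𝓝 (1 : G), ∀ w ∈ W, D w 1 ≤ r) :
    ∃ T : Finset G, ∀ x : G, ∃ u ∈ T, ∃ h ∈ (H : Set G), D x (h * u) ≤ r := by
  classical
  obtain ⟨W, hWmem, hWr⟩ := hW
  set O : Set G := interior W with hO
  have hOopen : IsOpen O := isOpen_interior
  have h1O : (1 : G) ∈ O := mem_interior_iff_mem_nhds.mpr hWmem
  set π : G → G ⧸ H := QuotientGroup.mk with hπ
  set S : G → Set (G ⧸ H) := fun u => π '' ((fun z => (u * z)⁻¹) ⁻¹' O) with hS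
  have hSopen : ∀ u, IsOpen (S u) := by
    intro u
    refine QuotientGroup.isOpenMap_coe _ ?_
    exact hOopen.preimage (by continuity)
  have hScover : (Set.univ : Set (G ⧸ H)) ⊆ ⋃ u : G, S u := by
    rintro q -
    obtain ⟨y, rfl⟩ := QuotientGroup.mk_surjective q
    refine Set.mem_iUnion.mpr ⟨y⁻¹, ⟨y, ?_, rfl⟩⟩
    show (y⁻¹ * y)⁻¹ ∈ O
    simpa using h1O
  obtain ⟨T, hT⟩ := isCompact_univ.elim_finite_subcover S hSopen hScover
  refine ⟨T, ?_⟩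
  intro x
  have hx : π x⁻¹ ∈ ⋃ u ∈ T, S u := hT (Set.mem_univ _)
  obtain ⟨u, hu, z, hz, hzx⟩ := by
    simpa only [Set.mem_iUnion, Set.mem_image] using hx
  refine ⟨u, hu, ?_⟩
  have hzH : z⁻¹ * x⁻¹ ∈ H := QuotientGroup.eq.mp hzx
  set w : G := (u * z)⁻¹ with hw
  have hwO : w ∈ O := hz
  set h : G := (z⁻¹ * x⁻¹)⁻¹ with hh
  have hhH : h ∈ H := H.inv_mem hzH
  refine ⟨h, hhH, ?_⟩
  have hxeq : x = h * w * u := by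
    rw [hh, hw]
    group
  rw [hxeq]
  have e1 : D (h * w * u) (h * u) = D (w * u) u := by
    have : h * w * u = h * (w * u) := by group
    rw [this, hleft h (w * u) u]
  have e2 : D (w * u) u = D w 1 := by
    have : (u : G) = 1 * u := by group
    calc D (w * u) u = D (w * u) (1 * u) := by rw [← this]
    _ = D w 1 := hright u w 1
  rw [e1, e2]
  exact hWr w (interior_subset hwO)

/-- All data needed for the approximate extension operator at scale `V`. -/
structure Sys {G : Type*} [Group G] [TopologicalSpace G] (H : Subgroup G) (V : Set G) where
  V_mem : V ∈ 𝓝 (1 : G)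
  V_conj : ∀ g : G, ∀ v ∈ V, g * v * g⁻¹ ∈ V
  V_symm : V⁻¹ = V
  D : G → G → ℝ
  del : ℝ
  T : Finset G
  del_pos : 0 < del
  D_self : ∀ x, D x x = 0
  D_symm : ∀ x y, D x y = D y x
  D_tri : ∀ x y z, D x z ≤ D x y + D y z
  D_nonneg : ∀ x y, 0 ≤ D x y
  D_bdd : ∀ x y, D x y ≤ 1
  D_left : ∀ g x y, D (g * x) (g * y) = D x y
  D_right : ∀ g x y, D (x * g) (y * g) = D x y
  D_small : ∀ δ : ℝ, 0 < δ → ∃ W ∈ 𝓝 (1 : G), ∀ w ∈ W, D w 1 ≤ δ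
  D_sep : ∀ x y, D x y < del → x * y⁻¹ ∈ V
  cover : ∀ x : G, ∃ u ∈ T, ∃ h ∈ (H : Set G), D x (h * u) ≤ del / 8

theorem exists_sys (hSIN : SIN G) (H : Subgroup G) (hcomp : CompactSpace (G ⧸ H))
    {V : Set G} (h1 : V ∈ 𝓝 (1 : G)) (h2 : ∀ g : G, ∀ v ∈ V, g * v * g⁻¹ ∈ V)
    (h3 : V⁻¹ = V) : Nonempty (Sys H V) := by
  obtain ⟨D, del, hdel, hself, hsymm, htri, hnonneg, hbdd, hleft, hright, hsmall, hsep⟩ :=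
    exists_dist hSIN h1 h2 h3
  obtain ⟨T, hT⟩ := exists_cover H hcomp hleft hright (hsmall (del / 8) (by linarith))
  exact ⟨⟨h1, h2, h3, D, del, T, hdel, hself, hsymm, htri, hnonneg, hbdd, hleft, hright,
    hsmall, hsep, hT⟩⟩

section PartitionOfUnity

variable {H : Subgroup G} {V : Set G}

/-- Distance from `x` to the set `H * u`. -/
noncomputable def dst (s : Sys H V) (u x : G) : ℝ :=
  sInf ((fun h : G => s.D x (h * u)) '' (H : Set G))

theorem dst_set_nonempty (s : Sys H V) (u x : G) :
    ((fun h : G => s.D x (h * u)) '' (H : Set G)).Nonempty :=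
  ⟨s.D x (1 * u), ⟨1, H.one_mem, rfl⟩⟩

theorem dst_set_bdd (s : Sys H V) (u x : G) :
    BddBelow ((fun h : G => s.D x (h * u)) '' (H : Set G)) := by
  refine ⟨0, ?_⟩
  rintro b ⟨h, hh, rfl⟩
  exact s.D_nonneg _ _

theorem dst_nonneg (s : Sys H V) (u x : G) : 0 ≤ dst s u x := by
  refine le_csInf (dst_set_nonempty s u x) ?_
  rintro b ⟨h, hh, rfl⟩
  exact s.D_nonneg _ _

theorem dst_le (s : Sys H V) {u x h : G} (hh : h ∈ H) : dst s u x ≤ s.D x (h * u) :=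
  csInf_le (dst_set_bdd s u x) ⟨h, hh, rfl⟩

theorem dst_lt (s : Sys H V) {u x : G} {r : ℝ} (h : dst s u x < r) :
    ∃ h' ∈ (H : Set G), s.D x (h' * u) < r := by
  obtain ⟨b, ⟨h', hh', rfl⟩, hb⟩ :=
    (csInf_lt_iff (dst_set_bdd s u x) (dst_set_nonempty s u x)).mp h
  exact ⟨h', hh', hb⟩

theorem dst_lip (s : Sys H V) (u x y : G) : dst s u x ≤ s.D x y + dst s u y := by
  have key : ∀ b ∈ (fun h : G => s.D y (h * u)) '' (H : Set G), dst s u x - s.D x y ≤ b := by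
    rintro b ⟨h, hh, rfl⟩
    have h1 : dst s u x ≤ s.D x (h * u) := dst_le s hh
    have h2 : s.D x (h * u) ≤ s.D x y + s.D y (h * u) := s.D_tri _ _ _
    linarith
  have := le_csInf (dst_set_nonempty s u y) key
  have h3 : dst s u x - s.D x y ≤ dst s u y := this
  linarith

theorem dst_abs_lip (s : Sys H V) (u x y : G) : |dst s u x - dst s u y| ≤ s.D x y := by
  rw [abs_le]
  constructor
  · have := dst_lip s u y x
    rw [s.D_symm y x] at this
    linarith
  · have := dst_lip s u x y
    linarith

theorem dst_Hinv (s : Sys H V) {h₀ : G} (hh0 : h₀ ∈ H) (u x : G) :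
    dst s u (h₀ * x) = dst s u x := by
  unfold dst
  congr 1
  ext r
  constructor
  · rintro ⟨h, hh, rfl⟩
    refine ⟨h₀⁻¹ * h, H.mul_mem (H.inv_mem hh0) hh, ?_⟩
    dsimp only
    rw [← s.D_left h₀ x (h₀⁻¹ * h * u)]
    congr 1
    group
  · rintro ⟨h, hh, rfl⟩
    refine ⟨h₀ * h, H.mul_mem hh0 hh, ?_⟩
    dsimp only
    rw [← s.D_left h₀ x (h * u)]
    congr 1
    group

/-- The bump function attached to `u`. -/
noncomputable def psi (s : Sys H V) (u x : G) : ℝ :=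
  max (1 - (4 / s.del) * dst s u x) 0

theorem psi_nonneg (s : Sys H V) (u x : G) : 0 ≤ psi s u x := le_max_right _ _

theorem psi_le_one (s : Sys H V) (u x : G) : psi s u x ≤ 1 := by
  have h1 : 0 ≤ (4 / s.del) * dst s u x :=
    mul_nonneg (div_nonneg (by norm_num) s.del_pos.le) (dst_nonneg s u x)
  exact max_le (by linarith) zero_le_one

theorem psi_lip (s : Sys H V) (u x y : G) :
    |psi s u x - psi s u y| ≤ (4 / s.del) * s.D x y := by
  have h1 : |psi s u x - psi s u y| ≤
      |(1 - (4 / s.del) * dst s u x) - (1 - (4 / s.del) * dst s u y)| := by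
    have := abs_max_sub_max_le_max (1 - (4 / s.del) * dst s u x) 0
      (1 - (4 / s.del) * dst s u y) 0
    simpa [psi] using this
  have h2 : (1 - (4 / s.del) * dst s u x) - (1 - (4 / s.del) * dst s u y) =
      (4 / s.del) * (dst s u y - dst s u x) := by ring
  rw [h2, abs_mul,
    abs_of_nonneg (div_nonneg (by norm_num) s.del_pos.le : (0:ℝ) ≤ 4 / s.del)] at h1
  refine le_trans h1 ?_
  have h3 : |dst s u y - dst s u x| ≤ s.D x y := by
    have := dst_abs_lip s u y x
    rwa [s.D_symm y x] at this
  exact mul_le_mul_of_nonneg_left h3 (div_nonneg (by norm_num) s.del_pos.le)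

theorem psi_Hinv (s : Sys H V) {h₀ : G} (hh0 : h₀ ∈ H) (u x : G) :
    psi s u (h₀ * x) = psi s u x := by
  unfold psi
  rw [dst_Hinv s hh0]

theorem psi_big (s : Sys H V) {u x : G} (h : dst s u x ≤ s.del / 8) :
    1 / 2 ≤ psi s u x := by
  have hd := s.del_pos
  have hne : s.del ≠ 0 := ne_of_gt hd
  have h1 : (4 / s.del) * dst s u x ≤ (4 / s.del) * (s.del / 8) :=
    mul_le_mul_of_nonneg_left h (div_nonneg (by norm_num) hd.le)
  have h2 : (4 / s.del) * (s.del / 8) = 1 / 2 := by field_simp <;> norm_num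
  have : 1 / 2 ≤ 1 - (4 / s.del) * dst s u x := by rw [h2] at h1; linarith
  exact le_trans this (le_max_left _ _)

theorem psi_pos_dst (s : Sys H V) {u x : G} (h : 0 < psi s u x) :
    dst s u x < s.del / 4 := by
  by_contra hcon
  push_neg at hcon
  have hd := s.del_pos
  have hne : s.del ≠ 0 := ne_of_gt hd
  have h1 : (4 / s.del) * (s.del / 4) ≤ (4 / s.del) * dst s u x :=
    mul_le_mul_of_nonneg_left hcon (div_nonneg (by norm_num) hd.le)
  have h2 : (4 / s.del) * (s.del / 4) = 1 := by field_simp <;> norm_num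
  have h3 : 1 - (4 / s.del) * dst s u x ≤ 0 := by rw [h2] at h1; linarith
  have : psi s u x = 0 := max_eq_right h3
  rw [this] at h
  exact lt_irrefl _ h

/-- Total mass. -/
noncomputable def sig (s : Sys H V) (x : G) : ℝ := ∑ u ∈ s.T, psi s u x

theorem sig_half (s : Sys H V) (x : G) : 1 / 2 ≤ sig s x := by
  obtain ⟨u, hu, h, hh, hD⟩ := s.cover x
  have h1 : dst s u x ≤ s.del / 8 := le_trans (dst_le s hh) hD
  have h2 : 1 / 2 ≤ psi s u x := psi_big s h1
  have h3 : psi s u x ≤ sig s x :=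
    Finset.single_le_sum (fun i _ => psi_nonneg s i x) hu
  linarith

theorem sig_pos (s : Sys H V) (x : G) : 0 < sig s x :=
  lt_of_lt_of_le (by norm_num) (sig_half s x)

theorem sig_le_card (s : Sys H V) (x : G) : sig s x ≤ s.T.card := by
  have := Finset.sum_le_card_nsmul s.T (fun u => psi s u x) 1
    (fun u _ => psi_le_one s u x)
  simpa [sig] using this

theorem sig_lip (s : Sys H V) (x y : G) :
    |sig s x - sig s y| ≤ (s.T.card : ℝ) * ((4 / s.del) * s.D x y) := by
  unfold sig
  rw [← Finset.sum_sub_distrib]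
  refine le_trans (Finset.abs_sum_le_sum_abs _ _) ?_
  have := Finset.sum_le_card_nsmul s.T (fun u => |psi s u x - psi s u y|)
    ((4 / s.del) * s.D x y) (fun u _ => psi_lip s u x y)
  simpa [nsmul_eq_mul] using this

theorem sig_Hinv (s : Sys H V) {h₀ : G} (hh0 : h₀ ∈ H) (x : G) :
    sig s (h₀ * x) = sig s x := by
  unfold sig
  exact Finset.sum_congr rfl fun u _ => psi_Hinv s hh0 u x

/-- The partition of unity. -/
noncomputable def ww (s : Sys H V) (u x : G) : ℝ := psi s u x / sig s x

theorem ww_nonneg (s : Sys H V) (u x : G) : 0 ≤ ww s u x :=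
  div_nonneg (psi_nonneg s u x) (sig_pos s x).le

theorem ww_sum (s : Sys H V) (x : G) : ∑ u ∈ s.T, ww s u x = 1 := by
  unfold ww
  rw [← Finset.sum_div]
  exact div_self (sig_pos s x).ne'

theorem ww_Hinv (s : Sys H V) {h₀ : G} (hh0 : h₀ ∈ H) (u x : G) :
    ww s u (h₀ * x) = ww s u x := by
  unfold ww
  rw [psi_Hinv s hh0, sig_Hinv s hh0]

theorem ww_lip (s : Sys H V) (u x y : G) :
    |ww s u x - ww s u y| ≤ (4 / s.del) * (2 + 4 * s.T.card) * s.D x y := by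
  have hd := s.del_pos
  set a := psi s u x with hA
  set b := sig s x with hB
  set c := psi s u y with hC
  set d := sig s y with hD2
  have hb : 1 / 2 ≤ b := sig_half s x
  have hdd : 1 / 2 ≤ d := sig_half s y
  have hb0 : 0 < b := by linarith
  have hd0 : 0 < d := by linarith
  have hc0 : 0 ≤ c := psi_nonneg s u y
  have hc1 : c ≤ 1 := psi_le_one s u y
  have hP : |a - c| ≤ (4 / s.del) * s.D x y := psi_lip s u x y
  have hQ : |d - b| ≤ (s.T.card : ℝ) * ((4 / s.del) * s.D x y) := by
    have := sig_lip s y x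
    rwa [s.D_symm y x] at this
  have key : a / b - c / d = (a - c) / b + c * (d - b) / (d * b) := by
    field_simp
    ring
  have habs : |ww s u x - ww s u y| ≤ |a - c| / b + c * |d - b| / (d * b) := by
    unfold ww
    rw [← hA, ← hB, ← hC, ← hD2, key]
    refine le_trans (abs_add_le _ _) ?_
    have e1 : |(a - c) / b| = |a - c| / b := by
      rw [abs_div, abs_of_pos hb0]
    have e2 : |c * (d - b) / (d * b)| = c * |d - b| / (d * b) := by
      rw [abs_div, abs_mul, abs_of_nonneg hc0, abs_of_pos (mul_pos hd0 hb0)]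
    rw [e1, e2]
  have h1 : |a - c| / b ≤ 2 * |a - c| := by
    rw [div_le_iff₀ hb0]
    nlinarith [abs_nonneg (a - c)]
  have h2 : c * |d - b| / (d * b) ≤ 4 * |d - b| := by
    rw [div_le_iff₀ (mul_pos hd0 hb0)]
    have habsnn := abs_nonneg (d - b)
    have hkey : 0 ≤ |d - b| * (4 * (d * b) - c) := mul_nonneg habsnn (by nlinarith)
    nlinarith [hkey]
  have hDnn : 0 ≤ s.D x y := s.D_nonneg x y
  have : |ww s u x - ww s u y| ≤ 2 * |a - c| + 4 * |d - b| := by linarith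
  refine le_trans this ?_
  have hcard : (0:ℝ) ≤ s.T.card := Nat.cast_nonneg _
  nlinarith

/-- The selection relation: `h` is an `H`-coordinate of `x` relative to base point `u`. -/
def Sel (H : Subgroup G) (V : Set G) (u x h : G) : Prop :=
  h ∈ H ∧ ∃ v ∈ V, x = h * v * u

theorem sel_exists (s : Sys H V) {u x : G} (hd : dst s u x < s.del) :
    ∃ h, Sel H V u x h := by
  obtain ⟨h, hh, hD⟩ := dst_lt s hd
  have hv0 : x * (h * u)⁻¹ ∈ V := s.D_sep x (h * u) hD
  refine ⟨h, hh, h⁻¹ * (x * (h * u)⁻¹) * h, ?_, ?_⟩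
  · have := s.V_conj h⁻¹ _ hv0
    simpa using this
  · group

theorem sel_comp (s : Sys H V) {u x a b : G} (ha : Sel H V u x a) (hb : Sel H V u x b) :
    a * b⁻¹ ∈ V * V := by
  obtain ⟨haH, v, hv, hxa⟩ := ha
  obtain ⟨hbH, v', hv', hxb⟩ := hb
  have heq : a * v * u = b * v' * u := by rw [← hxa, ← hxb]
  have heq2 : a * v = b * v' := mul_right_cancel heq
  have hb2 : b = a * v * v'⁻¹ := by rw [heq2]; group
  have hvinv : v⁻¹ ∈ V := by
    rw [← s.V_symm]
    exact Set.inv_mem_inv.mpr hv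
  have hm1 : a * v' * a⁻¹ ∈ V := s.V_conj a v' hv'
  have hm2 : a * v⁻¹ * a⁻¹ ∈ V := s.V_conj a v⁻¹ hvinv
  rw [hb2]
  refine Set.mem_mul.mpr ⟨a * v' * a⁻¹, hm1, a * v⁻¹ * a⁻¹, hm2, ?_⟩
  group

theorem sel_mid (s : Sys H V) {u x a b v₁ : G} (hv1 : v₁ ∈ V)
    (ha : Sel H V u x a) (hb : Sel H V u (v₁ * x) b) : b * a⁻¹ ∈ V * V * V := by
  obtain ⟨haH, v, hv, hxa⟩ := ha
  obtain ⟨hbH, v', hv', hxb⟩ := hb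
  have heq : v₁ * (a * v * u) = b * v' * u := by rw [← hxa]; exact hxb
  have heq' : (v₁ * a * v) * u = (b * v') * u := by
    rw [← heq]; group
  have heq2 : v₁ * a * v = b * v' := mul_right_cancel heq'
  have hb2 : b = v₁ * a * v * v'⁻¹ := by rw [heq2]; group
  have hvinv : v'⁻¹ ∈ V := by
    rw [← s.V_symm]
    exact Set.inv_mem_inv.mpr hv'
  have hm1 : a * v * a⁻¹ ∈ V := s.V_conj a v hv
  have hm2 : a * v'⁻¹ * a⁻¹ ∈ V := s.V_conj a v'⁻¹ hvinv
  have hm12 : v₁ * (a * v * a⁻¹) ∈ V * V := Set.mem_mul.mpr ⟨v₁, hv1, _, hm1, rfl⟩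
  rw [hb2]
  refine Set.mem_mul.mpr ⟨v₁ * (a * v * a⁻¹), hm12, a * v'⁻¹ * a⁻¹, hm2, ?_⟩
  group

theorem sel_left {u x a h₀ : G} (hh0 : h₀ ∈ H) (ha : Sel H V u x a) :
    Sel H V u (h₀ * x) (h₀ * a) := by
  obtain ⟨haH, v, hv, hxa⟩ := ha
  exact ⟨H.mul_mem hh0 haH, v, hv, by rw [hxa]; group⟩

/-- A choice of `H`-coordinate. -/
noncomputable def eta (H : Subgroup G) (V : Set G) (u x : G) : ↥H :=
  @dite _ (∃ h, Sel H V u x h) (Classical.dec _)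
    (fun hc => ⟨hc.choose, hc.choose_spec.1⟩) (fun _ => 1)

theorem eta_spec {u x : G} (hc : ∃ h, Sel H V u x h) :
    Sel H V u x ↑(eta H V u x) := by
  unfold eta
  rw [dif_pos hc]
  exact hc.choose_spec

end PartitionOfUnity

section Extension

variable {H : Subgroup G} {V : Set G}

/-- Oscillation certificate for `f` at scale `S`. -/
def osc (f : ↥H → ℝ) (S : Set G) (ε : ℝ) : Prop :=
  ∀ (z h : ↥H), (z : G) ∈ S → |f (z * h) - f h| ≤ ε

theorem osc_apply {f : ↥H → ℝ} {S : Set G} {ε : ℝ} (hosc : osc f S ε)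
    {a b : ↥H} (h : (↑a * (↑b)⁻¹ : G) ∈ S) : |f a - f b| ≤ ε := by
  have h1 : ((a * b⁻¹ : ↥H) : G) = (↑a * (↑b)⁻¹ : G) := by push_cast; ring
  have h2 : (a * b⁻¹) * b = a := by group
  have := hosc (a * b⁻¹) b (by rw [h1]; exact h)
  rwa [h2] at this

theorem osc_mono {f : ↥H → ℝ} {S S' : Set G} {ε ε' : ℝ} (hS : S' ⊆ S) (hε : ε ≤ ε')
    (hosc : osc f S ε) : osc f S' ε' :=
  fun z h hz => le_trans (hosc z h (hS hz)) hε

/-- The extension operator. -/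
noncomputable def EE (s : Sys H V) (f : ↥H → ℝ) (x : G) : ℝ :=
  ∑ u ∈ s.T, ww s u x * f (eta H V u x)

theorem EE_bound (s : Sys H V) {f : ↥H → ℝ} {C : ℝ} (hC : ∀ h, |f h| ≤ C) (x : G) :
    |EE s f x| ≤ C := by
  refine le_trans (Finset.abs_sum_le_sum_abs _ _) ?_
  have h1 : ∀ u ∈ s.T, |ww s u x * f (eta H V u x)| ≤ ww s u x * C := by
    intro u _
    rw [abs_mul, abs_of_nonneg (ww_nonneg s u x)]
    exact mul_le_mul_of_nonneg_left (hC _) (ww_nonneg s u x)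
  refine le_trans (Finset.sum_le_sum h1) ?_
  rw [← Finset.sum_mul, ww_sum, one_mul]

theorem EE_add (s : Sys H V) (f g : ↥H → ℝ) (x : G) :
    EE s (fun h => f h + g h) x = EE s f x + EE s g x := by
  unfold EE
  rw [← Finset.sum_add_distrib]
  exact Finset.sum_congr rfl fun u _ => by ring

theorem EE_smul (s : Sys H V) (c : ℝ) (f : ↥H → ℝ) (x : G) :
    EE s (fun h => c * f h) x = c * EE s f x := by
  unfold EE
  rw [Finset.mul_sum]
  exact Finset.sum_congr rfl fun u _ => by ring

theorem EE_one (s : Sys H V) (x : G) : EE s (fun _ => (1 : ℝ)) x = 1 := by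
  unfold EE
  simp only [mul_one]
  exact ww_sum s x

theorem EE_nonneg (s : Sys H V) {f : ↥H → ℝ} (hf : ∀ h, 0 ≤ f h) (x : G) :
    0 ≤ EE s f x :=
  Finset.sum_nonneg fun u _ => mul_nonneg (ww_nonneg s u x) (hf _)

theorem psi_eq_ww_mul_sig (s : Sys H V) (u x : G) :
    psi s u x = ww s u x * sig s x := by
  unfold ww
  rw [div_mul_cancel₀]
  exact (sig_pos s x).ne'

theorem ww_pos_dst (s : Sys H V) {u x : G} (h : ww s u x ≠ 0) :
    dst s u x < s.del / 4 := by
  have hwpos : 0 < ww s u x := lt_of_le_of_ne (ww_nonneg s u x) (Ne.symm h)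
  have hpsipos : 0 < psi s u x := by
    rw [psi_eq_ww_mul_sig s u x]
    exact mul_pos hwpos (sig_pos s x)
  exact psi_pos_dst s hpsipos

theorem EE_mod (s : Sys H V) {f : ↥H → ℝ} {C ε : ℝ} (hC : ∀ h, |f h| ≤ C)
    (hosc : osc f (V * V * V) ε) {v x : G} (hv : s.D v 1 ≤ s.del / 4) :
    |EE s f (v * x) - EE s f x| ≤
      ((s.T.card : ℝ) * ((4 / s.del) * (2 + 4 * s.T.card)) * C) * s.D v 1 + ε := by
  have hdel := s.del_pos
  have hC0 : 0 ≤ C := le_trans (abs_nonneg _) (hC 1)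
  have hvV : v ∈ V := by
    have h1 : s.D v 1 < s.del := by linarith
    have := s.D_sep v 1 h1
    simpa using this
  have hDvx : s.D (v * x) x = s.D v 1 := by
    have := s.D_right x v 1
    simpa using this
  have hterm : ∀ u ∈ s.T,
      |ww s u (v * x) * f (eta H V u (v * x)) - ww s u x * f (eta H V u x)| ≤
        |ww s u (v * x) - ww s u x| * C + ww s u x * ε := by
    intro u _
    have e : ww s u (v * x) * f (eta H V u (v * x)) - ww s u x * f (eta H V u x) =
        (ww s u (v * x) - ww s u x) * f (eta H V u (v * x)) +
          ww s u x * (f (eta H V u (v * x)) - f (eta H V u x)) := by ring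
    rw [e]
    refine le_trans (abs_add_le _ _) (add_le_add ?_ ?_)
    · rw [abs_mul]
      exact mul_le_mul_of_nonneg_left (hC _) (abs_nonneg _)
    · by_cases hwz : ww s u x = 0
      · rw [hwz]
        simp
      · rw [abs_mul, abs_of_nonneg (ww_nonneg s u x)]
        refine mul_le_mul_of_nonneg_left ?_ (ww_nonneg s u x)
        have hdx : dst s u x < s.del / 4 := ww_pos_dst s hwz
        have hdvx : dst s u (v * x) < s.del := by
          have h1 : dst s u (v * x) ≤ s.D (v * x) x + dst s u x := dst_lip s u (v * x) x
          rw [hDvx] at h1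
          linarith
        have hcx : ∃ h, Sel H V u x h := sel_exists s (by linarith : dst s u x < s.del)
        have hcvx : ∃ h, Sel H V u (v * x) h := sel_exists s hdvx
        have hmid := sel_mid s hvV (eta_spec hcx) (eta_spec hcvx)
        exact osc_apply hosc hmid
  have hstep1 : |EE s f (v * x) - EE s f x| ≤
      ∑ u ∈ s.T, (|ww s u (v * x) - ww s u x| * C + ww s u x * ε) := by
    unfold EE
    rw [← Finset.sum_sub_distrib]
    exact le_trans (Finset.abs_sum_le_sum_abs _ _) (Finset.sum_le_sum hterm)
  rw [Finset.sum_add_distrib, ← Finset.sum_mul, ← Finset.sum_mul, ww_sum, one_mul] at hstep1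
  have hsum : (∑ u ∈ s.T, |ww s u (v * x) - ww s u x|) ≤
      (s.T.card : ℝ) * ((4 / s.del) * (2 + 4 * s.T.card) * s.D v 1) := by
    have h1 : ∀ u ∈ s.T, |ww s u (v * x) - ww s u x| ≤
        (4 / s.del) * (2 + 4 * s.T.card) * s.D v 1 := by
      intro u _
      have := ww_lip s u (v * x) x
      rwa [hDvx] at this
    have := Finset.sum_le_card_nsmul s.T _ _ h1
    simpa [nsmul_eq_mul] using this
  have hfin : (∑ u ∈ s.T, |ww s u (v * x) - ww s u x|) * C ≤
      (s.T.card : ℝ) * ((4 / s.del) * (2 + 4 * s.T.card) * s.D v 1) * C :=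
    mul_le_mul_of_nonneg_right hsum hC0
  have hgoal : (s.T.card : ℝ) * ((4 / s.del) * (2 + 4 * s.T.card) * s.D v 1) * C =
      ((s.T.card : ℝ) * ((4 / s.del) * (2 + 4 * s.T.card)) * C) * s.D v 1 := by ring
  rw [hgoal] at hfin
  linarith

theorem EE_trans (s : Sys H V) {f : ↥H → ℝ} {ε : ℝ} (hosc : osc f (V * V * V) ε)
    (hε : 0 ≤ ε) (h₀ : ↥H) (x : G) :
    |EE s (fun h => f (h₀ * h)) x - EE s f (↑h₀ * x)| ≤ ε := by
  have h1V : (1 : G) ∈ V := mem_of_mem_nhds s.V_mem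
  have hVV : V * V ⊆ V * V * V := by
    intro z hz
    exact Set.mem_mul.mpr ⟨z, hz, 1, h1V, mul_one z⟩
  have hEE2 : EE s f (↑h₀ * x) = ∑ u ∈ s.T, ww s u x * f (eta H V u (↑h₀ * x)) := by
    unfold EE
    exact Finset.sum_congr rfl fun u _ => by rw [ww_Hinv s h₀.2]
  rw [hEE2]
  unfold EE
  rw [← Finset.sum_sub_distrib]
  refine le_trans (Finset.abs_sum_le_sum_abs _ _) ?_
  have hterm : ∀ u ∈ s.T,
      |ww s u x * f (h₀ * eta H V u x) - ww s u x * f (eta H V u (↑h₀ * x))| ≤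
        ww s u x * ε := by
    intro u _
    have e : ww s u x * f (h₀ * eta H V u x) - ww s u x * f (eta H V u (↑h₀ * x)) =
        ww s u x * (f (h₀ * eta H V u x) - f (eta H V u (↑h₀ * x))) := by ring
    rw [e, abs_mul, abs_of_nonneg (ww_nonneg s u x)]
    by_cases hwz : ww s u x = 0
    · rw [hwz]
      simp
    · refine mul_le_mul_of_nonneg_left ?_ (ww_nonneg s u x)
      have hdx : dst s u x < s.del / 4 := ww_pos_dst s hwz
      have hdel := s.del_pos
      have hcx : ∃ h, Sel H V u x h := sel_exists s (by linarith : dst s u x < s.del)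
      have hselh : Sel H V u (↑h₀ * x) (↑h₀ * ↑(eta H V u x)) :=
        sel_left h₀.2 (eta_spec hcx)
      have hchx : ∃ h, Sel H V u (↑h₀ * x) h := ⟨_, hselh⟩
      have hcomp := sel_comp s hselh (eta_spec hchx)
      have hcoe : ((h₀ * eta H V u x : ↥H) : G) = ↑h₀ * ↑(eta H V u x) := by push_cast; ring
      have hmem : ((h₀ * eta H V u x : ↥H) : G) * (↑(eta H V u (↑h₀ * x)) : G)⁻¹ ∈
          V * V * V := by
        rw [hcoe]
        exact hVV hcomp
      exact osc_apply (osc_mono (le_refl _) (le_refl _) hosc) hmem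
  refine le_trans (Finset.sum_le_sum hterm) ?_
  rw [← Finset.sum_mul, ww_sum, one_mul]

end Extension

section Mollify

variable {H : Subgroup G} {V : Set G}

theorem D_vx (s : Sys H V) (v x : G) : s.D (v * x) x = s.D v 1 := by
  have := s.D_right x v 1
  simpa using this

/-- Lipschitz mollification of `F` at scale `K`. -/
noncomputable def MM (s : Sys H V) (F : G → ℝ) (K : ℝ) (x : G) : ℝ :=
  sInf (Set.range fun y => F y + K * s.D y x)

theorem MM_bdd (s : Sys H V) {F : G → ℝ} {K B : ℝ} (hK : 0 ≤ K) (hB : ∀ x, |F x| ≤ B)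
    (x : G) : BddBelow (Set.range fun y => F y + K * s.D y x) := by
  refine ⟨-B, ?_⟩
  rintro r ⟨y, rfl⟩
  have h1 := (abs_le.mp (hB y)).1
  have h2 : 0 ≤ K * s.D y x := mul_nonneg hK (s.D_nonneg y x)
  dsimp only
  linarith

theorem MM_le (s : Sys H V) {F : G → ℝ} {K B : ℝ} (hK : 0 ≤ K) (hB : ∀ x, |F x| ≤ B)
    (x : G) : MM s F K x ≤ F x := by
  refine csInf_le (MM_bdd s hK hB x) ⟨x, ?_⟩
  dsimp only
  rw [s.D_self x, mul_zero, add_zero]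

theorem MM_ge (s : Sys H V) {F : G → ℝ} {K B A ω r : ℝ} (hK : 0 ≤ K)
    (hB : ∀ x, |F x| ≤ B)
    (hmod : ∀ x v : G, s.D v 1 < r → |F (v * x) - F x| ≤ A * s.D v 1 + ω)
    (hr : 0 < r) (hω : 0 ≤ ω) (hA : A ≤ K) (hK2 : 2 * B ≤ K * r) (x : G) :
    F x - ω ≤ MM s F K x := by
  refine le_csInf (Set.range_nonempty _) ?_
  rintro b ⟨y, rfl⟩
  dsimp only
  rcases lt_or_ge (s.D y x) r with hlt | hge
  · set v : G := y * x⁻¹ with hv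
    have hyx : v * x = y := by rw [hv]; group
    have hDv : s.D v 1 = s.D y x := by rw [← hyx, D_vx]
    have h1 := hmod x v (by rw [hDv]; exact hlt)
    rw [hyx, hDv] at h1
    have h2 := (abs_le.mp h1).1
    have h3 : A * s.D y x ≤ K * s.D y x :=
      mul_le_mul_of_nonneg_right hA (s.D_nonneg y x)
    linarith
  · have h1 : K * r ≤ K * s.D y x := mul_le_mul_of_nonneg_left hge hK
    have h2 := (abs_le.mp (hB y)).1
    have h3 := (abs_le.mp (hB x)).2
    linarith

theorem MM_lip (s : Sys H V) {F : G → ℝ} {K B : ℝ} (hK : 0 ≤ K) (hB : ∀ x, |F x| ≤ B)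
    (x x' : G) : |MM s F K x - MM s F K x'| ≤ K * s.D x x' := by
  have key : ∀ a b : G, MM s F K a ≤ MM s F K b + K * s.D b a := by
    intro a b
    have h2 : ∀ z ∈ Set.range fun y => F y + K * s.D y b,
        MM s F K a - K * s.D b a ≤ z := by
      rintro z ⟨y, rfl⟩
      dsimp only
      have h3 : MM s F K a ≤ F y + K * s.D y a := csInf_le (MM_bdd s hK hB a) ⟨y, rfl⟩
      have h4 : s.D y a ≤ s.D y b + s.D b a := s.D_tri y b a
      have h5 : K * s.D y a ≤ K * (s.D y b + s.D b a) :=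
        mul_le_mul_of_nonneg_left h4 hK
      rw [mul_add] at h5
      linarith
    have h6 : MM s F K a - K * s.D b a ≤ MM s F K b := le_csInf (Set.range_nonempty _) h2
    linarith
  rw [abs_le]
  constructor
  · have h7 := key x' x
    linarith
  · have h7 := key x x'
    rw [s.D_symm x' x] at h7
    linarith

theorem MM_comm (s : Sys H V) {F : G → ℝ} {K B : ℝ} (hK : 0 ≤ K) (hB : ∀ x, |F x| ≤ B)
    (g x : G) : MM s (fun z => F (g * z)) K x = MM s F K (g * x) := by
  have hB' : ∀ x, |F (g * x)| ≤ B := fun x => hB (g * x)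
  refine le_antisymm ?_ ?_
  · refine le_csInf (Set.range_nonempty _) ?_
    rintro b ⟨z, rfl⟩
    dsimp only
    have h1 : MM s (fun z => F (g * z)) K x ≤ F (g * (g⁻¹ * z)) + K * s.D (g⁻¹ * z) x :=
      csInf_le (MM_bdd s hK hB' x) ⟨g⁻¹ * z, rfl⟩
    have e1 : g * (g⁻¹ * z) = z := by group
    have e2 : s.D (g⁻¹ * z) x = s.D z (g * x) := by
      rw [← s.D_left g (g⁻¹ * z) x, e1]
    rw [e1, e2] at h1
    exact h1
  · refine le_csInf (Set.range_nonempty _) ?_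
    rintro b ⟨y, rfl⟩
    dsimp only
    have h1 : MM s F K (g * x) ≤ F (g * y) + K * s.D (g * y) (g * x) :=
      csInf_le (MM_bdd s hK hB (g * x)) ⟨g * y, rfl⟩
    rw [s.D_left g y x] at h1
    exact h1

theorem lip_bounded_rucb (s : Sys H V) {F : G → ℝ} {K B : ℝ} (hK : 0 ≤ K)
    (hlip : ∀ x y, |F x - F y| ≤ K * s.D x y) (hB : ∀ x, |F x| ≤ B) : IsRUCB G F := by
  refine ⟨⟨B, hB⟩, ?_⟩
  intro ε hε
  obtain ⟨W, hW, hWs⟩ := s.D_small (ε / (2 * (K + 1))) (by positivity)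
  refine ⟨W, hW, ?_⟩
  intro v hv x
  have h1 : |F (v * x) - F x| ≤ K * s.D (v * x) x := hlip (v * x) x
  rw [D_vx s v x] at h1
  have h2 : K * s.D v 1 ≤ K * (ε / (2 * (K + 1))) :=
    mul_le_mul_of_nonneg_left (hWs v hv) hK
  have h3 : K * (ε / (2 * (K + 1))) < ε := by
    rw [mul_div_assoc']
    rw [div_lt_iff₀ (by positivity : (0:ℝ) < 2 * (K + 1))]
    nlinarith
  linarith

end Mollify


section RUCBClosure

variable {K : Type*} [Group K] [TopologicalSpace K]

theorem rucb_const (c : ℝ) : IsRUCB K fun _ => c := by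
  refine ⟨⟨|c|, fun _ => le_refl _⟩, ?_⟩
  intro ε hε
  exact ⟨Set.univ, Filter.univ_mem, fun v _ x => by simpa using hε⟩

theorem rucb_add {f g : K → ℝ} (hf : IsRUCB K f) (hg : IsRUCB K g) :
    IsRUCB K fun x => f x + g x := by
  obtain ⟨⟨Cf, hCf⟩, hfm⟩ := hf
  obtain ⟨⟨Cg, hCg⟩, hgm⟩ := hg
  refine ⟨⟨Cf + Cg, fun x => le_trans (abs_add_le _ _) (add_le_add (hCf x) (hCg x))⟩, ?_⟩
  intro ε hε
  obtain ⟨V₁, hV₁, h₁⟩ := hfm (ε / 2) (by linarith)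
  obtain ⟨V₂, hV₂, h₂⟩ := hgm (ε / 2) (by linarith)
  refine ⟨V₁ ∩ V₂, Filter.inter_mem hV₁ hV₂, ?_⟩
  intro v hv x
  have e : f (v * x) + g (v * x) - (f x + g x) = (f (v * x) - f x) + (g (v * x) - g x) := by
    ring
  rw [e]
  have := h₁ v hv.1 x
  have := h₂ v hv.2 x
  calc |f (v * x) - f x + (g (v * x) - g x)| ≤ |f (v * x) - f x| + |g (v * x) - g x| :=
        abs_add_le _ _
  _ < ε := by linarith [h₁ v hv.1 x, h₂ v hv.2 x]

theorem rucb_smul (c : ℝ) {f : K → ℝ} (hf : IsRUCB K f) :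
    IsRUCB K fun x => c * f x := by
  obtain ⟨⟨Cf, hCf⟩, hfm⟩ := hf
  refine ⟨⟨|c| * Cf, fun x => by
    rw [abs_mul]
    exact mul_le_mul_of_nonneg_left (hCf x) (abs_nonneg c)⟩, ?_⟩
  intro ε hε
  obtain ⟨V₁, hV₁, h₁⟩ := hfm (ε / (|c| + 1)) (by positivity)
  refine ⟨V₁, hV₁, ?_⟩
  intro v hv x
  have e : c * f (v * x) - c * f x = c * (f (v * x) - f x) := by ring
  rw [e, abs_mul]
  have h2 := h₁ v hv x
  have h3 : |c| * |f (v * x) - f x| ≤ |c| * (ε / (|c| + 1)) :=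
    mul_le_mul_of_nonneg_left h2.le (abs_nonneg c)
  have h4 : |c| * (ε / (|c| + 1)) < ε := by
    rw [mul_div_assoc']
    rw [div_lt_iff₀ (by positivity : (0:ℝ) < |c| + 1)]
    nlinarith [abs_nonneg c]
  linarith

theorem rucb_sub {f g : K → ℝ} (hf : IsRUCB K f) (hg : IsRUCB K g) :
    IsRUCB K fun x => f x - g x := by
  have h1 := rucb_add hf (rucb_smul (-1) hg)
  have he : (fun x => f x - g x) = fun x => f x + -1 * g x := funext fun x => by ring
  rw [he]
  exact h1

end RUCBClosure

section MuLemmas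

variable {μ : (G → ℝ) → ℝ}

theorem mu_const (hmean : IsMean (IsRUCB G) μ) (c : ℝ) : μ (fun _ => c) = c := by
  have h1 := hmean.2.2.2 c (fun _ => 1) (rucb_const 1)
  have h2 : μ (fun _ => c) = μ (fun x => c * (fun _ => (1:ℝ)) x) := by
    congr 1
    funext x
    simp
  rw [h2, h1, hmean.1, mul_one]

theorem mu_mono (hmean : IsMean (IsRUCB G) μ) {f g : G → ℝ} (hf : IsRUCB G f)
    (hg : IsRUCB G g) (h : ∀ x, f x ≤ g x) : μ f ≤ μ g := by
  have hsub : IsRUCB G fun x => g x - f x := rucb_sub hg hf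
  have h0 : 0 ≤ μ fun x => g x - f x :=
    hmean.2.1 _ hsub fun x => by linarith [h x]
  have h1 := hmean.2.2.1 f (fun x => g x - f x) hf hsub
  have h2 : μ g = μ (fun x => f x + (fun x => g x - f x) x) := by
    congr 1
    funext x
    simp
  rw [h2, h1]
  linarith

theorem mu_le (hmean : IsMean (IsRUCB G) μ) {f : G → ℝ} (hf : IsRUCB G f) {c : ℝ}
    (h : ∀ x, f x ≤ c) : μ f ≤ c := by
  have := mu_mono hmean hf (rucb_const c) h
  rwa [mu_const hmean] at this

theorem mu_ge (hmean : IsMean (IsRUCB G) μ) {f : G → ℝ} (hf : IsRUCB G f) {c : ℝ}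
    (h : ∀ x, c ≤ f x) : c ≤ μ f := by
  have := mu_mono hmean (rucb_const c) hf h
  rwa [mu_const hmean] at this

theorem mu_sub_eq (hmean : IsMean (IsRUCB G) μ) {f g : G → ℝ} (hf : IsRUCB G f)
    (hg : IsRUCB G g) : μ f - μ g = μ (fun x => f x - g x) := by
  have hsub : IsRUCB G fun x => f x - g x := rucb_sub hf hg
  have h1 := hmean.2.2.1 g (fun x => f x - g x) hg hsub
  have h2 : μ f = μ (fun x => g x + (fun x => f x - g x) x) := by
    congr 1
    funext x
    simp
  rw [h2, h1]
  ring

theorem mu_abs_le (hmean : IsMean (IsRUCB G) μ) {f g : G → ℝ} (hf : IsRUCB G f)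
    (hg : IsRUCB G g) {c : ℝ} (h : ∀ x, |f x - g x| ≤ c) : |μ f - μ g| ≤ c := by
  rw [mu_sub_eq hmean hf hg]
  have hsub : IsRUCB G fun x => f x - g x := rucb_sub hf hg
  rw [abs_le]
  constructor
  · exact mu_ge hmean hsub fun x => (abs_le.mp (h x)).1
  · exact mu_le hmean hsub fun x => (abs_le.mp (h x)).2

theorem mu_abs_bound (hmean : IsMean (IsRUCB G) μ) {f : G → ℝ} (hf : IsRUCB G f) {c : ℝ}
    (h : ∀ x, |f x| ≤ c) : |μ f| ≤ c := by
  have h1 := mu_abs_le hmean hf (rucb_const 0) (c := c) fun x => by simpa using h x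
  rw [mu_const hmean] at h1
  simpa using h1

end MuLemmas

section CbKK

variable {H : Subgroup G} {V : Set G}

/-- Canonical bound of `f`. -/
noncomputable def Cb (H : Subgroup G) (f : ↥H → ℝ) : ℝ := ⨆ h, |f h|

theorem Cb_nonneg (f : ↥H → ℝ) : 0 ≤ Cb H f :=
  Real.iSup_nonneg fun h => abs_nonneg _

theorem Cb_spec {f : ↥H → ℝ} (hf : ∃ C, ∀ h, |f h| ≤ C) : ∀ h, |f h| ≤ Cb H f := by
  obtain ⟨C, hC⟩ := hf
  intro h
  have hb : BddAbove (Set.range fun h' : ↥H => |f h'|) := by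
    refine ⟨C, ?_⟩
    rintro r ⟨h', rfl⟩
    exact hC h'
  unfold Cb
  exact le_ciSup hb h

/-- The Lipschitz constant used for the mollification of `EE s f`. -/
noncomputable def KK (s : Sys H V) (f : ↥H → ℝ) : ℝ :=
  ((s.T.card : ℝ) * ((4 / s.del) * (2 + 4 * s.T.card)) + 8 / s.del) * Cb H f

/-- The Lipschitz constant of `EE s f`. -/
noncomputable def AA (s : Sys H V) (f : ↥H → ℝ) : ℝ :=
  (s.T.card : ℝ) * ((4 / s.del) * (2 + 4 * s.T.card)) * Cb H f

theorem KK_nonneg (s : Sys H V) (f : ↥H → ℝ) : 0 ≤ KK s f := by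
  unfold KK
  have hd := s.del_pos
  have h1 : (0:ℝ) ≤ (s.T.card : ℝ) := Nat.cast_nonneg _
  have h2 : (0:ℝ) ≤ 4 / s.del := div_nonneg (by norm_num) hd.le
  have h3 : (0:ℝ) ≤ 8 / s.del := div_nonneg (by norm_num) hd.le
  have := Cb_nonneg (H := H) f
  positivity

theorem AA_le_KK (s : Sys H V) (f : ↥H → ℝ) : AA s f ≤ KK s f := by
  unfold AA KK
  have hd := s.del_pos
  have h3 : (0:ℝ) ≤ 8 / s.del := div_nonneg (by norm_num) hd.le
  have := Cb_nonneg (H := H) f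
  nlinarith

theorem KK_r (s : Sys H V) (f : ↥H → ℝ) : 2 * Cb H f ≤ KK s f * (s.del / 4) := by
  unfold KK
  have hd := s.del_pos
  have hne : s.del ≠ 0 := ne_of_gt hd
  have h1 : (0:ℝ) ≤ (s.T.card : ℝ) := Nat.cast_nonneg _
  have h2 : (0:ℝ) ≤ 4 / s.del := div_nonneg (by norm_num) hd.le
  have hCb := Cb_nonneg (H := H) f
  have key : (8 / s.del) * (s.del / 4) = 2 := by field_simp <;> norm_num
  have h4 : (0:ℝ) ≤ (s.T.card : ℝ) * ((4 / s.del) * (2 + 4 * s.T.card)) := by positivity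
  have expand : ((s.T.card : ℝ) * ((4 / s.del) * (2 + 4 * s.T.card)) + 8 / s.del) *
      Cb H f * (s.del / 4) =
      (s.T.card : ℝ) * ((4 / s.del) * (2 + 4 * s.T.card)) * Cb H f * (s.del / 4) +
        ((8 / s.del) * (s.del / 4)) * Cb H f := by ring
  rw [expand, key]
  have h5 : 0 ≤ (s.T.card : ℝ) * ((4 / s.del) * (2 + 4 * s.T.card)) * Cb H f * (s.del / 4) := by
    positivity
  linarith

end CbKK

section OscLemmas

variable {H : Subgroup G} {V : Set G}

theorem osc_add {f g : ↥H → ℝ} {S : Set G} {εf εg : ℝ} (hf : osc f S εf)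
    (hg : osc g S εg) : osc (fun h => f h + g h) S (εf + εg) := by
  intro z h hz
  have e : f (z * h) + g (z * h) - (f h + g h) = (f (z * h) - f h) + (g (z * h) - g h) := by
    ring
  rw [e]
  exact le_trans (abs_add_le _ _) (add_le_add (hf z h hz) (hg z h hz))

theorem osc_smul {f : ↥H → ℝ} {S : Set G} {ε : ℝ} (c : ℝ) (hf : osc f S ε) :
    osc (fun h => c * f h) S (|c| * ε) := by
  intro z h hz
  have e : c * f (z * h) - c * f h = c * (f (z * h) - f h) := by ring
  rw [e, abs_mul]
  exact mul_le_mul_of_nonneg_left (hf z h hz) (abs_nonneg c)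

theorem conj_mem_mul3 (s : Sys H V) (g : G) {z : G} (hz : z ∈ V * V * V) :
    g * z * g⁻¹ ∈ V * V * V := by
  obtain ⟨w, hw, v₃, hv₃, rfl⟩ := hz
  obtain ⟨v₁, hv₁, v₂, hv₂, rfl⟩ := hw
  refine Set.mem_mul.mpr ⟨(g * v₁ * g⁻¹) * (g * v₂ * g⁻¹),
    Set.mem_mul.mpr ⟨g * v₁ * g⁻¹, s.V_conj g v₁ hv₁, g * v₂ * g⁻¹, s.V_conj g v₂ hv₂, rfl⟩,
    g * v₃ * g⁻¹, s.V_conj g v₃ hv₃, ?_⟩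
  group

theorem osc_translate (s : Sys H V) {f : ↥H → ℝ} {ε : ℝ} (hf : osc f (V * V * V) ε)
    (h₀ : ↥H) : osc (fun h => f (h₀ * h)) (V * V * V) ε := by
  intro z h hz
  have hz' : ((h₀ * z * h₀⁻¹ : ↥H) : G) ∈ V * V * V := by
    push_cast
    exact conj_mem_mul3 s (↑h₀) hz
  have e : h₀ * (z * h) = (h₀ * z * h₀⁻¹) * (h₀ * h) := by group
  have := hf (h₀ * z * h₀⁻¹) (h₀ * h) hz'
  rw [← e] at this
  exact this

end OscLemmas

section MV

variable {H : Subgroup G} {V : Set G}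

theorem AA_nonneg (s : Sys H V) (f : ↥H → ℝ) : 0 ≤ AA s f := by
  unfold AA
  have hd := s.del_pos
  have h1 : (0:ℝ) ≤ (s.T.card : ℝ) := Nat.cast_nonneg _
  have h2 : (0:ℝ) ≤ 4 / s.del := div_nonneg (by norm_num) hd.le
  have := Cb_nonneg (H := H) f
  positivity

theorem EE_mod_triv (s : Sys H V) {f : ↥H → ℝ} (hf : IsRUCB ↥H f) :
    ∀ (x v : G), s.D v 1 < s.del / 4 →
      |EE s f (v * x) - EE s f x| ≤ AA s f * s.D v 1 + 2 * Cb H f := by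
  intro x v _
  have hC := Cb_spec hf.1
  have h1 := abs_le.mp (EE_bound s hC (v * x))
  have h2 := abs_le.mp (EE_bound s hC x)
  have h3 : 0 ≤ AA s f * s.D v 1 := mul_nonneg (AA_nonneg s f) (s.D_nonneg v 1)
  rw [abs_le]
  constructor <;> [skip; skip] <;> [linarith [h1.1, h2.2]; linarith [h1.2, h2.1]]

theorem EE_mod_cert (s : Sys H V) {f : ↥H → ℝ} {ε : ℝ} (hf : IsRUCB ↥H f)
    (hosc : osc f (V * V * V) ε) :
    ∀ (x v : G), s.D v 1 < s.del / 4 →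
      |EE s f (v * x) - EE s f x| ≤ AA s f * s.D v 1 + ε := by
  intro x v hv
  have h := EE_mod s (Cb_spec hf.1) hosc (v := v) (x := x) hv.le
  unfold AA
  exact h

/-- The mollified extension. -/
noncomputable def ME (s : Sys H V) (f : ↥H → ℝ) : G → ℝ :=
  MM s (EE s f) (KK s f)

theorem ME_le (s : Sys H V) {f : ↥H → ℝ} (hf : IsRUCB ↥H f) (x : G) :
    ME s f x ≤ EE s f x :=
  MM_le s (KK_nonneg s f) (EE_bound s (Cb_spec hf.1)) x

theorem ME_ge_triv (s : Sys H V) {f : ↥H → ℝ} (hf : IsRUCB ↥H f) (x : G) :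
    EE s f x - 2 * Cb H f ≤ ME s f x := by
  refine MM_ge s (KK_nonneg s f) (EE_bound s (Cb_spec hf.1)) (EE_mod_triv s hf)
    (by linarith [s.del_pos] : (0:ℝ) < s.del / 4) ?_ (AA_le_KK s f) (KK_r s f) x
  have := Cb_nonneg (H := H) f
  linarith

theorem ME_ge_cert (s : Sys H V) {f : ↥H → ℝ} {ε : ℝ} (hf : IsRUCB ↥H f)
    (hε : 0 ≤ ε) (hosc : osc f (V * V * V) ε) (x : G) :
    EE s f x - ε ≤ ME s f x :=
  MM_ge s (KK_nonneg s f) (EE_bound s (Cb_spec hf.1)) (EE_mod_cert s hf hosc)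
    (by linarith [s.del_pos] : (0:ℝ) < s.del / 4) hε (AA_le_KK s f) (KK_r s f) x

theorem ME_bound (s : Sys H V) {f : ↥H → ℝ} (hf : IsRUCB ↥H f) (x : G) :
    |ME s f x| ≤ 3 * Cb H f := by
  have h1 := ME_le s hf x
  have h2 := ME_ge_triv s hf x
  have h3 := abs_le.mp (EE_bound s (Cb_spec hf.1) x)
  rw [abs_le]
  constructor <;> [linarith [h3.1]; linarith [h3.2]]

theorem ME_rucb (s : Sys H V) {f : ↥H → ℝ} (hf : IsRUCB ↥H f) : IsRUCB G (ME s f) :=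
  lip_bounded_rucb s (KK_nonneg s f)
    (fun x y => MM_lip s (KK_nonneg s f) (EE_bound s (Cb_spec hf.1)) x y)
    (ME_bound s hf)

theorem ME_rucb_trans (s : Sys H V) {f : ↥H → ℝ} (hf : IsRUCB ↥H f) (g : G) :
    IsRUCB G fun x => ME s f (g * x) := by
  refine lip_bounded_rucb s (KK_nonneg s f) ?_ (fun x => ME_bound s hf (g * x))
  intro x y
  have h1 := MM_lip s (KK_nonneg s f) (EE_bound s (Cb_spec hf.1)) (g * x) (g * y)
  rw [s.D_left g x y] at h1
  exact h1

/-- The approximate mean at scale `V`. -/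
noncomputable def mV (μ : (G → ℝ) → ℝ) (s : Sys H V) (f : ↥H → ℝ) : ℝ := μ (ME s f)

theorem MM_const_one (s : Sys H V) {Kc : ℝ} (hK : 0 ≤ Kc) (x : G) :
    MM s (fun _ => (1:ℝ)) Kc x = 1 := by
  refine le_antisymm ?_ ?_
  · exact MM_le s (B := 1) hK (fun _ => by norm_num) x
  · refine le_csInf (Set.range_nonempty _) ?_
    rintro b ⟨y, rfl⟩
    dsimp only
    have := mul_nonneg hK (s.D_nonneg y x)
    linarith

theorem mV_one {μ : (G → ℝ) → ℝ} (hmean : IsMean (IsRUCB G) μ) (s : Sys H V) :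
    mV μ s (fun _ => (1:ℝ)) = 1 := by
  unfold mV
  have hME : ME s (fun _ => (1:ℝ)) = fun _ => (1:ℝ) := by
    funext x
    unfold ME
    have hEE : EE s (fun _ => (1:ℝ)) = fun _ => (1:ℝ) := funext (EE_one s)
    rw [hEE]
    exact MM_const_one s (KK_nonneg s _) x
  rw [hME, hmean.1]

theorem mV_bound {μ : (G → ℝ) → ℝ} (hmean : IsMean (IsRUCB G) μ) (s : Sys H V)
    {f : ↥H → ℝ} (hf : IsRUCB ↥H f) : |mV μ s f| ≤ 3 * Cb H f :=
  mu_abs_bound hmean (ME_rucb s hf) (ME_bound s hf)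

theorem mV_add {μ : (G → ℝ) → ℝ} (hmean : IsMean (IsRUCB G) μ) (s : Sys H V)
    {f g : ↥H → ℝ} (hf : IsRUCB ↥H f) (hg : IsRUCB ↥H g) {εf εg : ℝ}
    (hεf : 0 ≤ εf) (hεg : 0 ≤ εg) (hoscf : osc f (V * V * V) εf)
    (hoscg : osc g (V * V * V) εg) :
    |mV μ s (fun h => f h + g h) - (mV μ s f + mV μ s g)| ≤ 2 * (εf + εg) := by
  have hfg : IsRUCB ↥H fun h => f h + g h := rucb_add hf hg
  have hoscfg : osc (fun h => f h + g h) (V * V * V) (εf + εg) := osc_add hoscf hoscg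
  have hpt : ∀ x, |ME s (fun h => f h + g h) x - (fun x => ME s f x + ME s g x) x| ≤
      2 * (εf + εg) := by
    intro x
    have h1 := ME_le s hfg x
    have h2 := ME_ge_cert s hfg (by linarith) hoscfg x
    have h3 := ME_le s hf x
    have h4 := ME_ge_cert s hf hεf hoscf x
    have h5 := ME_le s hg x
    have h6 := ME_ge_cert s hg hεg hoscg x
    have h7 : EE s (fun h => f h + g h) x = EE s f x + EE s g x := EE_add s f g x
    rw [h7] at h1 h2
    dsimp only
    rw [abs_le]
    constructor <;> linarith
  have hsum : IsRUCB G fun x => ME s f x + ME s g x :=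
    rucb_add (ME_rucb s hf) (ME_rucb s hg)
  have hμ := mu_abs_le hmean (ME_rucb s hfg) hsum hpt
  have hadd := hmean.2.2.1 (ME s f) (ME s g) (ME_rucb s hf) (ME_rucb s hg)
  unfold mV
  rw [← hadd]
  exact hμ

theorem mV_smul {μ : (G → ℝ) → ℝ} (hmean : IsMean (IsRUCB G) μ) (s : Sys H V)
    {f : ↥H → ℝ} (hf : IsRUCB ↥H f) {ε : ℝ} (hε : 0 ≤ ε)
    (hosc : osc f (V * V * V) ε) (c : ℝ) :
    |mV μ s (fun h => c * f h) - c * mV μ s f| ≤ 2 * (|c| * ε) := by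
  have hcf : IsRUCB ↥H fun h => c * f h := rucb_smul c hf
  have hosccf : osc (fun h => c * f h) (V * V * V) (|c| * ε) := osc_smul c hosc
  have hcε : 0 ≤ |c| * ε := mul_nonneg (abs_nonneg c) hε
  have hpt : ∀ x, |ME s (fun h => c * f h) x - (fun x => c * ME s f x) x| ≤
      2 * (|c| * ε) := by
    intro x
    have h1 := ME_le s hcf x
    have h2 := ME_ge_cert s hcf hcε hosccf x
    have h3 := ME_le s hf x
    have h4 := ME_ge_cert s hf hε hosc x
    have h7 : EE s (fun h => c * f h) x = c * EE s f x := EE_smul s c f x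
    rw [h7] at h1 h2
    have h8 : |c * ME s f x - c * EE s f x| ≤ |c| * ε := by
      have e : c * ME s f x - c * EE s f x = c * (ME s f x - EE s f x) := by ring
      rw [e, abs_mul]
      refine mul_le_mul_of_nonneg_left ?_ (abs_nonneg c)
      rw [abs_le]
      constructor <;> linarith
    have h9 := abs_le.mp h8
    dsimp only
    rw [abs_le]
    constructor <;> linarith [h9.1, h9.2]
  have hcME : IsRUCB G fun x => c * ME s f x := rucb_smul c (ME_rucb s hf)
  have hμ := mu_abs_le hmean (ME_rucb s hcf) hcME hpt
  have hsm := hmean.2.2.2 c (ME s f) (ME_rucb s hf)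
  unfold mV
  rw [← hsm]
  exact hμ

theorem mV_pos {μ : (G → ℝ) → ℝ} (hmean : IsMean (IsRUCB G) μ) (s : Sys H V)
    {f : ↥H → ℝ} (hf : IsRUCB ↥H f) {ε : ℝ} (hε : 0 ≤ ε)
    (hosc : osc f (V * V * V) ε) (hpos : ∀ h, 0 ≤ f h) : -ε ≤ mV μ s f := by
  unfold mV
  refine mu_ge hmean (ME_rucb s hf) ?_
  intro x
  have h1 := ME_ge_cert s hf hε hosc x
  have h2 := EE_nonneg s hpos x
  linarith

theorem mV_inv {μ : (G → ℝ) → ℝ} (hmean : IsMean (IsRUCB G) μ)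
    (hinv : ∀ (g : G) (F : G → ℝ), IsRUCB G F → μ (fun x => F (g * x)) = μ F)
    (s : Sys H V) {f : ↥H → ℝ} (hf : IsRUCB ↥H f) (h₀ : ↥H)
    (hf' : IsRUCB ↥H fun h => f (h₀ * h)) {ε : ℝ} (hε : 0 ≤ ε)
    (hosc : osc f (V * V * V) ε) :
    |mV μ s (fun h => f (h₀ * h)) - mV μ s f| ≤ 3 * ε := by
  have hosc' : osc (fun h => f (h₀ * h)) (V * V * V) ε := osc_translate s hosc h₀
  have hpt : ∀ x, |ME s (fun h => f (h₀ * h)) x - (fun x => ME s f (↑h₀ * x)) x| ≤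
      3 * ε := by
    intro x
    have h1 := ME_le s hf' x
    have h2 := ME_ge_cert s hf' hε hosc' x
    have h3 := ME_le s hf (↑h₀ * x)
    have h4 := ME_ge_cert s hf hε hosc (↑h₀ * x)
    have h5 := abs_le.mp (EE_trans s hosc hε h₀ x)
    dsimp only
    rw [abs_le]
    constructor <;> linarith [h5.1, h5.2]
  have htrans : IsRUCB G fun x => ME s f (↑h₀ * x) := ME_rucb_trans s hf ↑h₀
  have hμ := mu_abs_le hmean (ME_rucb s hf') htrans hpt
  have heq := hinv ↑h₀ (ME s f) (ME_rucb s hf)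
  unfold mV
  rw [← heq]
  exact hμ

end MV

theorem cube {U : Set G} (hU : U ∈ 𝓝 (1 : G)) :
    ∃ U' ∈ 𝓝 (1 : G), U' * U' * U' ⊆ U := by
  obtain ⟨W, hW, hsplit⟩ := exists_nhds_one_split hU
  obtain ⟨W', hW', hsplit'⟩ := exists_nhds_one_split hW
  refine ⟨W' ∩ W, Filter.inter_mem hW' hW, ?_⟩
  rintro z ⟨w, hw, v₃, hv₃, rfl⟩
  obtain ⟨v₁, hv₁, v₂, hv₂, rfl⟩ := hw
  exact hsplit _ (hsplit' v₁ hv₁.1 v₂ hv₂.1) _ hv₃.2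

theorem rucb_translate (hSIN : SIN G) {H : Subgroup G} {f : ↥H → ℝ}
    (hf : IsRUCB ↥H f) (h₀ : ↥H) : IsRUCB ↥H fun h => f (h₀ * h) := by
  obtain ⟨⟨C, hC⟩, hmod⟩ := hf
  refine ⟨⟨C, fun x => hC _⟩, ?_⟩
  intro ε hε
  obtain ⟨V', hV', hm⟩ := hmod ε hε
  rw [nhds_subtype] at hV'
  rw [show ((1 : ↥H) : G) = (1 : G) from rfl] at hV'
  obtain ⟨U, hU, hUsub⟩ := Filter.mem_comap.mp hV'
  obtain ⟨Wg, hWg, hWconj⟩ := hSIN U hU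
  refine ⟨Subtype.val ⁻¹' Wg, ?_, ?_⟩
  · rw [nhds_subtype, show ((1 : ↥H) : G) = (1 : G) from rfl]
    exact Filter.preimage_mem_comap hWg
  · intro v hv x
    have hconj : (↑h₀ * ↑v * (↑h₀)⁻¹ : G) ∈ U := hWconj ↑h₀ ↑v hv
    have hmem : (h₀ * v * h₀⁻¹ : ↥H) ∈ V' := by
      refine hUsub ?_
      show ((h₀ * v * h₀⁻¹ : ↥H) : G) ∈ U
      push_cast
      exact hconj
    have h1 := hm (h₀ * v * h₀⁻¹) hmem (h₀ * x)
    have e : (h₀ * v * h₀⁻¹) * (h₀ * x) = h₀ * (v * x) := by group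
    rw [e] at h1
    exact h1

theorem osc_cert {H : Subgroup G} {f : ↥H → ℝ} (hf : IsRUCB ↥H f) {ε : ℝ} (hε : 0 < ε) :
    ∃ U ∈ 𝓝 (1 : G), ∀ S : Set G, S ⊆ U → osc f S ε := by
  obtain ⟨V', hV', hm⟩ := hf.2 ε hε
  rw [nhds_subtype] at hV'
  rw [show ((1 : ↥H) : G) = (1 : G) from rfl] at hV'
  obtain ⟨U, hU, hUsub⟩ := Filter.mem_comap.mp hV'
  refine ⟨U, hU, ?_⟩
  intro S hS z h hz
  have hzV : z ∈ V' := hUsub (hS hz)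
  exact (hm z hzV h).le

end CSA

theorem cocompact_subgroup_of_SIN_amenable {G : Type*} [Group G] [TopologicalSpace G]
    [IsTopologicalGroup G]
    (hSIN : ∀ U ∈ 𝓝 (1 : G), ∃ V ∈ 𝓝 (1 : G), ∀ (g : G), ∀ v ∈ V, g * v * g⁻¹ ∈ U)
    (hG : Amenable G) (H : Subgroup G) (hcomp : CompactSpace (G ⧸ H)) :
    Amenable ↥H := by
  classical
  obtain ⟨μ, hmean, hinv⟩ := hG
  have hSIN' : CSA.SIN G := hSIN
  -- the index type of scales
  let J := {V : Set G // V ∈ 𝓝 (1 : G) ∧ (∀ g : G, ∀ v ∈ V, g * v * g⁻¹ ∈ V) ∧ V⁻¹ = V}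
  have hJne : Nonempty J := by
    obtain ⟨V, hV⟩ := CSA.exists_good hSIN' (Filter.univ_mem : Set.univ ∈ 𝓝 (1 : G))
    exact ⟨⟨V, hV.1, hV.2.2.1, hV.2.2.2⟩⟩
  let sys : ∀ Vj : J, CSA.Sys H Vj.1 := fun Vj =>
    (CSA.exists_sys hSIN' H hcomp Vj.2.1 Vj.2.2.1 Vj.2.2.2).some
  let m : J → (↥H → ℝ) → ℝ := fun Vj f => CSA.mV μ (sys Vj) f
  let ℱ : Filter J := Filter.comap (fun Vj : J => (Vj : Set G)) (𝓝 (1 : G)).smallSets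
  have hFne : ℱ.NeBot := by
    refine Filter.comap_neBot ?_
    intro t ht
    obtain ⟨U, hU, hUt⟩ := ((𝓝 (1 : G)).hasBasis_smallSets.mem_iff).mp ht
    obtain ⟨V, hV⟩ := CSA.exists_good hSIN' hU
    exact ⟨⟨V, hV.1, hV.2.2.1, hV.2.2.2⟩, hUt hV.2.1⟩
  have hev : ∀ U ∈ 𝓝 (1 : G), ∀ᶠ Vj : J in ℱ, (Vj : Set G) ⊆ U := by
    intro U hU
    have h1 : {S : Set G | S ⊆ U} ∈ (𝓝 (1 : G)).smallSets := by
      refine ((𝓝 (1 : G)).hasBasis_smallSets.mem_iff).mpr ⟨U, hU, ?_⟩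
      intro S hS
      exact hS
    exact Filter.preimage_mem_comap h1
  let 𝒰 : Ultrafilter J := @Ultrafilter.of J ℱ hFne
  have h𝒰 : (𝒰 : Filter J) ≤ ℱ := @Ultrafilter.of_le J ℱ hFne
  -- eventual oscillation certificates
  have hcert : ∀ (f : ↥H → ℝ), IsRUCB ↥H f → ∀ ε : ℝ, 0 < ε →
      ∀ᶠ Vj : J in (𝒰 : Filter J), CSA.osc f ((Vj : Set G) * Vj * Vj) ε := by
    intro f hf ε hε
    obtain ⟨U, hU, hUo⟩ := CSA.osc_cert hf hε
    obtain ⟨U', hU', hU'3⟩ := CSA.cube hU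
    have h1 : ∀ᶠ Vj : J in ℱ, (Vj : Set G) ⊆ U' := hev U' hU'
    refine (h1.filter_mono h𝒰).mono ?_
    intro Vj hVj
    refine hUo _ ?_
    refine Set.Subset.trans ?_ hU'3
    exact Set.mul_subset_mul (Set.mul_subset_mul hVj hVj) hVj
  -- limits along the ultrafilter
  have hlim : ∀ f : ↥H → ℝ, ∃ L : ℝ, IsRUCB ↥H f →
      Filter.Tendsto (fun Vj => m Vj f) (𝒰 : Filter J) (𝓝 L) := by
    intro f
    by_cases hf : IsRUCB ↥H f
    · set c : ℝ := 3 * CSA.Cb H f with hc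
      have hmem : ∀ Vj : J, m Vj f ∈ Set.Icc (-c) c := by
        intro Vj
        have := CSA.mV_bound hmean (sys Vj) hf
        rw [abs_le] at this
        exact ⟨this.1, this.2⟩
      have hle : (Ultrafilter.map (fun Vj => m Vj f) 𝒰 : Filter ℝ) ≤
          Filter.principal (Set.Icc (-c) c) := by
        rw [Filter.le_principal_iff]
        refine Filter.mem_map.mpr ?_
        have : (fun Vj => m Vj f) ⁻¹' Set.Icc (-c) c = Set.univ := by
          ext Vj
          simp [hmem Vj]
        rw [this]
        exact Filter.univ_mem
      obtain ⟨L, _, hL⟩ := (isCompact_Icc (a := -c) (b := c)).ultrafilter_le_nhds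
        (Ultrafilter.map (fun Vj => m Vj f) 𝒰) hle
      exact ⟨L, fun _ => hL⟩
    · exact ⟨0, fun h => absurd h hf⟩
  choose μH hμH using hlim
  haveI hUne : (𝒰 : Filter J).NeBot := 𝒰.neBot
  refine ⟨μH, ⟨?_, ?_, ?_, ?_⟩, ?_⟩
  · -- μH 1 = 1
    have hone : IsRUCB ↥H fun _ => (1 : ℝ) := CSA.rucb_const 1
    have h1 := hμH _ hone
    have h2 : (fun Vj : J => m Vj fun _ => (1 : ℝ)) = fun _ => (1 : ℝ) :=
      funext fun Vj => CSA.mV_one hmean (sys Vj)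
    rw [h2] at h1
    exact (tendsto_nhds_unique h1 tendsto_const_nhds)
  · -- positivity
    intro f hf hfpos
    by_contra hcon
    push_neg at hcon
    set ε : ℝ := -μH f / 2 with hε
    have hεpos : 0 < ε := by simp only [hε]; linarith
    have hev2 : ∀ᶠ Vj in (𝒰 : Filter J), -ε ≤ m Vj f := by
      refine (hcert f hf ε hεpos).mono ?_
      intro Vj hosc
      exact CSA.mV_pos hmean (sys Vj) hf hεpos.le hosc hfpos
    have := ge_of_tendsto (hμH f hf) hev2
    rw [hε] at this
    linarith
  · -- additivity
    intro f g hf hg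
    have hfg : IsRUCB ↥H fun x => f x + g x := CSA.rucb_add hf hg
    have h0 : Filter.Tendsto (fun Vj => m Vj (fun x => f x + g x) - (m Vj f + m Vj g))
        (𝒰 : Filter J) (𝓝 0) := by
      rw [NormedAddCommGroup.tendsto_nhds_zero]
      intro ε hε
      have e1 := hcert f hf (ε / 8) (by linarith)
      have e2 := hcert g hg (ε / 8) (by linarith)
      refine (e1.and e2).mono ?_
      intro Vj ⟨hoscf, hoscg⟩
      have := CSA.mV_add hmean (sys Vj) hf hg (by linarith) (by linarith) hoscf hoscg
      rw [Real.norm_eq_abs]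
      calc |m Vj (fun x => f x + g x) - (m Vj f + m Vj g)| ≤ 2 * (ε / 8 + ε / 8) := this
      _ < ε := by linarith
    have h1 := h0.add ((hμH f hf).add (hμH g hg))
    rw [zero_add] at h1
    have h2 : (fun Vj => (m Vj (fun x => f x + g x) - (m Vj f + m Vj g)) +
        (m Vj f + m Vj g)) = fun Vj => m Vj fun x => f x + g x :=
      funext fun Vj => by ring
    rw [h2] at h1
    exact tendsto_nhds_unique (hμH _ hfg) h1
  · -- scalar multiplication
    intro c f hf
    have hcf : IsRUCB ↥H fun x => c * f x := CSA.rucb_smul c hf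
    have h0 : Filter.Tendsto (fun Vj => m Vj (fun x => c * f x) - c * m Vj f)
        (𝒰 : Filter J) (𝓝 0) := by
      rw [NormedAddCommGroup.tendsto_nhds_zero]
      intro ε hε
      set ε' : ℝ := ε / (4 * (|c| + 1)) with hε'
      have hε'pos : 0 < ε' := by
        rw [hε']
        positivity
      have e1 := hcert f hf ε' hε'pos
      refine e1.mono ?_
      intro Vj hosc
      have := CSA.mV_smul hmean (sys Vj) hf hε'pos.le hosc c
      rw [Real.norm_eq_abs]
      have h3 : 2 * (|c| * ε') < ε := by
        rw [hε']
        have key : 2 * (|c| * (ε / (4 * (|c| + 1)))) = ε * (|c| / (2 * (|c| + 1))) := by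
          field_simp
          ring
        rw [key]
        have hfrac : |c| / (2 * (|c| + 1)) < 1 := by
          rw [div_lt_one (by positivity : (0:ℝ) < 2 * (|c| + 1))]
          nlinarith [abs_nonneg c]
        nlinarith [abs_nonneg c, div_nonneg (abs_nonneg c)
          (by positivity : (0:ℝ) ≤ 2 * (|c| + 1))]
      linarith
    have h1 := h0.add ((hμH f hf).const_mul c)
    rw [zero_add] at h1
    have h2 : (fun Vj => (m Vj (fun x => c * f x) - c * m Vj f) + c * m Vj f) =
        fun Vj => m Vj fun x => c * f x := funext fun Vj => by ring
    rw [h2] at h1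
    exact tendsto_nhds_unique (hμH _ hcf) h1
  · -- invariance
    intro g f hf
    have hf' : IsRUCB ↥H fun x => f (g * x) := CSA.rucb_translate hSIN' hf g
    have h0 : Filter.Tendsto (fun Vj => m Vj (fun x => f (g * x)) - m Vj f)
        (𝒰 : Filter J) (𝓝 0) := by
      rw [NormedAddCommGroup.tendsto_nhds_zero]
      intro ε hε
      have e1 := hcert f hf (ε / 4) (by linarith)
      refine e1.mono ?_
      intro Vj hosc
      have := CSA.mV_inv hmean hinv (sys Vj) hf g hf' (by linarith) hosc
      rw [Real.norm_eq_abs]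
      calc |m Vj (fun x => f (g * x)) - m Vj f| ≤ 3 * (ε / 4) := this
      _ < ε := by linarith
    have h1 := h0.add (hμH f hf)
    rw [zero_add] at h1
    have h2 : (fun Vj => (m Vj (fun x => f (g * x)) - m Vj f) + m Vj f) =
        fun Vj => m Vj fun x => f (g * x) := funext fun Vj => by ring
    rw [h2] at h1
    exact tendsto_nhds_unique (hμH _ hf') h1
end

section
/- Let G be a topological group, let d, d₀ ∈ Δ(G) with d₀(x,y) ≤ d(x,y) for all x, y, let H be a subgroup of G, let f : H → ℝ be 1-Lipschitz with respect to the restriction of d₀, and let t ∈ (0,1]. Then |f^d(x)| · χ_{H,t⁻¹d}(x) ≤ (‖f‖_∞ + t) · χ_{H,t⁻¹d}(x) for all x ∈ G, where ‖f‖_∞ = sup_{h ∈ H} |f(h)| and t⁻¹d denotes the rescaled pseudo-metric (x,y) ↦ t⁻¹ d(x,y), which again belongs to Δ(G). -/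
open scoped Topology

/-- `d` is a bounded right-invariant continuous pseudo-metric on `G`,
i.e. an element of `Δ(G)`. -/
def InDelta (G : Type*) [Group G] [TopologicalSpace G] (d : G → G → ℝ) : Prop :=
  (∀ x y, 0 ≤ d x y) ∧ (∀ x, d x x = 0) ∧ (∀ x y, d x y = d y x) ∧
  (∀ x y z, d x z ≤ d x y + d y z) ∧ (∃ C, ∀ x y, d x y ≤ C) ∧
  Continuous (fun p : G × G => d p.1 p.2) ∧
  (∀ x y g, d (x * g) (y * g) = d x y)

/-- The function `χ_{H,d}(x) = max (1 - inf_{h ∈ H} d(x,h)) 0`. -/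
noncomputable def chi {G : Type*} [Group G] (H : Subgroup G) (d : G → G → ℝ) (x : G) : ℝ :=
  max (1 - ⨅ h : ↥H, d x (h : G)) 0

/-- The extension `f^d(x) = inf_{h ∈ H} (f(h) + d(x,h))` of `f : H → ℝ` to `G`. -/
noncomputable def extd {G : Type*} [Group G] (H : Subgroup G) (d : G → G → ℝ)
    (f : ↥H → ℝ) (x : G) : ℝ :=
  ⨅ h : ↥H, (f h + d x (h : G))

theorem extd_bound_on_chi {G : Type*} [Group G] [TopologicalSpace G] [IsTopologicalGroup G]
    (d d₀ : G → G → ℝ) (hd : InDelta G d) (hd₀ : InDelta G d₀)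
    (hle : ∀ x y : G, d₀ x y ≤ d x y) (H : Subgroup G)
    (f : ↥H → ℝ) (hf : ∀ h h' : ↥H, |f h - f h'| ≤ d₀ (h : G) (h' : G))
    (t : ℝ) (ht : t ∈ Set.Ioc (0 : ℝ) 1) :
    ∀ x : G, |extd H d f x| * chi H (fun a b => t⁻¹ * d a b) x ≤
      ((⨆ h : ↥H, |f h|) + t) * chi H (fun a b => t⁻¹ * d a b) x := by
  obtain ⟨hd0, hdrefl, hdsymm, hdtri, ⟨C, hC⟩, -, -⟩ := hd
  obtain ⟨h00, h0refl, h0symm, h0tri, ⟨C0, hC0⟩, -, -⟩ := hd₀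
  obtain ⟨ht0, ht1⟩ := ht
  haveI : Nonempty ↥H := ⟨1⟩
  intro x
  set S := ⨆ h : ↥H, |f h| with hS
  have hbddf : BddAbove (Set.range fun h : ↥H => |f h|) := by
    refine ⟨|f 1| + C0, ?_⟩
    rintro _ ⟨h, rfl⟩
    calc |f h| = |f 1 + (f h - f 1)| := by ring_nf
      _ ≤ |f 1| + |f h - f 1| := abs_add_le _ _
      _ ≤ |f 1| + C0 := by have := hf h 1; have := hC0 (h : G) ((1 : ↥H) : G); linarith
  have hfle : ∀ h : ↥H, |f h| ≤ S := fun h => le_ciSup hbddf h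
  set D : G → G → ℝ := fun a b => t⁻¹ * d a b with hD
  have hbddD : BddBelow (Set.range fun h : ↥H => D x (h : G)) := by
    refine ⟨0, ?_⟩
    rintro _ ⟨h, rfl⟩
    exact mul_nonneg (by positivity) (hd0 _ _)
  have hchinn : 0 ≤ chi H D x := le_max_right _ _
  rcases lt_or_ge (⨅ h : ↥H, D x (h : G)) 1 with hI | hI
  · -- chi may be positive; bound |extd|
    obtain ⟨h₀, hh₀⟩ := exists_lt_of_ciInf_lt hI
    have hdxh₀ : d x (h₀ : G) < t := by
      have : t⁻¹ * d x (h₀ : G) < 1 := hh₀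
      calc d x (h₀ : G) = t * (t⁻¹ * d x (h₀ : G)) := by field_simp
        _ < t * 1 := by exact (mul_lt_mul_iff_right₀ ht0).mpr this
        _ = t := mul_one t
    have hbddE : BddBelow (Set.range fun h : ↥H => f h + d x (h : G)) := by
      refine ⟨-S, ?_⟩
      rintro _ ⟨h, rfl⟩
      show -S ≤ f h + d x (h : G)
      have h1 : -S ≤ f h := by have := hfle h; have := neg_abs_le (f h); linarith
      have := hd0 x (h : G); linarith
    have hupper : extd H d f x ≤ S + t := by
      calc extd H d f x ≤ f h₀ + d x (h₀ : G) := ciInf_le hbddE h₀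
        _ ≤ S + t := by
          have := hfle h₀; have := le_abs_self (f h₀); linarith
    have hlower : -(S + t) ≤ extd H d f x := by
      apply le_ciInf
      intro h
      show -(S + t) ≤ f h + d x (h : G)
      have h1 : f (h₀ : ↥H) - f h ≤ d₀ (h : G) (h₀ : G) := by
        have := hf h₀ h; have := abs_sub_comm (f h₀) (f h)
        have := le_abs_self (f h₀ - f h)
        rw [h0symm]; linarith
      have h2 : d₀ (h : G) (h₀ : G) ≤ d₀ (h : G) x + d₀ x (h₀ : G) := h0tri _ _ _
      have h3 : d₀ (h : G) x ≤ d x (h : G) := by rw [h0symm]; exact hle _ _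
      have h4 : d₀ x (h₀ : G) ≤ d x (h₀ : G) := hle _ _
      have h5 : -S ≤ f h₀ := by have := hfle h₀; have := neg_abs_le (f h₀); linarith
      linarith
    have habs : |extd H d f x| ≤ S + t := abs_le.mpr ⟨hlower, hupper⟩
    exact mul_le_mul_of_nonneg_right habs hchinn
  · -- chi = 0
    have : chi H D x = 0 := max_eq_right (by linarith)
    rw [this, mul_zero, mul_zero]
end

section
/- Let G be a topological group, let d, d₀ ∈ Δ(G) and r ∈ ℝ with d₀ ≤ d and |r|·d₀(x,y) ≤ d(x,y) for all x, y, let H be a subgroup of G, let f : H → ℝ be 1-Lipschitz with respect to the restriction of d₀, and let t ∈ (0,1]. Then |(r·f)^d(x) − r·f^d(x)| · χ_{H,t⁻¹d}(x) ≤ (|r| + 1)·t · χ_{H,t⁻¹d}(x) for all x ∈ G, where t⁻¹d denotes the rescaled pseudo-metric (x,y) ↦ t⁻¹ d(x,y). -/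
open scoped Topology

lemma extd_close {G : Type*} [Group G] (H : Subgroup G) (d : G → G → ℝ)
    (hsymm : ∀ x y, d x y = d y x) (htri : ∀ x y z, d x z ≤ d x y + d y z)
    (g : ↥H → ℝ) (hg : ∀ h h' : ↥H, |g h - g h'| ≤ d (h : G) (h' : G))
    (x : G) (h₀ : ↥H) : |extd H d g x - g h₀| ≤ d x (h₀ : G) := by
  have hlb : ∀ h : ↥H, g h₀ - d x (h₀ : G) ≤ g h + d x (h : G) := by
    intro h
    have h1 : g h₀ - g h ≤ |g h₀ - g h| := le_abs_self _
    have h2 := hg h₀ h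
    have h3 : d (h₀ : G) (h : G) ≤ d (h₀ : G) x + d x (h : G) := htri _ _ _
    have h4 : d (h₀ : G) x = d x (h₀ : G) := hsymm _ _
    linarith
  have hbdd : BddBelow (Set.range fun h : ↥H => g h + d x (h : G)) :=
    ⟨g h₀ - d x (h₀ : G), by rintro y ⟨h, rfl⟩; exact hlb h⟩
  have hle1 : extd H d g x ≤ g h₀ + d x (h₀ : G) := ciInf_le hbdd h₀
  have hle2 : g h₀ - d x (h₀ : G) ≤ extd H d g x := le_ciInf hlb
  rw [abs_sub_le_iff]
  constructor <;> linarith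

theorem extd_almost_homogeneous_on_chi {G : Type*} [Group G] [TopologicalSpace G]
    [IsTopologicalGroup G] (d d₀ : G → G → ℝ) (r : ℝ) (hd : InDelta G d) (hd₀ : InDelta G d₀)
    (hle : ∀ x y : G, d₀ x y ≤ d x y) (hler : ∀ x y : G, |r| * d₀ x y ≤ d x y)
    (H : Subgroup G)
    (f : ↥H → ℝ) (hf : ∀ h h' : ↥H, |f h - f h'| ≤ d₀ (h : G) (h' : G))
    (t : ℝ) (ht : t ∈ Set.Ioc (0 : ℝ) 1) :
    ∀ x : G, |extd H d (fun h => r * f h) x - r * extd H d f x| *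
        chi H (fun a b => t⁻¹ * d a b) x ≤
      (|r| + 1) * t * chi H (fun a b => t⁻¹ * d a b) x := by
  obtain ⟨hd_nn, hd_refl, hd_symm, hd_tri, _⟩ := hd
  obtain ⟨ht0, ht1⟩ := ht
  intro x
  have hchi_nn : (0 : ℝ) ≤ chi H (fun a b => t⁻¹ * d a b) x := le_max_right _ _
  rcases eq_or_lt_of_le hchi_nn with hchi | hchi
  · rw [← hchi, mul_zero, mul_zero]
  · -- chi > 0, get h₀ with d x h₀ < t
    have hNe : Nonempty ↥H := ⟨1⟩
    have hI : (⨅ h : ↥H, t⁻¹ * d x (h : G)) < 1 := by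
      by_contra hcon
      push_neg at hcon
      have : chi H (fun a b => t⁻¹ * d a b) x = 0 := by
        unfold chi
        rw [max_eq_right]
        linarith
      linarith [this ▸ hchi]
    obtain ⟨h₀, hh₀⟩ := exists_lt_of_ciInf_lt hI
    have hdx : d x (h₀ : G) < t := by
      have := (mul_lt_iff_lt_one_right ht0).2 (by exact hh₀)
      nlinarith [inv_mul_cancel₀ (ne_of_gt ht0)]
    -- Lipschitz bounds wrt d
    have hf_d : ∀ h h' : ↥H, |f h - f h'| ≤ d (h : G) (h' : G) := fun h h' =>
      (hf h h').trans (hle _ _)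
    have hrf_d : ∀ h h' : ↥H, |r * f h - r * f h'| ≤ d (h : G) (h' : G) := by
      intro h h'
      rw [← mul_sub, abs_mul]
      exact le_trans (mul_le_mul_of_nonneg_left (hf h h') (abs_nonneg r)) (hler _ _)
    have key1 : |extd H d (fun h => r * f h) x - r * f h₀| ≤ d x (h₀ : G) :=
      extd_close H d hd_symm hd_tri _ hrf_d x h₀
    have key2 : |extd H d f x - f h₀| ≤ d x (h₀ : G) :=
      extd_close H d hd_symm hd_tri _ hf_d x h₀
    have key3 : |r * f h₀ - r * extd H d f x| ≤ |r| * d x (h₀ : G) := by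
      rw [← mul_sub, abs_mul, abs_sub_comm]
      exact mul_le_mul_of_nonneg_left key2 (abs_nonneg r)
    have hmain : |extd H d (fun h => r * f h) x - r * extd H d f x| ≤ (|r| + 1) * t := by
      have := abs_sub_le (extd H d (fun h => r * f h) x) (r * f h₀) (r * extd H d f x)
      have h4 : |r| * d x (h₀ : G) ≤ |r| * t :=
        mul_le_mul_of_nonneg_left hdx.le (abs_nonneg r)
      linarith
    exact mul_le_mul_of_nonneg_right hmain hchi_nn
end

section
/- Let G be a topological group admitting a dense subgroup H and a mean φ on the space of bounded Borel-measurable real-valued functions on G such that φ(f ∘ λ_h) = φ(f) for all h ∈ H and all bounded Borel f, where λ_h(x) = hx. Then G is amenable: there is a left-invariant mean on RUCB(G). -/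
open scoped Topology

/-- `f` is a bounded Borel-measurable real-valued function. -/
def IsBddBorel {G : Type*} [MeasurableSpace G] (f : G → ℝ) : Prop :=
  (∃ C, ∀ x, |f x| ≤ C) ∧ Measurable f

theorem mm_amenable_implies_amenable {G : Type*} [Group G] [TopologicalSpace G]
    [IsTopologicalGroup G] [MeasurableSpace G] [BorelSpace G]
    (H : Subgroup G) (hdense : Dense (H : Set G))
    (φ : (G → ℝ) → ℝ) (hmean : IsMean IsBddBorel φ)
    (hinv : ∀ h ∈ H, ∀ f : G → ℝ, IsBddBorel f → φ (fun x => f (h * x)) = φ f) :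
    Amenable G := by
  obtain ⟨hone, hpos, hadd, hsmul⟩ := hmean
  have hconstB : ∀ c : ℝ, IsBddBorel (fun _ : G => c) :=
    fun c => ⟨⟨|c|, fun _ => le_refl _⟩, measurable_const⟩
  have hφconst : ∀ c : ℝ, φ (fun _ => c) = c := by
    intro c
    have h := hsmul c (fun _ => 1) (hconstB 1)
    simpa [hone] using h
  have hsub : ∀ f g : G → ℝ, IsBddBorel f → IsBddBorel g →
      IsBddBorel (fun x => f x - g x) := by
    rintro f g ⟨⟨Cf, hCf⟩, hfm⟩ ⟨⟨Cg, hCg⟩, hgm⟩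
    exact ⟨⟨Cf + Cg, fun x => (abs_sub (f x) (g x)).trans
      (add_le_add (hCf x) (hCg x))⟩, hfm.sub hgm⟩
  have hmono : ∀ f g : G → ℝ, IsBddBorel f → IsBddBorel g → (∀ x, f x ≤ g x) →
      φ f ≤ φ g := by
    intro f g hf hg hle
    have hd : IsBddBorel (fun x => g x - f x) := hsub g f hg hf
    have h2 := hadd f (fun x => g x - f x) hf hd
    have h3 : (fun x => f x + (g x - f x)) = g := by funext x; ring
    have h4 := hpos _ hd (fun x => sub_nonneg.mpr (hle x))
    rw [h3] at h2; linarith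
  have hclose : ∀ f g : G → ℝ, IsBddBorel f → IsBddBorel g → ∀ ε : ℝ,
      (∀ x, |f x - g x| ≤ ε) → |φ f - φ g| ≤ ε := by
    intro f g hf hg ε hε
    have hd := hsub f g hf hg
    have e1 : φ f - φ g = φ (fun x => f x - g x) := by
      have h2 := hadd (fun x => f x - g x) g hd hg
      have h3 : (fun x => (f x - g x) + g x) = f := by funext x; ring
      rw [h3] at h2; linarith
    rw [e1, abs_le]
    constructor
    · have h5 := hmono _ _ (hconstB (-ε)) hd
        (fun x => by have := (abs_le.mp (hε x)).1; linarith)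
      rw [hφconst] at h5; linarith
    · have h5 := hmono _ _ hd (hconstB ε) (fun x => (abs_le.mp (hε x)).2)
      rw [hφconst] at h5; linarith
  have hRtoB : ∀ f : G → ℝ, IsRUCB G f → IsBddBorel f := by
    rintro f ⟨hb, hu⟩
    refine ⟨hb, ?_⟩
    have hc : Continuous f := by
      rw [continuous_iff_continuousAt]
      intro x
      rw [ContinuousAt, Metric.tendsto_nhds]
      intro ε hε
      obtain ⟨V, hV, hVf⟩ := hu ε hε
      have hcont : Continuous (fun y : G => y * x⁻¹) :=
        continuous_id.mul continuous_const
      have hmap : Filter.Tendsto (fun y : G => y * x⁻¹) (𝓝 x) (𝓝 1) := by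
        have h := hcont.continuousAt (x := x)
        unfold ContinuousAt at h
        simpa using h
      filter_upwards [hmap hV] with y hy
      have h := hVf _ hy x
      simpa [Real.dist_eq, inv_mul_cancel_right] using h
    exact hc.measurable
  refine ⟨φ, ⟨hone, fun f hf => hpos f (hRtoB f hf),
    fun f g hf hg => hadd f g (hRtoB f hf) (hRtoB g hg),
    fun c f hf => hsmul c f (hRtoB f hf)⟩, ?_⟩
  intro g f hf
  have hfB := hRtoB f hf
  have htrans : ∀ a : G, IsBddBorel (fun x => f (a * x)) := by
    intro a
    obtain ⟨⟨C, hC⟩, hm⟩ := hfB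
    exact ⟨⟨C, fun x => hC _⟩,
      hm.comp ((continuous_const.mul continuous_id).measurable)⟩
  have key : ∀ ε : ℝ, 0 < ε → |φ (fun x => f (g * x)) - φ f| ≤ ε := by
    intro ε hε
    obtain ⟨V, hV, hVf⟩ := hf.2 ε hε
    have hcont : Continuous (fun y : G => g * y⁻¹) :=
      continuous_const.mul continuous_inv
    have hnb : (fun y : G => g * y⁻¹) ⁻¹' V ∈ 𝓝 g := by
      apply hcont.continuousAt (x := g)
      simpa using hV
    obtain ⟨h, hhV, hhH⟩ := mem_closure_iff_nhds.mp (hdense g) _ hnb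
    have hpt : ∀ x, |f (g * x) - f (h * x)| ≤ ε := by
      intro x
      have h2 := hVf _ hhV (h * x)
      have he : g * h⁻¹ * (h * x) = g * x := by group
      rw [he] at h2
      exact h2.le
    have h2 := hclose _ _ (htrans g) (htrans h) ε hpt
    rwa [hinv h hhH f hfB] at h2
  have habs : |φ (fun x => f (g * x)) - φ f| ≤ 0 :=
    le_of_forall_pos_le_add (by intro ε hε; simpa using key ε hε)
  have h0 : φ (fun x => f (g * x)) - φ f = 0 :=
    abs_eq_zero.mp (le_antisymm habs (abs_nonneg _))
  linarith
end
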